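/- arXiv:2504.01223 — 7 statements merged into one kernel-verified Lean document; each statement's English description precedes it below -/
import Mathlib

section
/- Let ν0 and ν1 be Borel probability measures on ℝ with CDFs F_{ν0}, F_{ν1}, let p0, p1 ≥ 0 with p0 + p1 = 1, and let ν := p0·ν0 + p1·ν1 be the mixture (the law P_Z of the overall model score Z = f(X) when P(G=k) = p_k and f(X)|G=k ∼ ν_k). Let Z0 ∼ ν0 and Z1 ∼ ν1 be random variables, and let F̃_ν denote the left-continuous version of the CDF of ν. Then ∫_ℝ |F_{ν0}(t) − F_{ν1}(t)| ν(dt) = W_1(P_{F̃_ν(Z0)}, P_{F̃_ν(Z1)}), i.e., the distribution-invariant model bias ∫ bias^C(f_t|X,G) P_Z(dt) equals the Wasserstein-1 distance between the laws of F̃_Z(Z0) and F̃_Z(Z1). -/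
open MeasureTheory Set

/-- The cumulative distribution function of a Borel probability measure on `ℝ`. -/
noncomputable def mcdf (ν : MeasureTheory.Measure ℝ) (t : ℝ) : ℝ := (ν (Set.Iic t)).toReal

/-- The left-continuous version of the CDF of `ν`: `F̃_ν(t) = ν((-∞, t))`. -/
noncomputable def mlcdf (ν : MeasureTheory.Measure ℝ) (t : ℝ) : ℝ := (ν (Set.Iio t)).toReal

/-- `γ` is a coupling of `μ` and `ν`. -/
def IsCoupling (γ : MeasureTheory.Measure (ℝ × ℝ)) (μ ν : MeasureTheory.Measure ℝ) : Prop :=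
  γ.map Prod.fst = μ ∧ γ.map Prod.snd = ν

/-- The Wasserstein-1 distance between two Borel probability measures on `ℝ`. -/
noncomputable def W1 (μ ν : MeasureTheory.Measure ℝ) : ℝ :=
  sInf { r : ℝ | ∃ γ : MeasureTheory.Measure (ℝ × ℝ),
    MeasureTheory.IsProbabilityMeasure γ ∧ IsCoupling γ μ ν ∧ r = ∫ p, |p.1 - p.2| ∂γ }

open scoped ENNReal

set_option linter.unusedSectionVars false
set_option linter.unusedVariables false
set_option maxHeartbeats 1000000

namespace W1Aux
open Filter
open scoped Classical

noncomputable def Qf (μ : Measure ℝ) (u : ℝ) : ℝ := sInf {t | u ≤ mcdf μ t}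
noncomputable def dd (a b s : ℝ) : ℝ≥0∞ := if ((a ≤ s) ↔ (b ≤ s)) then 0 else 1

section part1
variable (μ : Measure ℝ) [IsProbabilityMeasure μ] {u : ℝ}

lemma mcdf_nonneg (t : ℝ) : 0 ≤ mcdf μ t := ENNReal.toReal_nonneg

lemma mcdf_le_one (t : ℝ) : mcdf μ t ≤ 1 := by
  have h : μ (Iic t) ≤ 1 := prob_le_one
  have := ENNReal.toReal_mono (by simp) h
  simpa [mcdf] using this

lemma mcdf_mono : Monotone (mcdf μ) := fun s t h =>
  ENNReal.toReal_mono (measure_ne_top _ _) (measure_mono (Iic_subset_Iic.2 h))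

lemma measurable_mcdf : Measurable (mcdf μ) := (mcdf_mono μ).measurable

lemma mcdf_eq_cdf : mcdf μ = ProbabilityTheory.cdf μ :=
  funext fun t => (ProbabilityTheory.cdf_eq_real μ t).symm

lemma ofReal_mcdf (t : ℝ) : ENNReal.ofReal (mcdf μ t) = μ (Iic t) := by
  rw [mcdf, ENNReal.ofReal_toReal (measure_ne_top _ _)]

lemma mlcdf_nonneg (t : ℝ) : 0 ≤ mlcdf μ t := ENNReal.toReal_nonneg

lemma mlcdf_le_one (t : ℝ) : mlcdf μ t ≤ 1 := by
  have h : μ (Iio t) ≤ 1 := prob_le_one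
  have := ENNReal.toReal_mono (by simp) h
  simpa [mlcdf] using this

lemma mlcdf_mono : Monotone (mlcdf μ) := fun s t h =>
  ENNReal.toReal_mono (measure_ne_top _ _) (measure_mono (Iio_subset_Iio h))

lemma measurable_mlcdf : Measurable (mlcdf μ) := (mlcdf_mono μ).measurable


lemma Qf_nonempty (hu : u < 1) : {t | u ≤ mcdf μ t}.Nonempty := by
  have h := ProbabilityTheory.tendsto_cdf_atTop μ
  have h2 : ∀ᶠ t in atTop, u < ProbabilityTheory.cdf μ t := h.eventually (eventually_gt_nhds hu)
  obtain ⟨t, ht⟩ := h2.exists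
  exact ⟨t, by rw [mcdf_eq_cdf]; exact ht.le⟩

lemma Qf_bddBelow (hu : 0 < u) : BddBelow {t | u ≤ mcdf μ t} := by
  have h := ProbabilityTheory.tendsto_cdf_atBot μ
  have h2 : ∀ᶠ t in atBot, ProbabilityTheory.cdf μ t < u := h.eventually (eventually_lt_nhds hu)
  obtain ⟨a, ha⟩ := eventually_atBot.1 h2
  refine ⟨a, fun t ht => ?_⟩
  by_contra hlt
  push_neg at hlt
  have : mcdf μ t < u := by rw [mcdf_eq_cdf]; exact ha t hlt.le
  exact absurd ht (not_le.2 this)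

lemma le_mcdf_Qf (hu0 : 0 < u) (hu1 : u < 1) : u ≤ mcdf μ (Qf μ u) := by
  set q := Qf μ u with hq
  have hne := Qf_nonempty μ hu1
  have hbdd := Qf_bddBelow μ hu0
  have hq' : sInf {t | u ≤ mcdf μ t} = q := rfl
  -- sequence t n ∈ S with t n < q + 1/(n+1)
  have hseq : ∀ n : ℕ, u ≤ mcdf μ (q + 1 / (n + 1)) := by
    intro n
    have hpos : (0:ℝ) < 1 / (n + 1) := by positivity
    obtain ⟨t, ht, htlt⟩ := exists_lt_of_csInf_lt hne (by rw [hq']; linarith : sInf {t | u ≤ mcdf μ t} < q + 1 / (n + 1))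
    exact le_trans ht (mcdf_mono μ htlt.le)
  have hcont : ContinuousWithinAt (mcdf μ) (Ici q) q := by
    rw [mcdf_eq_cdf]; exact (ProbabilityTheory.cdf μ).right_continuous q
  have htend : Tendsto (fun n : ℕ => q + 1 / ((n:ℝ) + 1)) atTop (nhds q) := by
    have := tendsto_one_div_add_atTop_nhds_zero_nat (𝕜 := ℝ)
    simpa using (tendsto_const_nhds (x := q)).add this
  have htend2 : Tendsto (fun n : ℕ => q + 1 / ((n:ℝ) + 1)) atTop (nhdsWithin q (Ici q)) := by
    refine tendsto_nhdsWithin_of_tendsto_nhds_of_eventually_within _ htend ?_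
    filter_upwards with n
    have h : (0:ℝ) < 1 / ((n:ℝ) + 1) := by positivity
    exact mem_Ici.mpr (by linarith)
  have : Tendsto (fun n : ℕ => mcdf μ (q + 1 / ((n:ℝ) + 1))) atTop (nhds (mcdf μ q)) :=
    hcont.tendsto.comp htend2
  exact ge_of_tendsto' this hseq


lemma Qf_le_iff (hu0 : 0 < u) (hu1 : u < 1) {t : ℝ} : Qf μ u ≤ t ↔ u ≤ mcdf μ t :=
  ⟨fun h => le_trans (le_mcdf_Qf μ hu0 hu1) (mcdf_mono μ h),
   fun h => csInf_le (Qf_bddBelow μ hu0) h⟩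

lemma monotoneOn_Qf : MonotoneOn (Qf μ) (Ioo 0 1) := fun u hu v hv huv =>
  csInf_le_csInf (Qf_bddBelow μ hu.1) (Qf_nonempty μ hv.2)
    (fun t ht => le_trans huv ht)

lemma Qf_of_nonpos (hu : u ≤ 0) : Qf μ u = 0 := by
  have : {t | u ≤ mcdf μ t} = univ := eq_univ_of_forall fun t => le_trans hu (mcdf_nonneg μ t)
  rw [Qf, this]
  exact Real.sInf_of_not_bddBelow (by simpa using Real.exists_isGlb)

lemma Qf_of_one_lt (hu : 1 < u) : Qf μ u = 0 := by
  have : {t | u ≤ mcdf μ t} = ∅ := eq_empty_of_forall_notMem fun t ht =>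
    absurd (le_trans ht (mcdf_le_one μ t)) (not_le.2 hu)
  rw [Qf, this, Real.sInf_empty]

lemma measurable_Qf : Measurable (Qf μ) := by
  refine measurable_of_Iic fun c => ?_
  have hdecomp : Qf μ ⁻¹' Iic c =
      (Qf μ ⁻¹' Iic c ∩ Ioo 0 1) ∪ (Qf μ ⁻¹' Iic c ∩ Iic 0) ∪
      (Qf μ ⁻¹' Iic c ∩ {1}) ∪ (Qf μ ⁻¹' Iic c ∩ Ioi 1) := by
    ext u
    simp only [mem_union, mem_inter_iff, mem_preimage, mem_Iic, mem_Ioo, mem_Ioi,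
      mem_singleton_iff]
    constructor
    · intro h
      rcases le_or_gt u 0 with h0 | h0
      · exact Or.inl (Or.inl (Or.inr ⟨h, h0⟩))
      rcases lt_trichotomy u 1 with h1 | h1 | h1
      · exact Or.inl (Or.inl (Or.inl ⟨h, h0, h1⟩))
      · exact Or.inl (Or.inr ⟨h, h1⟩)
      · exact Or.inr ⟨h, h1⟩
    · rintro (((⟨h, -⟩ | ⟨h, -⟩) | ⟨h, -⟩) | ⟨h, -⟩) <;> exact h
  rw [hdecomp]
  have h1 : MeasurableSet (Qf μ ⁻¹' Iic c ∩ Ioo 0 1) := by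
    refine Set.OrdConnected.measurableSet ⟨fun x hx y hy z hz => ?_⟩
    have hz' : z ∈ Ioo (0:ℝ) 1 := ⟨lt_of_lt_of_le hx.2.1 hz.1, lt_of_le_of_lt hz.2 hy.2.2⟩
    exact ⟨mem_preimage.mpr (mem_Iic.mpr (le_trans (monotoneOn_Qf μ hz' hy.2 hz.2) hy.1)), hz'⟩
  have h2 : MeasurableSet (Qf μ ⁻¹' Iic c ∩ Iic 0) := by
    by_cases hc : (0:ℝ) ≤ c
    · have : Qf μ ⁻¹' Iic c ∩ Iic 0 = Iic 0 := by
        refine antisymm inter_subset_right fun u hu => ⟨?_, hu⟩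
        simp only [mem_preimage, mem_Iic] at *
        rw [Qf_of_nonpos μ hu]; exact hc
      rw [this]; exact measurableSet_Iic
    · have : Qf μ ⁻¹' Iic c ∩ Iic 0 = ∅ := by
        refine eq_empty_of_forall_notMem fun u ⟨h, hu⟩ => hc ?_
        simp only [mem_preimage, mem_Iic] at h hu
        rw [Qf_of_nonpos μ hu] at h; exact h
      rw [this]; exact MeasurableSet.empty
  have h3 : MeasurableSet (Qf μ ⁻¹' Iic c ∩ {1}) :=
    (Set.subsingleton_singleton.anti inter_subset_right).measurableSet
  have h4 : MeasurableSet (Qf μ ⁻¹' Iic c ∩ Ioi 1) := by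
    by_cases hc : (0:ℝ) ≤ c
    · have : Qf μ ⁻¹' Iic c ∩ Ioi 1 = Ioi 1 := by
        refine antisymm inter_subset_right fun u hu => ⟨?_, hu⟩
        simp only [mem_preimage, mem_Iic, mem_Ioi] at *
        rw [Qf_of_one_lt μ hu]; exact hc
      rw [this]; exact measurableSet_Ioi
    · have : Qf μ ⁻¹' Iic c ∩ Ioi 1 = ∅ := by
        refine eq_empty_of_forall_notMem fun u ⟨h, hu⟩ => hc ?_
        simp only [mem_preimage, mem_Iic, mem_Ioi] at h hu
        rw [Qf_of_one_lt μ hu] at h; exact h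
      rw [this]; exact MeasurableSet.empty
  exact ((h1.union h2).union h3).union h4

lemma volume_Iic_inter_Ioo {a : ℝ} (h0 : 0 ≤ a) (h1 : a ≤ 1) :
    volume (Iic a ∩ Ioo 0 1) = ENNReal.ofReal a := by
  refine le_antisymm ?_ ?_
  · have hsub : Iic a ∩ Ioo 0 1 ⊆ Ioc 0 a := fun u hu => ⟨hu.2.1, hu.1⟩
    calc volume (Iic a ∩ Ioo 0 1) ≤ volume (Ioc 0 a) := measure_mono hsub
      _ = ENNReal.ofReal a := by rw [Real.volume_Ioc, sub_zero]
  · have hsub : Ioo 0 a ⊆ Iic a ∩ Ioo 0 1 := fun u hu =>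
      ⟨hu.2.le, hu.1, lt_of_lt_of_le hu.2 h1⟩
    calc ENNReal.ofReal a = volume (Ioo 0 a) := by rw [Real.volume_Ioo, sub_zero]
      _ ≤ volume (Iic a ∩ Ioo 0 1) := measure_mono hsub

lemma map_Qf : (volume.restrict (Ioo (0:ℝ) 1)).map (Qf μ) = μ := by
  have hfin : IsFiniteMeasure ((volume.restrict (Ioo (0:ℝ) 1)).map (Qf μ)) := by
    constructor
    rw [Measure.map_apply (measurable_Qf μ) MeasurableSet.univ]
    simp [Measure.restrict_apply, Real.volume_Ioo]
  refine Measure.ext_of_Iic _ _ fun t => ?_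
  rw [Measure.map_apply (measurable_Qf μ) measurableSet_Iic,
    Measure.restrict_apply ((measurable_Qf μ) measurableSet_Iic)]
  have hset : Qf μ ⁻¹' Iic t ∩ Ioo 0 1 = Iic (mcdf μ t) ∩ Ioo 0 1 := by
    ext u
    simp only [mem_inter_iff, mem_preimage, mem_Iic, mem_Ioo]
    constructor
    · rintro ⟨h, hu⟩; exact ⟨(Qf_le_iff μ hu.1 hu.2).1 h, hu⟩
    · rintro ⟨h, hu⟩; exact ⟨(Qf_le_iff μ hu.1 hu.2).2 h, hu⟩
  rw [hset, volume_Iic_inter_Ioo (mcdf_nonneg μ t) (mcdf_le_one μ t), ofReal_mcdf]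


end part1



lemma dd_comm (a b s : ℝ) : dd a b s = dd b a s := by
  unfold dd; by_cases h1 : a ≤ s <;> by_cases h2 : b ≤ s <;> simp [h1, h2]

lemma dd_eq (a b s : ℝ) :
    dd a b s = (Ico (min a b) (max a b)).indicator (fun _ => 1) s := by
  rcases le_total a b with h | h
  · rw [min_eq_left h, max_eq_right h]
    unfold dd
    by_cases h1 : a ≤ s <;> by_cases h2 : b ≤ s <;>
      simp_all [indicator_apply, mem_Ico, not_le] <;> first | linarith | constructor <;> intro <;> linarith
  · rw [min_eq_right h, max_eq_left h, dd_comm]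
    unfold dd
    by_cases h1 : a ≤ s <;> by_cases h2 : b ≤ s <;>
      simp_all [indicator_apply, mem_Ico, not_le] <;> first | linarith | constructor <;> intro <;> linarith

lemma lintegral_dd (ρ : Measure ℝ) (a b : ℝ) :
    ∫⁻ s, dd a b s ∂ρ = ρ (Ico (min a b) (max a b)) := by
  simp_rw [dd_eq]
  exact lintegral_indicator_one measurableSet_Ico

lemma lintegral_dd_volume (a b : ℝ) :
    ∫⁻ s, dd a b s = ENNReal.ofReal |a - b| := by
  rw [lintegral_dd, Real.volume_Ico, abs_sub_comm]
  congr 1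
  exact max_sub_min_eq_abs a b

lemma lintegral_dd_prob (ν : Measure ℝ) [IsProbabilityMeasure ν] (a b : ℝ) :
    ∫⁻ s, dd a b s ∂ν = ENNReal.ofReal |mlcdf ν a - mlcdf ν b| := by
  rw [lintegral_dd]
  -- wlog a ≤ b
  rcases le_total a b with h | h
  · rw [min_eq_left h, max_eq_right h, abs_sub_comm]
    have hdisj : Disjoint (Iio a) (Ico a b) := by
      rw [Set.disjoint_left]; rintro x hx ⟨hx2, -⟩; exact absurd hx (not_lt.2 hx2)
    have hunion := Iio_union_Ico_eq_Iio h
    have hadd : ν (Iio b) = ν (Iio a) + ν (Ico a b) := by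
      rw [← hunion, measure_union hdisj measurableSet_Ico]
    have : mlcdf ν b - mlcdf ν a = (ν (Ico a b)).toReal := by
      unfold mlcdf
      rw [hadd, ENNReal.toReal_add (measure_ne_top _ _) (measure_ne_top _ _)]
      ring
    rw [abs_of_nonneg (by rw [this]; exact ENNReal.toReal_nonneg), this,
      ENNReal.ofReal_toReal (measure_ne_top _ _)]
  · rw [min_eq_right h, max_eq_left h]
    have hdisj : Disjoint (Iio b) (Ico b a) := by
      rw [Set.disjoint_left]; rintro x hx ⟨hx2, -⟩; exact absurd hx (not_lt.2 hx2)
    have hunion := Iio_union_Ico_eq_Iio h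
    have hadd : ν (Iio a) = ν (Iio b) + ν (Ico b a) := by
      rw [← hunion, measure_union hdisj measurableSet_Ico]
    have : mlcdf ν a - mlcdf ν b = (ν (Ico b a)).toReal := by
      unfold mlcdf
      rw [hadd, ENNReal.toReal_add (measure_ne_top _ _) (measure_ne_top _ _)]
      ring
    rw [abs_of_nonneg (by rw [this]; exact ENNReal.toReal_nonneg), this,
      ENNReal.ofReal_toReal (measure_ne_top _ _)]

lemma dd2_eq (a b u : ℝ) :
    (if ((u ≤ a) ↔ (u ≤ b)) then (0:ℝ≥0∞) else 1)
      = (Ioc (min a b) (max a b)).indicator (fun _ => 1) u := by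
  rcases le_total a b with h | h
  · rw [min_eq_left h, max_eq_right h]
    by_cases h1 : u ≤ a <;> by_cases h2 : u ≤ b <;>
      simp_all [indicator_apply, mem_Ioc, not_le] <;> first | linarith | constructor <;> intro <;> linarith
  · rw [min_eq_right h, max_eq_left h]
    by_cases h1 : u ≤ a <;> by_cases h2 : u ≤ b <;>
      simp_all [indicator_apply, mem_Ioc, not_le] <;> first | linarith | constructor <;> intro <;> linarith

lemma measurable_dd {α : Type*} [MeasurableSpace α] {f g h : α → ℝ}
    (hf : Measurable f) (hg : Measurable g) (hh : Measurable h) :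
    Measurable (fun x => dd (f x) (g x) (h x)) := by
  have hset : MeasurableSet {x | (f x ≤ h x) ↔ (g x ≤ h x)} := by
    have : {x | (f x ≤ h x) ↔ (g x ≤ h x)} =
        ({x | f x ≤ h x} ∩ {x | g x ≤ h x}) ∪ ({x | f x ≤ h x}ᶜ ∩ {x | g x ≤ h x}ᶜ) := by
      ext x
      simp only [mem_union, mem_inter_iff, mem_setOf_eq, mem_compl_iff]
      tauto
    rw [this]
    exact ((measurableSet_le hf hh).inter (measurableSet_le hg hh)).union
      ((measurableSet_le hf hh).compl.inter (measurableSet_le hg hh).compl)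
  unfold dd
  exact Measurable.ite hset measurable_const measurable_const

lemma volume_Ioc_inter_Ioo {a b : ℝ} (h0 : 0 ≤ a) (hab : a ≤ b) (h1 : b ≤ 1) :
    volume (Ioc a b ∩ Ioo 0 1) = ENNReal.ofReal (b - a) := by
  refine le_antisymm ?_ ?_
  · calc volume (Ioc a b ∩ Ioo 0 1) ≤ volume (Ioc a b) := measure_mono inter_subset_left
      _ = ENNReal.ofReal (b - a) := Real.volume_Ioc
  · have hsub : Ioo a b ⊆ Ioc a b ∩ Ioo 0 1 := fun u hu =>
      ⟨⟨hu.1, hu.2.le⟩, lt_of_le_of_lt h0 hu.1, lt_of_lt_of_le hu.2 h1⟩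
    calc ENNReal.ofReal (b - a) = volume (Ioo a b) := Real.volume_Ioo.symm
      _ ≤ _ := measure_mono hsub


lemma ofReal_toReal_sub {a b : ℝ≥0∞} (hab : a ≤ b) (hb : b ≠ ⊤) :
    ENNReal.ofReal (b.toReal - a.toReal) = b - a := by
  rw [ENNReal.ofReal_sub _ ENNReal.toReal_nonneg, ENNReal.ofReal_toReal hb,
    ENNReal.ofReal_toReal (ne_top_of_le_ne_top hb hab)]

lemma dd_eq_indicator_E (a b s : ℝ) :
    dd a b s = ({p : ℝ × ℝ | ¬ ((p.1 ≤ s) ↔ (p.2 ≤ s))}).indicator (1 : ℝ × ℝ → ℝ≥0∞) (a, b) := by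
  by_cases h : ((a ≤ s) ↔ (b ≤ s)) <;> simp [dd, indicator_apply, h]

lemma measurableSet_iffset {α : Type*} [MeasurableSpace α] {f g h : α → ℝ}
    (hf : Measurable f) (hg : Measurable g) (hh : Measurable h) :
    MeasurableSet {x | ¬ ((f x ≤ h x) ↔ (g x ≤ h x))} := by
  have : {x | ¬ ((f x ≤ h x) ↔ (g x ≤ h x))} =
      ({x | f x ≤ h x} ∩ {x | g x ≤ h x}ᶜ) ∪ ({x | f x ≤ h x}ᶜ ∩ {x | g x ≤ h x}) := by
    ext x; simp only [mem_union, mem_inter_iff, mem_setOf_eq, mem_compl_iff]; tauto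
  rw [this]
  exact ((measurableSet_le hf hh).inter (measurableSet_le hg hh).compl).union
    ((measurableSet_le hf hh).compl.inter (measurableSet_le hg hh))

/-- cost of the quantile coupling -/
lemma M1 (ν ν0 ν1 : Measure ℝ) [IsProbabilityMeasure ν] [IsProbabilityMeasure ν0]
    [IsProbabilityMeasure ν1] :
    ∫⁻ u in Ioo (0:ℝ) 1, ENNReal.ofReal |mlcdf ν (Qf ν0 u) - mlcdf ν (Qf ν1 u)| ∂volume
      = ∫⁻ t, ENNReal.ofReal |mcdf ν0 t - mcdf ν1 t| ∂ν := by
  have h1 : ∀ u, ENNReal.ofReal |mlcdf ν (Qf ν0 u) - mlcdf ν (Qf ν1 u)|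
      = ∫⁻ t, dd (Qf ν0 u) (Qf ν1 u) t ∂ν := fun u => (lintegral_dd_prob ν _ _).symm
  simp_rw [h1]
  rw [lintegral_lintegral_swap]
  · refine lintegral_congr fun t => ?_
    have haem : ∀ᵐ u ∂(volume.restrict (Ioo (0:ℝ) 1)), dd (Qf ν0 u) (Qf ν1 u) t
        = (Ioc (min (mcdf ν0 t) (mcdf ν1 t)) (max (mcdf ν0 t) (mcdf ν1 t))).indicator
            (1 : ℝ → ℝ≥0∞) u := by
      rw [ae_restrict_iff' measurableSet_Ioo]
      filter_upwards with u hu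
      calc dd (Qf ν0 u) (Qf ν1 u) t
          = if ((u ≤ mcdf ν0 t) ↔ (u ≤ mcdf ν1 t)) then 0 else 1 := by
            unfold dd
            exact if_congr (iff_congr (Qf_le_iff ν0 hu.1 hu.2) (Qf_le_iff ν1 hu.1 hu.2)) rfl rfl
        _ = _ := dd2_eq _ _ u
    rw [lintegral_congr_ae haem, lintegral_indicator_one measurableSet_Ioc,
      Measure.restrict_apply measurableSet_Ioc]
    rcases le_total (mcdf ν0 t) (mcdf ν1 t) with h | h
    · rw [min_eq_left h, max_eq_right h,
        volume_Ioc_inter_Ioo (mcdf_nonneg ν0 t) h (mcdf_le_one ν1 t), abs_sub_comm,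
        abs_of_nonneg (by linarith)]
    · rw [min_eq_right h, max_eq_left h,
        volume_Ioc_inter_Ioo (mcdf_nonneg ν1 t) h (mcdf_le_one ν0 t),
        abs_of_nonneg (by linarith)]
  · exact (measurable_dd ((measurable_Qf ν0).comp measurable_fst)
      ((measurable_Qf ν1).comp measurable_fst) measurable_snd).aemeasurable

/-- Kantorovich lower bound -/
lemma M2 (γ : Measure (ℝ × ℝ)) [IsProbabilityMeasure γ] (μ0 μ1 : Measure ℝ)
    (h0 : γ.map Prod.fst = μ0) (h1 : γ.map Prod.snd = μ1) :
    ∫⁻ s, ENNReal.ofReal |mcdf μ0 s - mcdf μ1 s| ∂volume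
      ≤ ∫⁻ p : ℝ × ℝ, ENNReal.ofReal |p.1 - p.2| ∂γ := by
  have hc : ∀ p : ℝ × ℝ, ENNReal.ofReal |p.1 - p.2| = ∫⁻ s, dd p.1 p.2 s ∂volume :=
    fun p => (lintegral_dd_volume _ _).symm
  simp_rw [hc]
  rw [lintegral_lintegral_swap
    (f := fun (p : ℝ × ℝ) (s : ℝ) => dd p.1 p.2 s)
    ((measurable_dd (measurable_fst.comp measurable_fst)
      (measurable_snd.comp measurable_fst) measurable_snd).aemeasurable)]
  refine lintegral_mono fun s => ?_
  set E : Set (ℝ × ℝ) := {p | ¬ ((p.1 ≤ s) ↔ (p.2 ≤ s))} with hE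
  have hEmeas : MeasurableSet E :=
    measurableSet_iffset measurable_fst measurable_snd measurable_const
  have hint : ∫⁻ p : ℝ × ℝ, dd p.1 p.2 s ∂γ = γ E := by
    have : ∀ p : ℝ × ℝ, dd p.1 p.2 s = E.indicator (1 : ℝ × ℝ → ℝ≥0∞) p := by
      rintro ⟨x, y⟩
      by_cases h : ((x ≤ s) ↔ (y ≤ s)) <;> simp [dd, indicator_apply, hE, h]
    simp_rw [this]
    exact lintegral_indicator_one hEmeas
  rw [hint]
  set A : Set (ℝ × ℝ) := Prod.fst ⁻¹' (Iic s) with hA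
  set B : Set (ℝ × ℝ) := Prod.snd ⁻¹' (Iic s) with hB
  have hga : γ A = μ0 (Iic s) := by
    rw [← h0, Measure.map_apply measurable_fst measurableSet_Iic]
  have hgb : γ B = μ1 (Iic s) := by
    rw [← h1, Measure.map_apply measurable_snd measurableSet_Iic]
  have hm0 : mcdf μ0 s = (γ A).toReal := by rw [mcdf, hga]
  have hm1 : mcdf μ1 s = (γ B).toReal := by rw [mcdf, hgb]
  have hAB : A \ B ⊆ E := by
    rintro ⟨x, y⟩ ⟨hx, hy⟩
    simp only [hA, hB, hE, mem_preimage, mem_Iic, mem_setOf_eq] at *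
    tauto
  have hBA : B \ A ⊆ E := by
    rintro ⟨x, y⟩ ⟨hx, hy⟩
    simp only [hA, hB, hE, mem_preimage, mem_Iic, mem_setOf_eq] at *
    tauto
  have hgael : γ A ≤ γ B + γ E := by
    calc γ A ≤ γ (B ∪ (A \ B)) := measure_mono (fun p hp => by
      by_cases hb : p ∈ B
      · exact Or.inl hb
      · exact Or.inr ⟨hp, hb⟩)
    _ ≤ γ B + γ (A \ B) := measure_union_le _ _
    _ ≤ γ B + γ E := add_le_add le_rfl (measure_mono hAB)
  have hgbel : γ B ≤ γ A + γ E := by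
    calc γ B ≤ γ (A ∪ (B \ A)) := measure_mono (fun p hp => by
      by_cases hb : p ∈ A
      · exact Or.inl hb
      · exact Or.inr ⟨hp, hb⟩)
    _ ≤ γ A + γ (B \ A) := measure_union_le _ _
    _ ≤ γ A + γ E := add_le_add le_rfl (measure_mono hBA)
  rw [hm0, hm1]
  rcases le_total (γ A) (γ B) with h | h
  · rw [abs_of_nonpos (by rw [sub_nonpos]; exact ENNReal.toReal_mono (measure_ne_top _ _) h),
      neg_sub, ofReal_toReal_sub h (measure_ne_top _ _)]
    exact tsub_le_iff_right.mpr (by rwa [add_comm])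
  · rw [abs_of_nonneg (by rw [sub_nonneg]; exact ENNReal.toReal_mono (measure_ne_top _ _) h),
      ofReal_toReal_sub h (measure_ne_top _ _)]
    exact tsub_le_iff_right.mpr (by rwa [add_comm])

/-- the CDF-distance of the pushforwards equals the monotone-coupling cost -/
lemma M3 (g0 g1 : ℝ → ℝ) (hm0 : Measurable g0) (hm1 : Measurable g1)
    (hmon0 : MonotoneOn g0 (Ioo 0 1)) (hmon1 : MonotoneOn g1 (Ioo 0 1)) :
    ∫⁻ s, ENNReal.ofReal |mcdf ((volume.restrict (Ioo (0:ℝ) 1)).map g0) s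
        - mcdf ((volume.restrict (Ioo (0:ℝ) 1)).map g1) s| ∂volume
      = ∫⁻ u in Ioo (0:ℝ) 1, ENNReal.ofReal |g0 u - g1 u| ∂volume := by
  have key : ∀ s : ℝ, ENNReal.ofReal |mcdf ((volume.restrict (Ioo (0:ℝ) 1)).map g0) s
      - mcdf ((volume.restrict (Ioo (0:ℝ) 1)).map g1) s|
      = ∫⁻ u in Ioo (0:ℝ) 1, dd (g0 u) (g1 u) s ∂volume := by
    intro s
    set A : Set ℝ := g0 ⁻¹' (Iic s) ∩ Ioo 0 1 with hA
    set B : Set ℝ := g1 ⁻¹' (Iic s) ∩ Ioo 0 1 with hB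
    have hAmeas : MeasurableSet A := (hm0 measurableSet_Iic).inter measurableSet_Ioo
    have hBmeas : MeasurableSet B := (hm1 measurableSet_Iic).inter measurableSet_Ioo
    have hAfin : volume A ≠ ⊤ := by
      refine ne_top_of_le_ne_top ?_ (measure_mono inter_subset_right)
      simp [Real.volume_Ioo]
    have hBfin : volume B ≠ ⊤ := by
      refine ne_top_of_le_ne_top ?_ (measure_mono inter_subset_right)
      simp [Real.volume_Ioo]
    have hma : mcdf ((volume.restrict (Ioo (0:ℝ) 1)).map g0) s = (volume A).toReal := by
      rw [mcdf, Measure.map_apply hm0 measurableSet_Iic,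
        Measure.restrict_apply (hm0 measurableSet_Iic)]
    have hmb : mcdf ((volume.restrict (Ioo (0:ℝ) 1)).map g1) s = (volume B).toReal := by
      rw [mcdf, Measure.map_apply hm1 measurableSet_Iic,
        Measure.restrict_apply (hm1 measurableSet_Iic)]
    have hEmeas : MeasurableSet {u : ℝ | ¬ ((g0 u ≤ s) ↔ (g1 u ≤ s))} :=
      measurableSet_iffset hm0 hm1 measurable_const
    have hrhs : ∫⁻ u in Ioo (0:ℝ) 1, dd (g0 u) (g1 u) s ∂volume
        = volume ({u : ℝ | ¬ ((g0 u ≤ s) ↔ (g1 u ≤ s))} ∩ Ioo 0 1) := by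
      have : ∀ u : ℝ, dd (g0 u) (g1 u) s
          = ({u : ℝ | ¬ ((g0 u ≤ s) ↔ (g1 u ≤ s))}).indicator (1 : ℝ → ℝ≥0∞) u := by
        intro u
        by_cases h : ((g0 u ≤ s) ↔ (g1 u ≤ s)) <;> simp [dd, indicator_apply, h]
      simp_rw [this]
      rw [lintegral_indicator_one hEmeas, Measure.restrict_apply hEmeas]
    have hsymm : {u : ℝ | ¬ ((g0 u ≤ s) ↔ (g1 u ≤ s))} ∩ Ioo 0 1 = (A \ B) ∪ (B \ A) := by
      ext u
      simp only [hA, hB, mem_inter_iff, mem_setOf_eq, mem_union, mem_diff, mem_preimage, mem_Iic]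
      tauto
    -- nestedness
    have hnest : A ⊆ B ∨ B ⊆ A := by
      by_contra hcon
      push_neg at hcon
      obtain ⟨h1c, h2c⟩ := hcon
      obtain ⟨a, ha, hna⟩ := not_subset.mp h1c
      obtain ⟨b, hb, hnb⟩ := not_subset.mp h2c
      simp only [hA, hB, mem_inter_iff, mem_preimage, mem_Iic] at ha hna hb hnb
      rcases le_total a b with hab | hab
      · exact hna ⟨le_trans (hmon1 ha.2 hb.2 hab) (by tauto), ha.2⟩
      · exact hnb ⟨le_trans (hmon0 hb.2 ha.2 hab) (by tauto), hb.2⟩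
    rw [hrhs, hsymm, hma, hmb]
    rcases hnest with h | h
    · have : (A \ B) ∪ (B \ A) = B \ A := by
        rw [diff_eq_empty.mpr h, empty_union]
      rw [this, measure_diff h hAmeas.nullMeasurableSet hAfin]
      have hle : volume A ≤ volume B := measure_mono h
      rw [abs_of_nonpos (by rw [sub_nonpos]; exact ENNReal.toReal_mono hBfin hle), neg_sub,
        ofReal_toReal_sub hle hBfin]
    · have : (A \ B) ∪ (B \ A) = A \ B := by
        rw [diff_eq_empty.mpr h, union_empty]
      rw [this, measure_diff h hBmeas.nullMeasurableSet hBfin]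
      have hle : volume B ≤ volume A := measure_mono h
      rw [abs_of_nonneg (by rw [sub_nonneg]; exact ENNReal.toReal_mono hAfin hle),
        ofReal_toReal_sub hle hAfin]
  simp_rw [key]
  rw [← lintegral_lintegral_swap
    (f := fun (u : ℝ) (s : ℝ) => dd (g0 u) (g1 u) s)
    ((measurable_dd (hm0.comp measurable_fst) (hm1.comp measurable_fst)
      measurable_snd).aemeasurable)]
  exact lintegral_congr fun u => lintegral_dd_volume _ _


end W1Aux

open W1Aux Filter

/-- For the mixture `ν = p0·ν0 + p1·ν1`, the distribution-invariant
model bias `∫ |F_{ν0} - F_{ν1}| dν` equals the Wasserstein-1 distance between the laws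
of `F̃_ν(Z0)` and `F̃_ν(Z1)`, where `F̃_ν` is the left-continuous CDF of `ν`. -/
theorem stmt_1 {Ω : Type*} [MeasurableSpace Ω] (ℙ : MeasureTheory.Measure Ω)
    [MeasureTheory.IsProbabilityMeasure ℙ]
    (ν0 ν1 : MeasureTheory.Measure ℝ)
    [MeasureTheory.IsProbabilityMeasure ν0] [MeasureTheory.IsProbabilityMeasure ν1]
    (p0 p1 : ℝ) (hp0 : 0 ≤ p0) (hp1 : 0 ≤ p1) (hsum : p0 + p1 = 1)
    (ν : MeasureTheory.Measure ℝ)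
    (hν : ν = ENNReal.ofReal p0 • ν0 + ENNReal.ofReal p1 • ν1)
    (Z0 Z1 : Ω → ℝ) (hZ0 : Measurable Z0) (hZ1 : Measurable Z1)
    (hlaw0 : ℙ.map Z0 = ν0) (hlaw1 : ℙ.map Z1 = ν1) :
    ∫ t, |mcdf ν0 t - mcdf ν1 t| ∂ν
      = W1 (ℙ.map (fun ω => mlcdf ν (Z0 ω))) (ℙ.map (fun ω => mlcdf ν (Z1 ω))) := by
  classical
  haveI hνprob : IsProbabilityMeasure ν := by
    constructor
    rw [hν]
    simp only [Measure.add_apply, Measure.smul_apply, smul_eq_mul, measure_univ, mul_one]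
    rw [← ENNReal.ofReal_add hp0 hp1, hsum, ENNReal.ofReal_one]
  set P : Measure ℝ := volume.restrict (Ioo (0:ℝ) 1) with hP
  haveI hPprob : IsProbabilityMeasure P := by
    constructor
    rw [hP, Measure.restrict_apply_univ]
    simp [Real.volume_Ioo]
  set g0 : ℝ → ℝ := fun u => mlcdf ν (Qf ν0 u) with hg0
  set g1 : ℝ → ℝ := fun u => mlcdf ν (Qf ν1 u) with hg1
  have hg0meas : Measurable g0 := (measurable_mlcdf ν).comp (measurable_Qf ν0)
  have hg1meas : Measurable g1 := (measurable_mlcdf ν).comp (measurable_Qf ν1)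
  have hg0mono : MonotoneOn g0 (Ioo 0 1) := (mlcdf_mono ν).comp_monotoneOn (monotoneOn_Qf ν0)
  have hg1mono : MonotoneOn g1 (Ioo 0 1) := (mlcdf_mono ν).comp_monotoneOn (monotoneOn_Qf ν1)
  have hμ0 : ℙ.map (fun ω => mlcdf ν (Z0 ω)) = P.map g0 := by
    have h1 : ℙ.map (fun ω => mlcdf ν (Z0 ω)) = (ℙ.map Z0).map (mlcdf ν) :=
      (Measure.map_map (measurable_mlcdf ν) hZ0).symm
    rw [h1, hlaw0, ← map_Qf ν0, Measure.map_map (measurable_mlcdf ν) (measurable_Qf ν0)]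
    rfl
  have hμ1 : ℙ.map (fun ω => mlcdf ν (Z1 ω)) = P.map g1 := by
    have h1 : ℙ.map (fun ω => mlcdf ν (Z1 ω)) = (ℙ.map Z1).map (mlcdf ν) :=
      (Measure.map_map (measurable_mlcdf ν) hZ1).symm
    rw [h1, hlaw1, ← map_Qf ν1, Measure.map_map (measurable_mlcdf ν) (measurable_Qf ν1)]
    rfl
  rw [hμ0, hμ1]
  set L : ℝ≥0∞ := ∫⁻ t, ENNReal.ofReal |mcdf ν0 t - mcdf ν1 t| ∂ν with hL
  have habs_le_one : ∀ t, |mcdf ν0 t - mcdf ν1 t| ≤ 1 := by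
    intro t
    rw [abs_sub_le_iff]
    constructor <;>
      [linarith [mcdf_le_one ν0 t, mcdf_nonneg ν1 t];
       linarith [mcdf_le_one ν1 t, mcdf_nonneg ν0 t]]
  have hLfin : L ≤ 1 := by
    calc L ≤ ∫⁻ _, 1 ∂ν := lintegral_mono fun t => ENNReal.ofReal_le_one.mpr (habs_le_one t)
      _ = 1 := by simp
  have hc : ∫ t, |mcdf ν0 t - mcdf ν1 t| ∂ν = L.toReal := by
    rw [hL]
    exact integral_eq_lintegral_of_nonneg_ae (ae_of_all _ fun t => abs_nonneg _)
      (((measurable_mcdf ν0).sub (measurable_mcdf ν1)).abs).aestronglyMeasurable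
  -- the quantile coupling
  have hpair : Measurable (fun u => (g0 u, g1 u)) := hg0meas.prodMk hg1meas
  set γstar : Measure (ℝ × ℝ) := P.map (fun u => (g0 u, g1 u)) with hγstar
  haveI : IsProbabilityMeasure γstar := Measure.isProbabilityMeasure_map hpair.aemeasurable
  have hmarg0 : γstar.map Prod.fst = P.map g0 := by
    rw [hγstar, Measure.map_map measurable_fst hpair]
    rfl
  have hmarg1 : γstar.map Prod.snd = P.map g1 := by
    rw [hγstar, Measure.map_map measurable_snd hpair]
    rfl
  have hM1 : ∫⁻ u, ENNReal.ofReal |g0 u - g1 u| ∂P = L := M1 ν ν0 ν1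
  have hcost : ∫ p : ℝ × ℝ, |p.1 - p.2| ∂γstar = L.toReal := by
    rw [hγstar, integral_map hpair.aemeasurable (f := fun p : ℝ × ℝ => |p.1 - p.2|)
      ((continuous_fst.sub continuous_snd).abs.aestronglyMeasurable)]
    simp only
    rw [integral_eq_lintegral_of_nonneg_ae (f := fun u => |g0 u - g1 u|) (ae_of_all _ fun u => abs_nonneg _)
      ((hg0meas.sub hg1meas).abs).aestronglyMeasurable, hM1]
  have hmem : L.toReal ∈ { r : ℝ | ∃ γ : Measure (ℝ × ℝ),
      IsProbabilityMeasure γ ∧ IsCoupling γ (P.map g0) (P.map g1) ∧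
      r = ∫ p, |p.1 - p.2| ∂γ } :=
    ⟨γstar, inferInstance, ⟨hmarg0, hmarg1⟩, hcost.symm⟩
  have hlb : ∀ r ∈ { r : ℝ | ∃ γ : Measure (ℝ × ℝ),
      IsProbabilityMeasure γ ∧ IsCoupling γ (P.map g0) (P.map g1) ∧
      r = ∫ p, |p.1 - p.2| ∂γ }, L.toReal ≤ r := by
    rintro r ⟨γ, hγprob, ⟨hγ0, hγ1⟩, rfl⟩
    haveI := hγprob
    -- a.e. boundedness of the cost
    have hae0 : ∀ᵐ p : ℝ × ℝ ∂γ, p.1 ∈ Icc (0:ℝ) 1 := by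
      have hnull : γ (Prod.fst ⁻¹' (Icc (0:ℝ) 1)ᶜ) = 0 := by
        rw [← Measure.map_apply measurable_fst measurableSet_Icc.compl, hγ0,
          Measure.map_apply hg0meas measurableSet_Icc.compl]
        have : g0 ⁻¹' (Icc (0:ℝ) 1)ᶜ = ∅ := by
          refine eq_empty_of_forall_notMem fun u hu => hu ?_
          exact ⟨mlcdf_nonneg ν _, mlcdf_le_one ν _⟩
        rw [this]
        simp
      rw [ae_iff]
      exact hnull
    have hae1 : ∀ᵐ p : ℝ × ℝ ∂γ, p.2 ∈ Icc (0:ℝ) 1 := by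
      have hnull : γ (Prod.snd ⁻¹' (Icc (0:ℝ) 1)ᶜ) = 0 := by
        rw [← Measure.map_apply measurable_snd measurableSet_Icc.compl, hγ1,
          Measure.map_apply hg1meas measurableSet_Icc.compl]
        have : g1 ⁻¹' (Icc (0:ℝ) 1)ᶜ = ∅ := by
          refine eq_empty_of_forall_notMem fun u hu => hu ?_
          exact ⟨mlcdf_nonneg ν _, mlcdf_le_one ν _⟩
        rw [this]
        simp
      rw [ae_iff]
      exact hnull
    have haebound : ∀ᵐ p : ℝ × ℝ ∂γ, ENNReal.ofReal |p.1 - p.2| ≤ 1 := by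
      filter_upwards [hae0, hae1] with p hp0' hp1'
      refine ENNReal.ofReal_le_one.mpr ?_
      rw [abs_sub_le_iff]
      constructor <;> [linarith [hp0'.2, hp1'.1]; linarith [hp1'.2, hp0'.1]]
    have hγfin : ∫⁻ p : ℝ × ℝ, ENNReal.ofReal |p.1 - p.2| ∂γ ≤ 1 := by
      calc ∫⁻ p : ℝ × ℝ, ENNReal.ofReal |p.1 - p.2| ∂γ ≤ ∫⁻ _, 1 ∂γ := lintegral_mono_ae haebound
        _ = 1 := by simp
    have hint : ∫ p : ℝ × ℝ, |p.1 - p.2| ∂γ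
        = (∫⁻ p : ℝ × ℝ, ENNReal.ofReal |p.1 - p.2| ∂γ).toReal :=
      integral_eq_lintegral_of_nonneg_ae (ae_of_all _ fun p => abs_nonneg _)
        ((continuous_fst.sub continuous_snd).abs.aestronglyMeasurable)
    have hchain : L ≤ ∫⁻ p : ℝ × ℝ, ENNReal.ofReal |p.1 - p.2| ∂γ := by
      have e1 : L = ∫⁻ u, ENNReal.ofReal |g0 u - g1 u| ∂P := hM1.symm
      have e2 : ∫⁻ u, ENNReal.ofReal |g0 u - g1 u| ∂P
          = ∫⁻ s, ENNReal.ofReal |mcdf (P.map g0) s - mcdf (P.map g1) s| ∂volume :=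
        (M3 g0 g1 hg0meas hg1meas hg0mono hg1mono).symm
      rw [e1, e2]
      exact M2 γ (P.map g0) (P.map g1) hγ0 hγ1
    rw [hint, hc] at *
    exact ENNReal.toReal_mono (ne_top_of_le_ne_top (by simp) hγfin) hchain
  rw [hc, W1]
  exact le_antisymm (le_csInf ⟨L.toReal, hmem⟩ hlb) (csInf_le ⟨L.toReal, hlb⟩ hmem)
end

section
/- Let h : ℝ → [0,∞) be convex and set c(x,y) := h(x−y). Let ν0, ν1, μ be Borel probability measures on ℝ with CDFs F_0, F_1, F_μ. Suppose the supports of ν0, ν1 and μ are identical and connected, and that F_0, F_1, F_μ are continuous and strictly increasing on their (common) support. Then ∫_ℝ c(F_0(t), F_1(t)) μ(dt) = T_c((F_0)_#μ, (F_1)_#μ), where (F_k)_#μ denotes the pushforward of μ by F_k and T_c is the minimal (Kantorovich) transport cost with cost function c. -/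
open MeasureTheory Set

/-- The topological support of a Borel measure on `ℝ`: points all of whose
neighborhoods have positive measure. -/
def msupport (ν : MeasureTheory.Measure ℝ) : Set ℝ := {x : ℝ | ∀ U ∈ nhds x, ν U ≠ 0}

/-- The minimal (Kantorovich) transport cost between `μ` and `ν` for the cost `c`. -/
noncomputable def Tcost (c : ℝ → ℝ → ℝ) (μ ν : MeasureTheory.Measure ℝ) : ℝ :=
  sInf { r : ℝ | ∃ γ : MeasureTheory.Measure (ℝ × ℝ),
    MeasureTheory.IsProbabilityMeasure γ ∧ IsCoupling γ μ ν ∧ r = ∫ p, c p.1 p.2 ∂γ }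

open Finset

lemma mcdf_mono (ν : Measure ℝ) [IsProbabilityMeasure ν] : Monotone (mcdf ν) := by
  intro a b hab
  exact ENNReal.toReal_mono (measure_ne_top ν _) (measure_mono (Set.Iic_subset_Iic.2 hab))

lemma mcdf_mem (ν : Measure ℝ) [IsProbabilityMeasure ν] (t : ℝ) : mcdf ν t ∈ Set.Icc (0:ℝ) 1 := by
  constructor
  · exact ENNReal.toReal_nonneg
  · unfold mcdf
    rw [show (1:ℝ) = (1:ENNReal).toReal by simp]
    exact ENNReal.toReal_mono (by simp) (prob_le_one)

lemma mcdf_measurable (ν : Measure ℝ) [IsProbabilityMeasure ν] : Measurable (mcdf ν) :=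
  (mcdf_mono ν).measurable

lemma slice_meas (a t : ℝ) : MeasurableSet {p : ℝ×ℝ | p.2 + a < t ∧ t ≤ p.1} :=
  (measurableSet_lt (measurable_snd.add_const a) measurable_const).inter
    (measurableSet_le measurable_const measurable_fst)

lemma swap_key (a : ℝ) (κ : Measure (ℝ×ℝ)) [IsProbabilityMeasure κ] :
    ∫⁻ p, ENNReal.ofReal (p.1 - p.2 - a) ∂κ
      = ∫⁻ t, κ {p : ℝ×ℝ | p.2 + a < t ∧ t ≤ p.1} ∂volume := by
  set F : ℝ×ℝ → ℝ → ENNReal := fun p t => (Set.Ioc (p.2+a) p.1).indicator 1 t with hF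
  have hS : MeasurableSet {q : (ℝ×ℝ)×ℝ | q.1.2 + a < q.2 ∧ q.2 ≤ q.1.1} :=
    (measurableSet_lt ((measurable_snd.comp measurable_fst).add_const a) measurable_snd).inter
      (measurableSet_le measurable_snd (measurable_fst.comp measurable_fst))
  have hunc : Function.uncurry F
      = ({q : (ℝ×ℝ)×ℝ | q.1.2 + a < q.2 ∧ q.2 ≤ q.1.1}).indicator 1 := by
    funext q
    simp only [Function.uncurry, hF, Set.indicator, Set.mem_Ioc, Set.mem_setOf_eq, Pi.one_apply]
  have hmeas : AEMeasurable (Function.uncurry F) (κ.prod volume) := by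
    rw [hunc]; exact (measurable_const.indicator hS).aemeasurable
  have h1 : ∀ p : ℝ×ℝ, ENNReal.ofReal (p.1 - p.2 - a) = ∫⁻ t, F p t ∂volume := by
    intro p
    rw [hF]
    rw [lintegral_indicator_one measurableSet_Ioc, Real.volume_Ioc]
    ring_nf
  have h2 : ∀ t : ℝ, (∫⁻ p, F p t ∂κ) = κ {p : ℝ×ℝ | p.2 + a < t ∧ t ≤ p.1} := by
    intro t
    have he : (fun p => F p t) = ({p : ℝ×ℝ | p.2 + a < t ∧ t ≤ p.1}).indicator 1 := by
      funext p
      simp only [hF, Set.indicator, Set.mem_Ioc, Set.mem_setOf_eq, Pi.one_apply]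
    rw [he, lintegral_indicator_one (slice_meas a t)]
  calc ∫⁻ p, ENNReal.ofReal (p.1 - p.2 - a) ∂κ = ∫⁻ p, ∫⁻ t, F p t ∂volume ∂κ := by
        simp_rw [← h1]
    _ = ∫⁻ t, ∫⁻ p, F p t ∂κ ∂volume := lintegral_lintegral_swap hmeas
    _ = ∫⁻ t, κ {p : ℝ×ℝ | p.2 + a < t ∧ t ≤ p.1} ∂volume := by simp_rw [h2]

lemma ofReal_max0 (b : ℝ) : ENNReal.ofReal (max b 0) = ENNReal.ofReal b := by
  rcases le_total b 0 with hb | hb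
  · rw [max_eq_right hb, ENNReal.ofReal_zero, eq_comm, ENNReal.ofReal_eq_zero]; exact hb
  · rw [max_eq_left hb]

lemma SL_le (a : ℝ) (f₀ f₁ : ℝ → ℝ) (hm0 : Monotone f₀) (hm1 : Monotone f₁)
    (hb0 : ∀ t, f₀ t ∈ Icc (0:ℝ) 1) (hb1 : ∀ t, f₁ t ∈ Icc (0:ℝ) 1)
    (μ : Measure ℝ) [IsProbabilityMeasure μ]
    (γ : Measure (ℝ×ℝ)) [IsProbabilityMeasure γ]
    (h0 : γ.map Prod.fst = μ.map f₀) (h1 : γ.map Prod.snd = μ.map f₁) :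
    ∫ t, max (f₀ t - f₁ t - a) 0 ∂μ ≤ ∫ p, max (p.1 - p.2 - a) 0 ∂γ := by
  have hmf0 : Measurable f₀ := hm0.measurable
  have hmf1 : Measurable f₁ := hm1.measurable
  set pair : ℝ → ℝ×ℝ := fun t => (f₀ t, f₁ t) with hpair
  have hpairm : Measurable pair := hmf0.prodMk hmf1
  set γs : Measure (ℝ×ℝ) := μ.map pair with hγsdef
  haveI : IsProbabilityMeasure γs := Measure.isProbabilityMeasure_map hpairm.aemeasurable
  -- pointwise slice comparison
  have hpt : ∀ t : ℝ, γs {p : ℝ×ℝ | p.2 + a < t ∧ t ≤ p.1}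
      ≤ γ {p : ℝ×ℝ | p.2 + a < t ∧ t ≤ p.1} := by
    intro t
    set U : Set ℝ := f₀ ⁻¹' (Ici t) with hU
    set V : Set ℝ := f₁ ⁻¹' (Ici (t-a)) with hV
    have hUmeas : MeasurableSet U := hmf0 measurableSet_Ici
    have hVmeas : MeasurableSet V := hmf1 measurableSet_Ici
    have hγs : γs {p : ℝ×ℝ | p.2 + a < t ∧ t ≤ p.1} = μ (U \ V) := by
      rw [hγsdef, Measure.map_apply hpairm (slice_meas a t)]
      congr 1
      ext s
      simp only [Set.mem_preimage, Set.mem_setOf_eq, Set.mem_diff, hU, hV, Set.mem_Ici, hpair]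
      constructor
      · rintro ⟨h1', h2'⟩; exact ⟨h2', by intro hcon; linarith⟩
      · rintro ⟨h1', h2'⟩; exact ⟨by push_neg at h2'; linarith, h1'⟩
    have hB : γ {p : ℝ×ℝ | t ≤ p.1} = μ U := by
      have : {p : ℝ×ℝ | t ≤ p.1} = Prod.fst ⁻¹' (Ici t) := rfl
      rw [this, ← Measure.map_apply measurable_fst measurableSet_Ici, h0,
        Measure.map_apply hmf0 measurableSet_Ici]
    have hC : γ {p : ℝ×ℝ | t - a ≤ p.2} = μ V := by
      have : {p : ℝ×ℝ | t - a ≤ p.2} = Prod.snd ⁻¹' (Ici (t-a)) := rfl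
      rw [this, ← Measure.map_apply measurable_snd measurableSet_Ici, h1,
        Measure.map_apply hmf1 measurableSet_Ici]
    have hcomp : U ⊆ V ∨ V ⊆ U := by
      by_contra hcon
      push_neg at hcon
      obtain ⟨u, hu, hunv⟩ := not_subset.1 hcon.1
      obtain ⟨v, hv, hvnu⟩ := not_subset.1 hcon.2
      rcases le_total u v with h' | h'
      · exact hvnu (le_trans hu (hm0 h'))
      · exact hunv (le_trans hv (hm1 h'))
    rcases hcomp with hUV | hVU
    · rw [hγs, Set.diff_eq_empty.mpr hUV]; simp
    · have hdiff : μ (U \ V) = μ U - μ V :=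
        measure_diff hVU hVmeas.nullMeasurableSet (measure_ne_top μ V)
      have hsub : {p : ℝ×ℝ | t ≤ p.1}
          ⊆ {p : ℝ×ℝ | p.2 + a < t ∧ t ≤ p.1} ∪ {p : ℝ×ℝ | t - a ≤ p.2} := by
        intro p hp
        by_cases hy : t - a ≤ p.2
        · exact Or.inr hy
        · exact Or.inl ⟨by push_neg at hy; linarith, hp⟩
      calc γs {p : ℝ×ℝ | p.2 + a < t ∧ t ≤ p.1} = μ U - μ V := by rw [hγs, hdiff]
        _ = γ {p : ℝ×ℝ | t ≤ p.1} - γ {p : ℝ×ℝ | t - a ≤ p.2} := by rw [hB, hC]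
        _ ≤ γ {p : ℝ×ℝ | p.2 + a < t ∧ t ≤ p.1} := by
            rw [tsub_le_iff_right]
            exact le_trans (measure_mono hsub) (measure_union_le _ _)
  have e1 : ∫⁻ p, ENNReal.ofReal (p.1 - p.2 - a) ∂γs
      ≤ ∫⁻ p, ENNReal.ofReal (p.1 - p.2 - a) ∂γ := by
    rw [swap_key a γs, swap_key a γ]
    exact lintegral_mono hpt
  -- a.e. bounds on γ
  have haefst : ∀ᵐ p ∂γ, p.1 ∈ Icc (0:ℝ) 1 := by
    have hz : γ (Prod.fst ⁻¹' (Icc (0:ℝ) 1)ᶜ) = 0 := by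
      rw [← Measure.map_apply measurable_fst measurableSet_Icc.compl, h0,
        Measure.map_apply hmf0 measurableSet_Icc.compl]
      have : f₀ ⁻¹' (Icc (0:ℝ) 1)ᶜ = ∅ := by
        ext s; simp only [Set.mem_preimage, Set.mem_compl_iff, Set.mem_empty_iff_false,
          iff_false, not_not]; exact hb0 s
      rw [this]; simp
    exact (ae_iff.2 hz)
  have haesnd : ∀ᵐ p ∂γ, p.2 ∈ Icc (0:ℝ) 1 := by
    have hz : γ (Prod.snd ⁻¹' (Icc (0:ℝ) 1)ᶜ) = 0 := by
      rw [← Measure.map_apply measurable_snd measurableSet_Icc.compl, h1,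
        Measure.map_apply hmf1 measurableSet_Icc.compl]
      have : f₁ ⁻¹' (Icc (0:ℝ) 1)ᶜ = ∅ := by
        ext s; simp only [Set.mem_preimage, Set.mem_compl_iff, Set.mem_empty_iff_false,
          iff_false, not_not]; exact hb1 s
      rw [this]; simp
    exact (ae_iff.2 hz)
  have hfin : ∫⁻ p, ENNReal.ofReal (p.1 - p.2 - a) ∂γ ≠ ⊤ := by
    have hb : ∀ᵐ p ∂γ, ENNReal.ofReal (p.1 - p.2 - a) ≤ ENNReal.ofReal (1 + |a|) := by
      filter_upwards [haefst, haesnd] with p hp1 hp2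
      apply ENNReal.ofReal_le_ofReal
      have := abs_nonneg a
      have h3 := neg_abs_le a
      nlinarith [hp1.2, hp2.1]
    exact ((lintegral_mono_ae hb).trans_lt (by rw [lintegral_const]; simp [measure_lt_top])).ne
  -- convert to real integrals
  have meas2 : Measurable fun p : ℝ×ℝ => max (p.1 - p.2 - a) 0 :=
    (((measurable_fst.sub measurable_snd).sub measurable_const).max measurable_const)
  have r1 : ∫ p, max (p.1 - p.2 - a) 0 ∂γ
      = (∫⁻ p, ENNReal.ofReal (p.1 - p.2 - a) ∂γ).toReal := by
    rw [integral_eq_lintegral_of_nonneg_ae (μ := γ)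
      (f := fun p : ℝ×ℝ => max (p.1 - p.2 - a) 0)
      (ae_of_all _ fun p => le_max_right _ _) meas2.aestronglyMeasurable]
    congr 1
    exact lintegral_congr fun p => ofReal_max0 _
  have r0 : ∫ p, max (p.1 - p.2 - a) 0 ∂γs
      = (∫⁻ p, ENNReal.ofReal (p.1 - p.2 - a) ∂γs).toReal := by
    rw [integral_eq_lintegral_of_nonneg_ae (μ := γs)
      (f := fun p : ℝ×ℝ => max (p.1 - p.2 - a) 0)
      (ae_of_all _ fun p => le_max_right _ _) meas2.aestronglyMeasurable]
    congr 1
    exact lintegral_congr fun p => ofReal_max0 _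
  have rmap : ∫ t, max (f₀ t - f₁ t - a) 0 ∂μ = ∫ p, max (p.1 - p.2 - a) 0 ∂γs := by
    rw [hγsdef, integral_map hpairm.aemeasurable meas2.aestronglyMeasurable]
  rw [rmap, r0, r1]
  exact ENNReal.toReal_mono hfin e1

lemma hat_approx (h : ℝ → ℝ) (hconv : ConvexOn ℝ Set.univ h) (n : ℕ) (hn : 1 ≤ n) (ε : ℝ)
    (hδ : ∀ x ∈ Icc (-1:ℝ) 1, ∀ y ∈ Icc (-1:ℝ) 1, |x - y| ≤ 2/n → |h x - h y| ≤ ε) :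
    ∃ (aa : ℕ → ℝ) (s : ℕ → ℝ), (∀ i, s i ≤ s (i+1)) ∧
      ∀ z ∈ Icc (-1:ℝ) 1,
        (h z ≤ h (-1) + s 0 * (z+1)
          + ∑ i ∈ Finset.range (n-1), (s (i+1) - s i) * max (z - aa (i+1)) 0) ∧
        (h (-1) + s 0 * (z+1)
          + ∑ i ∈ Finset.range (n-1), (s (i+1) - s i) * max (z - aa (i+1)) 0 ≤ h z + ε) := by
  set Δ : ℝ := 2 / n with hΔ
  have hnpos : (0:ℝ) < n := by exact_mod_cast hn
  have hΔpos : 0 < Δ := by rw [hΔ]; positivity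
  set a : ℕ → ℝ := fun i => -1 + (i:ℝ) * Δ with ha
  set s : ℕ → ℝ := fun i => (h (a (i+1)) - h (a i)) / Δ with hs
  have ha0 : a 0 = -1 := by simp [ha]
  have hastep : ∀ K : ℕ, a (K+1) = a K + Δ := by
    intro K; simp only [ha]; push_cast; ring
  have han : a n = 1 := by
    have hne : (n:ℝ) ≠ 0 := by positivity
    simp only [ha, hΔ]
    field_simp
    ring
  have hamono : Monotone a := by
    intro i j hij
    simp only [ha]
    have : (i:ℝ) ≤ j := by exact_mod_cast hij
    nlinarith
  have hsstep : ∀ K : ℕ, s K * Δ = h (a (K+1)) - h (a K) := by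
    intro K; rw [hs]; field_simp
  have hsmono : ∀ K : ℕ, s K ≤ s (K+1) := by
    intro K
    have h1 : a K < a (K+1) := by rw [hastep]; linarith
    have h2 : a (K+1) < a (K+2) := by rw [hastep (K+1)]; linarith
    have hsl := hconv.slope_mono_adjacent (Set.mem_univ (a K)) (Set.mem_univ (a (K+2))) h1 h2
    have e1 : a (K+1) - a K = Δ := by rw [hastep]; ring
    have e2 : a (K+1+1) - a (K+1) = Δ := by rw [hastep (K+1)]; ring
    rw [show K+2 = K+1+1 from rfl, e1, e2] at hsl
    simpa [hs] using hsl
  have hP : ∀ (K : ℕ) (z : ℝ), h (-1) + s 0 * (z+1)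
      + ∑ i ∈ Finset.range K, (s (i+1) - s i) * (z - a (i+1))
      = h (a K) + s K * (z - a K) := by
    intro K
    induction K with
    | zero => intro z; rw [Finset.sum_range_zero, ha0]; ring
    | succ K ih =>
        intro z
        rw [Finset.sum_range_succ, ← add_assoc]
        linear_combination ih z + hsstep K + s K * hastep K
  refine ⟨a, s, hsmono, ?_⟩
  intro z hz
  set K : ℕ := min (Nat.floor ((z+1)/Δ)) (n-1) with hK
  have hKn : K ≤ n - 1 := min_le_right _ _
  have hKnn : K + 1 ≤ n := by omega
  have hK1 : (K:ℝ) ≤ (z+1)/Δ := by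
    have h1 : (K:ℝ) ≤ (Nat.floor ((z+1)/Δ) : ℝ) := by exact_mod_cast min_le_left _ _
    exact h1.trans (Nat.floor_le (div_nonneg (by linarith [hz.1]) hΔpos.le))
  have haKz : a K ≤ z := by
    have : (K:ℝ) * Δ ≤ z + 1 := by
      rw [← le_div_iff₀ hΔpos] at *; exact hK1
    simp only [ha]; linarith
  have hzK1 : z ≤ a (K+1) := by
    by_cases hc : Nat.floor ((z+1)/Δ) ≤ n - 1
    · have hKf : K = Nat.floor ((z+1)/Δ) := min_eq_left hc
      have := Nat.lt_floor_add_one ((z+1)/Δ)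
      have h2 : (z+1)/Δ < (K:ℝ) + 1 := by rw [hKf]; exact_mod_cast this
      have h3 : z + 1 < ((K:ℝ)+1) * Δ := by
        rw [div_lt_iff₀ hΔpos] at h2; linarith
      simp only [ha]; push_cast; linarith
    · push_neg at hc
      have hKf : K = n - 1 := min_eq_right (le_of_lt hc)
      have hnΔ : (n:ℝ) * Δ = 2 := by
        rw [hΔ]; field_simp
      have hKsucc : (K:ℝ) + 1 = n := by
        rw [hKf]; have : n - 1 + 1 = n := by omega
        exact_mod_cast congrArg (Nat.cast (R := ℝ)) this
      simp only [ha]; push_cast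
      rw [hKsucc]
      linarith [hz.2]
  have hsum : h (-1) + s 0 * (z+1)
      + ∑ i ∈ Finset.range (n-1), (s (i+1) - s i) * max (z - a (i+1)) 0
      = h (a K) + s K * (z - a K) := by
    have h1 : ∑ i ∈ Finset.range K, (s (i+1) - s i) * max (z - a (i+1)) 0
        = ∑ i ∈ Finset.range (n-1), (s (i+1) - s i) * max (z - a (i+1)) 0 := by
      apply Finset.sum_subset (Finset.range_subset_range.2 hKn)
      intro i _ hnotin
      have hKi : K ≤ i := by simpa using hnotin
      have : a (K+1) ≤ a (i+1) := hamono (by omega)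
      rw [max_eq_right (by linarith), mul_zero]
    have h2 : ∑ i ∈ Finset.range K, (s (i+1) - s i) * max (z - a (i+1)) 0
        = ∑ i ∈ Finset.range K, (s (i+1) - s i) * (z - a (i+1)) := by
      apply Finset.sum_congr rfl
      intro i hi
      have hiK : i + 1 ≤ K := Finset.mem_range.1 hi
      have : a (i+1) ≤ a K := hamono hiK
      rw [max_eq_left (by linarith)]
    rw [← h1, h2, hP K z]
  rw [hsum]
  -- chord bounds
  have haK_mem : a K ∈ Icc (-1:ℝ) 1 := by
    constructor
    · have := hamono (Nat.zero_le K); rw [ha0] at this; exact this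
    · have := hamono (show K ≤ n by omega); rw [han] at this; exact this
  have haK1_mem : a (K+1) ∈ Icc (-1:ℝ) 1 := by
    constructor
    · have := hamono (Nat.zero_le (K+1)); rw [ha0] at this; exact this
    · have := hamono hKnn; rw [han] at this; exact this
  set θ : ℝ := (z - a K)/Δ with hθ
  have hθ0 : 0 ≤ θ := div_nonneg (by linarith) hΔpos.le
  have hθ1 : θ ≤ 1 := by
    rw [hθ, div_le_one hΔpos]
    have := hastep K; linarith
  have hθΔ : z - a K = θ * Δ := by
    rw [hθ]; field_simp
  have hchord : h (a K) + s K * (z - a K) = (1-θ) * h (a K) + θ * h (a (K+1)) := by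
    rw [hθΔ]
    have := hsstep K
    nlinarith [hsstep K]
  constructor
  · -- lower bound: convexity
    have hcvx := hconv.2 (Set.mem_univ (a K)) (Set.mem_univ (a (K+1)))
      (by linarith : (0:ℝ) ≤ 1 - θ) hθ0 (by ring : (1-θ) + θ = 1)
    have hzcomb : (1-θ) • a K + θ • a (K+1) = z := by
      simp only [smul_eq_mul]
      rw [hastep]; linarith [hθΔ]
    rw [hzcomb] at hcvx
    simp only [smul_eq_mul] at hcvx
    rw [hchord]
    exact hcvx
  · -- upper bound
    have hb1 : |h (a K) - h z| ≤ ε := by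
      apply hδ _ haK_mem _ hz
      rw [abs_sub_comm, abs_of_nonneg (by linarith)]
      have := hastep K; linarith
    have hb2 : |h (a (K+1)) - h z| ≤ ε := by
      apply hδ _ haK1_mem _ hz
      rw [abs_of_nonneg (by linarith)]
      have := hastep K; linarith
    have e1 : h (a K) ≤ h z + ε := by
      have := abs_le.1 hb1; linarith [this.2]
    have e2 : h (a (K+1)) ≤ h z + ε := by
      have := abs_le.1 hb2; linarith [this.2]
    rw [hchord]
    nlinarith

lemma bdd_integrable {α : Type*} [MeasurableSpace α] (μ : Measure α) [IsProbabilityMeasure μ]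
    {f : α → ℝ} (hf : AEStronglyMeasurable f μ) {C : ℝ} (hC : ∀ᵐ x ∂μ, |f x| ≤ C) :
    Integrable f μ :=
  (integrable_const C).mono' hf (by simpa [Real.norm_eq_abs] using hC)

lemma ae_box_fst (f₀ : ℝ → ℝ) (hmf0 : Measurable f₀) (hb0 : ∀ t, f₀ t ∈ Icc (0:ℝ) 1)
    (μ : Measure ℝ) (γ : Measure (ℝ×ℝ)) (h0 : γ.map Prod.fst = μ.map f₀) :
    ∀ᵐ p ∂γ, p.1 ∈ Icc (0:ℝ) 1 := by
  apply ae_iff.2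
  have : {p : ℝ×ℝ | ¬ p.1 ∈ Icc (0:ℝ) 1} = Prod.fst ⁻¹' (Icc (0:ℝ) 1)ᶜ := rfl
  rw [this, ← Measure.map_apply measurable_fst measurableSet_Icc.compl, h0,
    Measure.map_apply hmf0 measurableSet_Icc.compl]
  have he : f₀ ⁻¹' (Icc (0:ℝ) 1)ᶜ = ∅ := by
    ext t
    simp only [Set.mem_preimage, Set.mem_compl_iff, Set.mem_empty_iff_false, iff_false, not_not]
    exact hb0 t
  rw [he]; simp

lemma ae_box_snd (f₁ : ℝ → ℝ) (hmf1 : Measurable f₁) (hb1 : ∀ t, f₁ t ∈ Icc (0:ℝ) 1)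
    (μ : Measure ℝ) (γ : Measure (ℝ×ℝ)) (h1 : γ.map Prod.snd = μ.map f₁) :
    ∀ᵐ p ∂γ, p.2 ∈ Icc (0:ℝ) 1 := by
  apply ae_iff.2
  have : {p : ℝ×ℝ | ¬ p.2 ∈ Icc (0:ℝ) 1} = Prod.snd ⁻¹' (Icc (0:ℝ) 1)ᶜ := rfl
  rw [this, ← Measure.map_apply measurable_snd measurableSet_Icc.compl, h1,
    Measure.map_apply hmf1 measurableSet_Icc.compl]
  have he : f₁ ⁻¹' (Icc (0:ℝ) 1)ᶜ = ∅ := by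
    ext t
    simp only [Set.mem_preimage, Set.mem_compl_iff, Set.mem_empty_iff_false, iff_false, not_not]
    exact hb1 t
  rw [he]; simp

lemma expand_int {α : Type} [MeasurableSpace α] (μ : Measure α) [IsProbabilityMeasure μ]
    (G : α → ℝ) (hG : Integrable G μ)
    (intmax : ∀ b:ℝ, Integrable (fun x => max (G x - b) 0) μ)
    (c : ℝ) (s0 : ℝ) (m : ℕ) (cc : ℕ → ℝ) (bb : ℕ → ℝ) :
    ∫ x, (c + s0 * (G x + 1) + ∑ i ∈ Finset.range m, cc i * max (G x - bb i) 0) ∂μ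
      = c + s0 * ((∫ x, G x ∂μ) + 1)
        + ∑ i ∈ Finset.range m, cc i * ∫ x, max (G x - bb i) 0 ∂μ := by
  have i1 : Integrable (fun x => G x + 1) μ := hG.add (integrable_const 1)
  have i2 : Integrable (fun x => c + s0 * (G x + 1)) μ :=
    (integrable_const c).add (i1.const_mul s0)
  have i3 : Integrable (fun x => ∑ i ∈ Finset.range m, cc i * max (G x - bb i) 0) μ :=
    integrable_finset_sum _ (fun i _ => (intmax (bb i)).const_mul (cc i))
  rw [integral_add i2 i3, integral_add (integrable_const c) (i1.const_mul s0),
    integral_const, integral_const_mul, integral_add hG (integrable_const 1),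
    integral_const, integral_finset_sum _ (fun i _ => (intmax (bb i)).const_mul (cc i))]
  simp only [measure_univ, probReal_univ, ENNReal.toReal_one, smul_eq_mul, one_mul, mul_one]
  congr 1
  exact Finset.sum_congr rfl fun i _ => integral_const_mul (cc i) _

lemma key_ineq (h : ℝ → ℝ) (hconv : ConvexOn ℝ Set.univ h)
    (f₀ f₁ : ℝ → ℝ) (hm0 : Monotone f₀) (hm1 : Monotone f₁)
    (hb0 : ∀ t, f₀ t ∈ Icc (0:ℝ) 1) (hb1 : ∀ t, f₁ t ∈ Icc (0:ℝ) 1)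
    (μ : Measure ℝ) [IsProbabilityMeasure μ]
    (γ : Measure (ℝ×ℝ)) [IsProbabilityMeasure γ]
    (h0 : γ.map Prod.fst = μ.map f₀) (h1 : γ.map Prod.snd = μ.map f₁) :
    ∫ t, h (f₀ t - f₁ t) ∂μ ≤ ∫ p, h (p.1 - p.2) ∂γ := by
  have hcont : Continuous h := continuousOn_univ.1 (hconv.continuousOn isOpen_univ)
  have hmf0 : Measurable f₀ := hm0.measurable
  have hmf1 : Measurable f₁ := hm1.measurable
  have hmF : Measurable fun t => f₀ t - f₁ t := hmf0.sub hmf1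
  have hFmem : ∀ t, f₀ t - f₁ t ∈ Icc (-1:ℝ) 1 := fun t =>
    ⟨by linarith [(hb0 t).1, (hb1 t).2], by linarith [(hb0 t).2, (hb1 t).1]⟩
  obtain ⟨M, hM⟩ := (isCompact_Icc (a := (-1:ℝ)) (b := 1)).exists_bound_of_continuousOn
    hcont.continuousOn
  simp only [Real.norm_eq_abs] at hM
  have haefst := ae_box_fst f₀ hmf0 hb0 μ γ h0
  have haesnd := ae_box_snd f₁ hmf1 hb1 μ γ h1
  have haebox : ∀ᵐ p ∂γ, p.1 - p.2 ∈ Icc (-1:ℝ) 1 := by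
    filter_upwards [haefst, haesnd] with p hp1 hp2
    exact ⟨by linarith [hp1.1, hp2.2], by linarith [hp1.2, hp2.1]⟩
  -- global integrabilities
  have int_hF : Integrable (fun t => h (f₀ t - f₁ t)) μ :=
    bdd_integrable μ ((hcont.measurable.comp hmF).aestronglyMeasurable)
      (ae_of_all _ fun t => hM _ (hFmem t))
  have int_hγ : Integrable (fun p : ℝ×ℝ => h (p.1 - p.2)) γ :=
    bdd_integrable γ ((hcont.measurable.comp
      (measurable_fst.sub measurable_snd)).aestronglyMeasurable)
      (by filter_upwards [haebox] with p hp using hM _ hp)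
  have int_fst : Integrable (fun p : ℝ×ℝ => p.1) γ :=
    bdd_integrable γ measurable_fst.aestronglyMeasurable
      (by filter_upwards [haefst] with p hp using abs_le.2 ⟨by linarith [hp.1], hp.2⟩)
  have int_snd : Integrable (fun p : ℝ×ℝ => p.2) γ :=
    bdd_integrable γ measurable_snd.aestronglyMeasurable
      (by filter_upwards [haesnd] with p hp using abs_le.2 ⟨by linarith [hp.1], hp.2⟩)
  have int_f0 : Integrable f₀ μ :=
    bdd_integrable μ hmf0.aestronglyMeasurable
      (ae_of_all _ fun t => abs_le.2 ⟨by linarith [(hb0 t).1], (hb0 t).2⟩)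
  have int_f1 : Integrable f₁ μ :=
    bdd_integrable μ hmf1.aestronglyMeasurable
      (ae_of_all _ fun t => abs_le.2 ⟨by linarith [(hb1 t).1], (hb1 t).2⟩)
  -- equal means
  have hmean : ∫ t, (f₀ t - f₁ t) ∂μ = ∫ p, (p.1 - p.2) ∂γ := by
    have e0 : ∫ p, p.1 ∂γ = ∫ t, f₀ t ∂μ := by
      have A : ∫ x, x ∂(γ.map Prod.fst) = ∫ p, p.1 ∂γ :=
        integral_map measurable_fst.aemeasurable aestronglyMeasurable_id
      have B : ∫ x, x ∂(μ.map f₀) = ∫ t, f₀ t ∂μ :=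
        integral_map hmf0.aemeasurable aestronglyMeasurable_id
      rw [← A, h0, B]
    have e1 : ∫ p, p.2 ∂γ = ∫ t, f₁ t ∂μ := by
      have A : ∫ x, x ∂(γ.map Prod.snd) = ∫ p, p.2 ∂γ :=
        integral_map measurable_snd.aemeasurable aestronglyMeasurable_id
      have B : ∫ x, x ∂(μ.map f₁) = ∫ t, f₁ t ∂μ :=
        integral_map hmf1.aemeasurable aestronglyMeasurable_id
      rw [← A, h1, B]
    rw [integral_sub int_f0 int_f1, integral_sub int_fst int_snd, e0, e1]
  -- epsilon argument
  apply le_of_forall_pos_le_add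
  intro ε hε
  obtain ⟨δ, hδpos, hδ⟩ := Metric.uniformContinuousOn_iff.1
    (isCompact_Icc.uniformContinuousOn_of_continuous hcont.continuousOn) ε hε
  obtain ⟨n, hngt⟩ := exists_nat_gt (2/δ)
  have hnposR : (0:ℝ) < n := lt_trans (by positivity) hngt
  have hn1 : 1 ≤ n := by
    by_contra hcon
    push_neg at hcon
    interval_cases n
    · norm_num at hnposR
  have h2n : 2/(n:ℝ) < δ := by
    rw [div_lt_iff₀ hnposR]
    rw [div_lt_iff₀ hδpos] at hngt
    linarith [mul_comm δ (n:ℝ)]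
  have hδ' : ∀ x ∈ Icc (-1:ℝ) 1, ∀ y ∈ Icc (-1:ℝ) 1, |x - y| ≤ 2/n → |h x - h y| ≤ ε := by
    intro x hx y hy hxy
    have := hδ x hx y hy (by rw [Real.dist_eq]; exact lt_of_le_of_lt hxy h2n)
    rw [Real.dist_eq] at this
    exact this.le
  obtain ⟨aa, s, hsmono, hhat⟩ := hat_approx h hconv n hn1 ε hδ'
  set H : ℝ → ℝ := fun z => h (-1) + s 0 * (z+1)
    + ∑ i ∈ Finset.range (n-1), (s (i+1) - s i) * max (z - aa (i+1)) 0 with hH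
  have hHcont : Continuous H := by
    apply Continuous.add
    · exact Continuous.add continuous_const
        (continuous_const.mul (continuous_id.add continuous_const))
    · exact continuous_finset_sum _ fun i _ =>
        continuous_const.mul ((continuous_id.sub continuous_const).max continuous_const)
  have hHbound : ∀ z ∈ Icc (-1:ℝ) 1, |H z| ≤ M + ε := by
    intro z hz
    have hl := (hhat z hz).1
    have hu := (hhat z hz).2
    have hm := abs_le.1 (hM z hz)
    simp only [hH]
    exact abs_le.2 ⟨by linarith [hm.1], by linarith [hm.2]⟩
  have int_HF : Integrable (fun t => H (f₀ t - f₁ t)) μ :=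
    bdd_integrable μ ((hHcont.measurable.comp hmF).aestronglyMeasurable)
      (ae_of_all _ fun t => hHbound _ (hFmem t))
  have int_Hγ : Integrable (fun p : ℝ×ℝ => H (p.1 - p.2)) γ :=
    bdd_integrable γ ((hHcont.measurable.comp
      (measurable_fst.sub measurable_snd)).aestronglyMeasurable)
      (by filter_upwards [haebox] with p hp using hHbound _ hp)
  have int_maxμ : ∀ b : ℝ, Integrable (fun t => max (f₀ t - f₁ t - b) 0) μ := by
    intro b
    apply bdd_integrable μ ((hmF.sub measurable_const).max measurable_const).aestronglyMeasurable
      (C := 1 + |b|)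
    apply ae_of_all
    intro t
    have h1 := hFmem t
    show |max (f₀ t - f₁ t - b) 0| ≤ 1 + |b|
    rw [abs_le]
    constructor
    · have := le_max_right (f₀ t - f₁ t - b) 0
      have := abs_nonneg b
      linarith
    · apply max_le
      · linarith [h1.2, neg_abs_le b]
      · linarith [abs_nonneg b]
  have int_maxγ : ∀ b : ℝ, Integrable (fun p : ℝ×ℝ => max (p.1 - p.2 - b) 0) γ := by
    intro b
    apply bdd_integrable γ
      (((measurable_fst.sub measurable_snd).sub measurable_const).max
        measurable_const).aestronglyMeasurable (C := 1 + |b|)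
    filter_upwards [haebox] with p hp
    show |max (p.1 - p.2 - b) 0| ≤ 1 + |b|
    rw [abs_le]
    constructor
    · have := le_max_right (p.1 - p.2 - b) 0
      have := abs_nonneg b
      linarith
    · apply max_le
      · linarith [hp.2, neg_abs_le b]
      · linarith [abs_nonneg b]
  have expμ := expand_int μ (fun t => f₀ t - f₁ t) (int_f0.sub int_f1) int_maxμ
    (h (-1)) (s 0) (n-1) (fun i => s (i+1) - s i) (fun i => aa (i+1))
  have expγ := expand_int γ (fun p : ℝ×ℝ => p.1 - p.2) (int_fst.sub int_snd) int_maxγ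
    (h (-1)) (s 0) (n-1) (fun i => s (i+1) - s i) (fun i => aa (i+1))
  have step1 : ∫ t, h (f₀ t - f₁ t) ∂μ ≤ ∫ t, H (f₀ t - f₁ t) ∂μ :=
    integral_mono int_hF int_HF (fun t => (hhat _ (hFmem t)).1)
  have step2 : ∫ t, H (f₀ t - f₁ t) ∂μ ≤ ∫ p, H (p.1 - p.2) ∂γ := by
    rw [hH]
    rw [show (fun t => h (-1) + s 0 * ((f₀ t - f₁ t)+1)
      + ∑ i ∈ Finset.range (n-1), (s (i+1) - s i) * max ((f₀ t - f₁ t) - aa (i+1)) 0)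
      = fun t => h (-1) + s 0 * ((f₀ t - f₁ t)+1)
      + ∑ i ∈ Finset.range (n-1), (s (i+1) - s i) * max ((f₀ t - f₁ t) - aa (i+1)) 0 from rfl]
    rw [expμ, expγ]
    apply add_le_add
    · rw [hmean]
    · apply Finset.sum_le_sum
      intro i _
      exact mul_le_mul_of_nonneg_left
        (SL_le (aa (i+1)) f₀ f₁ hm0 hm1 hb0 hb1 μ γ h0 h1)
        (sub_nonneg.2 (hsmono (i)))
  have step3 : ∫ p, H (p.1 - p.2) ∂γ ≤ (∫ p, h (p.1 - p.2) ∂γ) + ε := by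
    have hmono : ∫ p, H (p.1 - p.2) ∂γ ≤ ∫ p, (h (p.1 - p.2) + ε) ∂γ :=
      integral_mono_ae int_Hγ (int_hγ.add (integrable_const ε))
        (by filter_upwards [haebox] with p hp using (hhat _ hp).2)
    rw [integral_add int_hγ (integrable_const ε), integral_const] at hmono
    simpa [measure_univ] using hmono
  linarith

/-- For a convex nonnegative `h`, cost `c(x,y) = h(x-y)`, and measures
`ν0, ν1, μ` with identical connected supports and continuous strictly increasing CDFs
on their support, `∫ c(F_0(t), F_1(t)) μ(dt)` is the minimal transport cost from
`(F_0)_# μ` to `(F_1)_# μ`. -/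
theorem stmt_2 (h : ℝ → ℝ) (hconv : ConvexOn ℝ Set.univ h) (hpos : ∀ x, 0 ≤ h x)
    (c : ℝ → ℝ → ℝ) (hc : ∀ x y, c x y = h (x - y))
    (ν0 ν1 μ : MeasureTheory.Measure ℝ)
    [MeasureTheory.IsProbabilityMeasure ν0] [MeasureTheory.IsProbabilityMeasure ν1]
    [MeasureTheory.IsProbabilityMeasure μ]
    (hsupp0 : msupport ν0 = msupport μ) (hsupp1 : msupport ν1 = msupport μ)
    (hconn : IsConnected (msupport μ))
    (hcont0 : ContinuousOn (mcdf ν0) (msupport μ))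
    (hcont1 : ContinuousOn (mcdf ν1) (msupport μ))
    (hcontμ : ContinuousOn (mcdf μ) (msupport μ))
    (hmono0 : StrictMonoOn (mcdf ν0) (msupport μ))
    (hmono1 : StrictMonoOn (mcdf ν1) (msupport μ))
    (hmonoμ : StrictMonoOn (mcdf μ) (msupport μ)) :
    ∫ t, c (mcdf ν0 t) (mcdf ν1 t) ∂μ
      = Tcost c (μ.map (mcdf ν0)) (μ.map (mcdf ν1)) := by
  have hcont : Continuous h :=
    continuousOn_univ.1 (hconv.continuousOn isOpen_univ)
  set f₀ : ℝ → ℝ := mcdf ν0 with hf₀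
  set f₁ : ℝ → ℝ := mcdf ν1 with hf₁
  have hm0 : Monotone f₀ := mcdf_mono ν0
  have hm1 : Monotone f₁ := mcdf_mono ν1
  have hb0 : ∀ t, f₀ t ∈ Icc (0:ℝ) 1 := mcdf_mem ν0
  have hb1 : ∀ t, f₁ t ∈ Icc (0:ℝ) 1 := mcdf_mem ν1
  have hmf0 : Measurable f₀ := hm0.measurable
  have hmf1 : Measurable f₁ := hm1.measurable
  have hpairm : Measurable (fun t => (f₀ t, f₁ t)) := hmf0.prodMk hmf1
  have hcmeas : Measurable (fun p : ℝ×ℝ => c p.1 p.2) := by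
    have : (fun p : ℝ×ℝ => c p.1 p.2) = fun p : ℝ×ℝ => h (p.1 - p.2) := by
      funext p; rw [hc]
    rw [this]
    exact (hcont.comp (continuous_fst.sub continuous_snd)).measurable
  set γs : Measure (ℝ×ℝ) := μ.map (fun t => (f₀ t, f₁ t)) with hγs
  haveI : IsProbabilityMeasure γs := Measure.isProbabilityMeasure_map hpairm.aemeasurable
  have hcoup : IsCoupling γs (μ.map f₀) (μ.map f₁) := by
    constructor
    · rw [hγs, Measure.map_map measurable_fst hpairm]
      rfl
    · rw [hγs, Measure.map_map measurable_snd hpairm]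
      rfl
  have hval : ∫ t, c (f₀ t) (f₁ t) ∂μ = ∫ p, c p.1 p.2 ∂γs := by
    rw [hγs, integral_map hpairm.aemeasurable hcmeas.aestronglyMeasurable]
  have hmem : (∫ t, c (f₀ t) (f₁ t) ∂μ) ∈ { r : ℝ | ∃ γ : Measure (ℝ × ℝ),
      IsProbabilityMeasure γ ∧ IsCoupling γ (μ.map f₀) (μ.map f₁)
        ∧ r = ∫ p, c p.1 p.2 ∂γ } :=
    ⟨γs, inferInstance, hcoup, hval⟩
  have hbdd : BddBelow { r : ℝ | ∃ γ : Measure (ℝ × ℝ),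
      IsProbabilityMeasure γ ∧ IsCoupling γ (μ.map f₀) (μ.map f₁)
        ∧ r = ∫ p, c p.1 p.2 ∂γ } := by
    refine ⟨0, ?_⟩
    rintro r ⟨γ, hγ, _, rfl⟩
    exact integral_nonneg fun p => by rw [hc]; exact hpos _
  apply le_antisymm
  · -- LHS ≤ sInf : lower-bound every element
    apply le_csInf ⟨_, hmem⟩
    rintro r ⟨γ, hγ, ⟨hc1, hc2⟩, rfl⟩
    haveI := hγ
    have e1 : ∫ t, c (f₀ t) (f₁ t) ∂μ = ∫ t, h (f₀ t - f₁ t) ∂μ := by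
      apply integral_congr_ae; apply ae_of_all; intro t; simp only [hc]
    have e2 : ∫ p, c p.1 p.2 ∂γ = ∫ p, h (p.1 - p.2) ∂γ := by
      apply integral_congr_ae; apply ae_of_all; intro p; simp only [hc]
    rw [e1, e2]
    exact key_ineq h hconv f₀ f₁ hm0 hm1 hb0 hb1 μ γ hc1 hc2
  · exact csInf_le hbdd hmem
end

section
/- (Monte Carlo estimator bound.) Let h : [−1,1] → [0,∞) be Lipschitz with Lipschitz constant C_h, and let μ be a Borel probability measure on ℝ. Let ν0, ν1 be Borel probability measures on ℝ, let r_s : ℝ → [0,1] be nondecreasing and measurable, and define the relaxed CDFs F_k^{(s)}(t) := 1 − ∫ r_s(z−t) dν_k(z) and B_s(t) := F_0^{(s)}(t) − F_1^{(s)}(t). Let Z_0^{(1)},…,Z_0^{(m0)} be i.i.d. with law ν0, Z_1^{(1)},…,Z_1^{(m1)} i.i.d. with law ν1, and t^{(1)},…,t^{(T)} i.i.d. with law μ, with all three families mutually independent. Define the empirical relaxed difference B̂(t) := (1/m1)Σ_{i=1}^{m1} r_s(Z_1^{(i)} − t) − (1/m0)Σ_{i=1}^{m0} r_s(Z_0^{(i)}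 − t). Then E[( (1/T)Σ_{j=1}^T h(B̂(t^{(j)})) − ∫_ℝ h(B_s(t)) μ(dt) )²] ≤ 8C_h²/min(m0,m1) + 2C_h²/T. In particular, the estimation error converges to 0 in L²(P) as m0, m1, T → ∞, uniformly in s. -/
open MeasureTheory Set ProbabilityTheory

/-- The relaxed CDF `F^{(s)}(t) = 1 - ∫ r(z - t) dν(z)` associated with a
relaxation function `r` and a measure `ν` on `ℝ`. -/
noncomputable def relaxedCDF (r : ℝ → ℝ) (ν : MeasureTheory.Measure ℝ) (t : ℝ) : ℝ :=
  1 - ∫ z, r (z - t) ∂ν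


lemma mc_integrable_of_bdd {α : Type*} [MeasurableSpace α] {P : Measure α} [IsFiniteMeasure P]
    {f : α → ℝ} {C : ℝ} (hf : AEStronglyMeasurable f P) (hb : ∀ x, |f x| ≤ C) :
    Integrable f P :=
  ⟨hf, HasFiniteIntegral.of_bounded (C := C)
    (ae_of_all _ (fun x => by simpa [Real.norm_eq_abs] using hb x))⟩

lemma mc_sq2 (a b : ℝ) : (a + b) ^ 2 ≤ 2 * a ^ 2 + 2 * b ^ 2 := by nlinarith [sq_nonneg (a - b)]

-- second moment bound around the mean
lemma mc_meanSq (μ : Measure ℝ) [IsProbabilityMeasure μ] (f : ℝ → ℝ) (hf : Measurable f)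
    (c C : ℝ) (hC : 0 ≤ C) (hb : ∀ t, |f t - c| ≤ C) :
    ∫ t, (f t - ∫ s, f s ∂μ) ^ 2 ∂μ ≤ C ^ 2 := by
  have hfb : ∀ t, |f t| ≤ C + |c| := by
    intro t
    have := hb t
    have := abs_sub_abs_le_abs_sub (f t) c
    nlinarith [abs_nonneg (f t), abs_nonneg c]
  have hfi : Integrable f μ := mc_integrable_of_bdd hf.aestronglyMeasurable hfb
  set I := ∫ s, f s ∂μ with hI
  have hui : Integrable (fun t => f t - c) μ :=
    mc_integrable_of_bdd (hf.sub measurable_const).aestronglyMeasurable hb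
  have hu2i : Integrable (fun t => (f t - c) ^ 2) μ :=
    mc_integrable_of_bdd ((hf.sub measurable_const).pow_const 2).aestronglyMeasurable
      (fun t => by
        rw [abs_pow]
        exact pow_le_pow_left₀ (abs_nonneg _) (hb t) 2)
  have hEu : ∫ t, (f t - c) ∂μ = I - c := by
    rw [integral_sub hfi (integrable_const c), integral_const]; simp [hI]
  have key : ∫ t, (f t - I) ^ 2 ∂μ
      = ∫ t, (f t - c) ^ 2 ∂μ - 2 * (I - c) * (I - c) + (I - c) ^ 2 := by
    have expand : ∀ t, (f t - I) ^ 2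
        = (f t - c) ^ 2 - 2 * (I - c) * (f t - c) + (I - c) ^ 2 := by
      intro t; ring
    calc ∫ t, (f t - I) ^ 2 ∂μ
        = ∫ t, ((f t - c) ^ 2 - 2 * (I - c) * (f t - c) + (I - c) ^ 2) ∂μ := by
          simp_rw [expand]
      _ = ∫ t, ((f t - c) ^ 2 - 2 * (I - c) * (f t - c)) ∂μ + (I - c) ^ 2 := by
          have hint : Integrable (fun t => (f t - c) ^ 2 - 2 * (I - c) * (f t - c)) μ :=
            hu2i.sub (hui.const_mul _)
          rw [integral_add hint (integrable_const _), integral_const]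
          simp
      _ = ∫ t, (f t - c) ^ 2 ∂μ - 2 * (I - c) * (I - c) + (I - c) ^ 2 := by
          rw [integral_sub hu2i (hui.const_mul _), integral_const_mul, hEu]
  have h2 : ∫ t, (f t - c) ^ 2 ∂μ ≤ C ^ 2 := by
    calc ∫ t, (f t - c) ^ 2 ∂μ ≤ ∫ _t, C ^ 2 ∂μ := by
          refine integral_mono hu2i (integrable_const _) (fun t => ?_)
          exact sq_le_sq' (abs_le.mp (hb t)).1 (abs_le.mp (hb t)).2
      _ = C ^ 2 := by simp
  nlinarith [key, h2, sq_nonneg (I - c)]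

lemma mc_integrable_of_bdd' {α : Type*} [MeasurableSpace α] {P : Measure α} [IsFiniteMeasure P]
    {f : α → ℝ} {C : ℝ} (hf : AEStronglyMeasurable f P) (hb : ∀ x, |f x| ≤ C) :
    Integrable f P :=
  ⟨hf, HasFiniteIntegral.of_bounded (C := C)
    (ae_of_all _ (fun x => by simpa [Real.norm_eq_abs] using hb x))⟩

lemma mc_q_int (ν : Measure ℝ) [IsProbabilityMeasure ν] (r : ℝ → ℝ)
    (hrm : Measurable r) (hr01 : ∀ z, r z ∈ Icc (0:ℝ) 1) (t : ℝ) :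
    Integrable (fun z => r (z - t)) ν :=
  mc_integrable_of_bdd' (hrm.comp (measurable_id.sub measurable_const)).aestronglyMeasurable
    (fun z => abs_le.mpr ⟨by linarith [(hr01 (z - t)).1], (hr01 (z - t)).2⟩)

lemma mc_q_mem (ν : Measure ℝ) [IsProbabilityMeasure ν] (r : ℝ → ℝ)
    (hrm : Measurable r) (hr01 : ∀ z, r z ∈ Icc (0:ℝ) 1) (t : ℝ) :
    (∫ z, r (z - t) ∂ν) ∈ Icc (0:ℝ) 1 := by
  constructor
  · exact integral_nonneg (fun z => (hr01 (z - t)).1)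
  · calc ∫ z, r (z - t) ∂ν ≤ ∫ _z, (1:ℝ) ∂ν :=
        integral_mono (mc_q_int ν r hrm hr01 t) (integrable_const _)
          (fun z => (hr01 (z - t)).2)
      _ = 1 := by simp

lemma mc_q_meas (ν : Measure ℝ) [IsProbabilityMeasure ν] (r : ℝ → ℝ)
    (hrm : Measurable r) (hr01 : ∀ z, r z ∈ Icc (0:ℝ) 1) (hrmono : Monotone r) :
    Measurable (fun t => ∫ z, r (z - t) ∂ν) := by
  apply Antitone.measurable
  intro t t' htt'
  exact integral_mono (mc_q_int ν r hrm hr01 t') (mc_q_int ν r hrm hr01 t)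
    (fun z => hrmono (by linarith))

lemma mc_U {Ω : Type*} [MeasurableSpace Ω] (P : Measure Ω) [IsProbabilityMeasure P]
    (ν μ : Measure ℝ) [IsProbabilityMeasure ν] [IsProbabilityMeasure μ]
    (r : ℝ → ℝ) (hrm : Measurable r) (hrmono : Monotone r) (hr01 : ∀ z, r z ∈ Icc (0:ℝ) 1)
    (m : ℕ) (hm : 0 < m) (Z : Fin m → Ω → ℝ) (t : Ω → ℝ)
    (hZm : ∀ i, Measurable (Z i)) (htm : Measurable t)
    (hmap : ∀ i i' : Fin m, i ≠ i' →
      P.map (fun ω => ((Z i ω, Z i' ω), t ω)) = (ν.prod ν).prod μ) :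
    ∫ ω, ((1 / (m:ℝ)) * ∑ i : Fin m, r (Z i ω - t ω) - ∫ z, r (z - t ω) ∂ν) ^ 2 ∂P
      ≤ 1 / (m:ℝ) := by
  have hm' : (m:ℝ) ≠ 0 := Nat.cast_ne_zero.mpr hm.ne'
  set q : ℝ → ℝ := fun s => ∫ z, r (z - s) ∂ν with hq
  have hqmeas : Measurable q := mc_q_meas ν r hrm hr01 hrmono
  have hqmem : ∀ s, q s ∈ Icc (0:ℝ) 1 := fun s => mc_q_mem ν r hrm hr01 s
  set ξ : Fin m → Ω → ℝ := fun i ω => r (Z i ω - t ω) - q (t ω) with hξ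
  have hξm : ∀ i, Measurable (ξ i) := fun i =>
    (hrm.comp ((hZm i).sub htm)).sub (hqmeas.comp htm)
  have hξb : ∀ i ω, |ξ i ω| ≤ 1 := by
    intro i ω
    have h1 := hr01 (Z i ω - t ω)
    have h2 := hqmem (t ω)
    simp only [hξ]
    rw [abs_le]
    constructor
    · linarith [h1.1, h2.2]
    · linarith [h1.2, h2.1]
  have hprodint : ∀ i i' : Fin m, Integrable (fun ω => ξ i ω * ξ i' ω) P := by
    intro i i'
    refine mc_integrable_of_bdd' (C := 1) ((hξm i).mul (hξm i')).aestronglyMeasurable (fun ω => ?_)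
    rw [abs_mul]
    exact mul_le_one₀ (hξb i ω) (abs_nonneg _) (hξb i' ω)
  -- off-diagonal vanishing
  have hoff : ∀ i i' : Fin m, i ≠ i' → ∫ ω, ξ i ω * ξ i' ω ∂P = 0 := by
    intro i i' hii
    set Φ : (ℝ × ℝ) × ℝ → ℝ :=
      fun p => (r (p.1.1 - p.2) - q p.2) * (r (p.1.2 - p.2) - q p.2) with hΦdef
    have hΦm : Measurable Φ := by
      apply Measurable.mul
      · exact (hrm.comp ((measurable_fst.comp measurable_fst).sub measurable_snd)).sub
          (hqmeas.comp measurable_snd)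
      · exact (hrm.comp ((measurable_snd.comp measurable_fst).sub measurable_snd)).sub
          (hqmeas.comp measurable_snd)
    have hΦb : ∀ p, |Φ p| ≤ 1 := by
      intro p
      have h1 := hr01 (p.1.1 - p.2); have h2 := hr01 (p.1.2 - p.2); have h3 := hqmem p.2
      have f1 : |r (p.1.1 - p.2) - q p.2| ≤ 1 :=
        abs_le.mpr ⟨by linarith [h1.1, h3.2], by linarith [h1.2, h3.1]⟩
      have f2 : |r (p.1.2 - p.2) - q p.2| ≤ 1 :=
        abs_le.mpr ⟨by linarith [h2.1, h3.2], by linarith [h2.2, h3.1]⟩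
      simp only [hΦdef]
      rw [abs_mul]
      exact mul_le_one₀ f1 (abs_nonneg _) f2
    have hW : Measurable (fun ω => ((Z i ω, Z i' ω), t ω)) :=
      (((hZm i).prodMk (hZm i')).prodMk htm)
    have step1 : ∫ ω, ξ i ω * ξ i' ω ∂P = ∫ p, Φ p ∂((ν.prod ν).prod μ) := by
      rw [← hmap i i' hii, integral_map hW.aemeasurable hΦm.aestronglyMeasurable]
    rw [step1]
    have hΦint : Integrable Φ ((ν.prod ν).prod μ) :=
      mc_integrable_of_bdd' hΦm.aestronglyMeasurable hΦb
    rw [MeasureTheory.integral_prod_symm _ hΦint]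
    have inner0 : ∀ s : ℝ,
        (∫ p : ℝ × ℝ, Φ (p, s) ∂(ν.prod ν)) = 0 := by
      intro s
      have : (∫ p : ℝ × ℝ, (r (p.1 - s) - q s) * (r (p.2 - s) - q s) ∂(ν.prod ν))
          = (∫ z, (r (z - s) - q s) ∂ν) * (∫ z, (r (z - s) - q s) ∂ν) :=
        integral_prod_mul (f := fun z => r (z - s) - q s) (g := fun z => r (z - s) - q s)
      rw [hΦdef]
      simp only []
      rw [this, integral_sub (mc_q_int ν r hrm hr01 s) (integrable_const _), integral_const]
      simp [hq]
    simp only [inner0, integral_zero]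
  -- rewrite the average
  have hrw : ∀ ω, (1 / (m:ℝ)) * ∑ i : Fin m, r (Z i ω - t ω) - q (t ω)
      = (1 / (m:ℝ)) * ∑ i : Fin m, ξ i ω := by
    intro ω
    have hsum : ∑ i : Fin m, ξ i ω
        = (∑ i : Fin m, r (Z i ω - t ω)) - (m:ℝ) * q (t ω) := by
      rw [hξ]
      simp only []
      rw [Finset.sum_sub_distrib, Finset.sum_const, Finset.card_univ, Fintype.card_fin,
        nsmul_eq_mul]
    rw [hsum]; field_simp
  calc ∫ ω, ((1 / (m:ℝ)) * ∑ i : Fin m, r (Z i ω - t ω) - q (t ω)) ^ 2 ∂P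
      = ∫ ω, (1 / (m:ℝ)) ^ 2 * (∑ i : Fin m, ξ i ω) ^ 2 ∂P := by
        congr 1; funext ω; rw [hrw ω]; ring
    _ = (1 / (m:ℝ)) ^ 2 * ∫ ω, (∑ i : Fin m, ξ i ω) ^ 2 ∂P := integral_const_mul _ _
    _ = (1 / (m:ℝ)) ^ 2 * ∑ i : Fin m, ∑ i' : Fin m, ∫ ω, ξ i ω * ξ i' ω ∂P := by
        congr 1
        have : ∀ ω, (∑ i : Fin m, ξ i ω) ^ 2
            = ∑ i : Fin m, ∑ i' : Fin m, ξ i ω * ξ i' ω := by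
          intro ω; rw [sq, Finset.sum_mul_sum]
        simp_rw [this]
        rw [integral_finset_sum _ (fun i _ => integrable_finset_sum _ (fun i' _ => hprodint i i'))]
        exact Finset.sum_congr rfl (fun i _ =>
          integral_finset_sum _ (fun i' _ => hprodint i i'))
    _ ≤ (1 / (m:ℝ)) ^ 2 * (m:ℝ) := by
        apply mul_le_mul_of_nonneg_left _ (by positivity)
        calc ∑ i : Fin m, ∑ i' : Fin m, ∫ ω, ξ i ω * ξ i' ω ∂P
            ≤ ∑ _i : Fin m, (1:ℝ) := by
              apply Finset.sum_le_sum
              intro i _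
              have : ∑ i' : Fin m, ∫ ω, ξ i ω * ξ i' ω ∂P = ∫ ω, ξ i ω * ξ i ω ∂P :=
                Finset.sum_eq_single i (fun i' _ hii' => hoff i i' (Ne.symm hii'))
                  (fun habs => absurd (Finset.mem_univ i) habs)
              rw [this]
              calc ∫ ω, ξ i ω * ξ i ω ∂P ≤ ∫ _ω, (1:ℝ) ∂P := by
                    refine integral_mono (hprodint i i) (integrable_const _) (fun ω => ?_)
                    nlinarith [hξb i ω, abs_nonneg (ξ i ω), sq_abs (ξ i ω)]
                _ = 1 := by simp
          _ = (m:ℝ) := by simp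
    _ = 1 / (m:ℝ) := by field_simp

lemma mc_lip_sq (c x y : ℝ) (hc : 0 ≤ c) (hxy : |x| ≤ c * |y|) : x ^ 2 ≤ c ^ 2 * y ^ 2 := by
  have h3 := mul_self_le_mul_self (abs_nonneg x) hxy
  nlinarith [sq_abs x, sq_abs y]

lemma mc_sq_sub (a b : ℝ) : (a - b) ^ 2 ≤ 2 * a ^ 2 + 2 * b ^ 2 := by
  nlinarith [sq_nonneg (a + b)]

-- helper: averages of [0,1]-valued families lie in [0,1]
lemma mc_avg_mem (n : ℕ) (hn : 0 < n) (x : Fin n → ℝ) (hx : ∀ i, x i ∈ Icc (0:ℝ) 1) :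
    (1 / (n:ℝ)) * ∑ i, x i ∈ Icc (0:ℝ) 1 := by
  have hn' : (0:ℝ) < n := Nat.cast_pos.mpr hn
  constructor
  · exact mul_nonneg (by positivity) (Finset.sum_nonneg (fun i _ => (hx i).1))
  · have hsum : ∑ i, x i ≤ (n:ℝ) := by
      calc ∑ i, x i ≤ ∑ _i : Fin n, (1:ℝ) := Finset.sum_le_sum (fun i _ => (hx i).2)
        _ = (n:ℝ) := by simp
    calc (1 / (n:ℝ)) * ∑ i, x i ≤ (1 / (n:ℝ)) * (n:ℝ) :=
          mul_le_mul_of_nonneg_left hsum (by positivity)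
      _ = 1 := by field_simp

-- helper: bound on averages by a uniform bound
lemma mc_avg_abs (n : ℕ) (hn : 0 < n) (x : Fin n → ℝ) (c : ℝ) (hx : ∀ i, |x i| ≤ c) :
    |(1 / (n:ℝ)) * ∑ i, x i| ≤ c := by
  have hn' : (0:ℝ) < n := Nat.cast_pos.mpr hn
  have habs : |∑ i, x i| ≤ (n:ℝ) * c := by
    calc |∑ i, x i| ≤ ∑ i, |x i| := Finset.abs_sum_le_sum_abs _ _
      _ ≤ ∑ _i : Fin n, c := Finset.sum_le_sum (fun i _ => hx i)
      _ = (n:ℝ) * c := by simp [mul_comm]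
  rw [abs_mul, abs_of_pos (by positivity : (0:ℝ) < 1 / (n:ℝ))]
  calc (1 / (n:ℝ)) * |∑ i, x i| ≤ (1 / (n:ℝ)) * ((n:ℝ) * c) :=
        mul_le_mul_of_nonneg_left habs (by positivity)
    _ = c := by field_simp

set_option maxHeartbeats 2000000 in
/-- **Monte Carlo estimator bound.** For `h` Lipschitz with constant `C_h`
on `[-1,1]`, i.i.d. samples from `ν0`, `ν1` and thresholds from `μ` (all mutually
independent), the mean squared error of the Monte Carlo estimator of
`∫ h(B_s(t)) μ(dt)` is at most `8 C_h² / min(m0,m1) + 2 C_h² / T`. -/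
theorem stmt_3 {Ω : Type*} [MeasurableSpace Ω] (P : MeasureTheory.Measure Ω)
    [MeasureTheory.IsProbabilityMeasure P]
    (h : ℝ → ℝ) (C_h : ℝ) (hC : 0 ≤ C_h)
    (hLip : LipschitzOnWith (Real.toNNReal C_h) h (Set.Icc (-1 : ℝ) 1))
    (hpos : ∀ x ∈ Set.Icc (-1 : ℝ) 1, 0 ≤ h x)
    (μ ν0 ν1 : MeasureTheory.Measure ℝ)
    [MeasureTheory.IsProbabilityMeasure μ]
    [MeasureTheory.IsProbabilityMeasure ν0] [MeasureTheory.IsProbabilityMeasure ν1]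
    (r : ℝ → ℝ) (hrm : Measurable r) (hrmono : Monotone r)
    (hr01 : ∀ z, r z ∈ Set.Icc (0 : ℝ) 1)
    (m0 m1 T : ℕ) (hm0 : 0 < m0) (hm1 : 0 < m1) (hT : 0 < T)
    (Z0 : Fin m0 → Ω → ℝ) (Z1 : Fin m1 → Ω → ℝ) (ts : Fin T → Ω → ℝ)
    (hZ0m : ∀ i, Measurable (Z0 i)) (hZ1m : ∀ i, Measurable (Z1 i))
    (htsm : ∀ j, Measurable (ts j))
    (hlaw0 : ∀ i, P.map (Z0 i) = ν0) (hlaw1 : ∀ i, P.map (Z1 i) = ν1)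
    (hlawt : ∀ j, P.map (ts j) = μ)
    (hindep : ProbabilityTheory.iIndepFun
      (Sum.elim Z0 (Sum.elim Z1 ts)) P) :
    ∫ ω, ((1 / (T : ℝ)) * ∑ j : Fin T,
            h ((1 / (m1 : ℝ)) * ∑ i : Fin m1, r (Z1 i ω - ts j ω)
              - (1 / (m0 : ℝ)) * ∑ i : Fin m0, r (Z0 i ω - ts j ω))
          - ∫ t, h (relaxedCDF r ν0 t - relaxedCDF r ν1 t) ∂μ) ^ 2 ∂P
      ≤ 8 * C_h ^ 2 / min (m0 : ℝ) (m1 : ℝ) + 2 * C_h ^ 2 / (T : ℝ) := by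
  classical
  obtain ⟨H, hHlip, hHeq⟩ := hLip.extend_real
  have hT' : (0:ℝ) < (T:ℝ) := Nat.cast_pos.mpr hT
  have hm0' : (0:ℝ) < (m0:ℝ) := Nat.cast_pos.mpr hm0
  have hm1' : (0:ℝ) < (m1:ℝ) := Nat.cast_pos.mpr hm1
  have hmin : (0:ℝ) < min (m0:ℝ) (m1:ℝ) := lt_min hm0' hm1'
  have hHS : ∀ x y : ℝ, |H x - H y| ≤ C_h * |x - y| := by
    intro x y
    have := hHlip.dist_le_mul x y
    rwa [Real.dist_eq, Real.dist_eq, Real.coe_toNNReal C_h hC] at this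
  have hHmeas : Measurable H := hHlip.continuous.measurable
  -- the mean functions
  set q0 : ℝ → ℝ := fun s => ∫ z, r (z - s) ∂ν0 with hq0def
  set q1 : ℝ → ℝ := fun s => ∫ z, r (z - s) ∂ν1 with hq1def
  have hq0meas : Measurable q0 := mc_q_meas ν0 r hrm hr01 hrmono
  have hq1meas : Measurable q1 := mc_q_meas ν1 r hrm hr01 hrmono
  have hq0mem : ∀ s, q0 s ∈ Icc (0:ℝ) 1 := fun s => mc_q_mem ν0 r hrm hr01 s
  have hq1mem : ∀ s, q1 s ∈ Icc (0:ℝ) 1 := fun s => mc_q_mem ν1 r hrm hr01 s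
  -- population quantities
  set B : ℝ → ℝ := fun t => q1 t - q0 t with hBdef
  have hBmem : ∀ t, B t ∈ Icc (-1:ℝ) 1 := by
    intro t
    simp only [hBdef]
    exact ⟨by linarith [(hq1mem t).1, (hq0mem t).2], by linarith [(hq1mem t).2, (hq0mem t).1]⟩
  have hBmeas : Measurable B := hq1meas.sub hq0meas
  set g : ℝ → ℝ := fun t => H (B t) with hgdef
  have hgmeas : Measurable g := hHmeas.comp hBmeas
  have hgb : ∀ t, |g t - H 0| ≤ C_h := by
    intro t
    calc |g t - H 0| ≤ C_h * |B t - 0| := hHS (B t) 0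
      _ ≤ C_h * 1 := by
          apply mul_le_mul_of_nonneg_left _ hC
          rw [sub_zero, abs_le]; exact ⟨(hBmem t).1, (hBmem t).2⟩
      _ = C_h := mul_one _
  set I : ℝ := ∫ t, g t ∂μ with hIdef
  -- empirical quantities
  set S1 : Fin T → Ω → ℝ := fun j ω => (1 / (m1:ℝ)) * ∑ i : Fin m1, r (Z1 i ω - ts j ω)
    with hS1def
  set S0 : Fin T → Ω → ℝ := fun j ω => (1 / (m0:ℝ)) * ∑ i : Fin m0, r (Z0 i ω - ts j ω)
    with hS0def
  have hS1mem : ∀ j ω, S1 j ω ∈ Icc (0:ℝ) 1 := fun j ω =>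
    mc_avg_mem m1 hm1 _ (fun i => hr01 _)
  have hS0mem : ∀ j ω, S0 j ω ∈ Icc (0:ℝ) 1 := fun j ω =>
    mc_avg_mem m0 hm0 _ (fun i => hr01 _)
  have hS1meas : ∀ j, Measurable (S1 j) := fun j =>
    measurable_const.mul (Finset.measurable_sum _ (fun i _ => hrm.comp ((hZ1m i).sub (htsm j))))
  have hS0meas : ∀ j, Measurable (S0 j) := fun j =>
    measurable_const.mul (Finset.measurable_sum _ (fun i _ => hrm.comp ((hZ0m i).sub (htsm j))))
  set F : Fin T → Ω → ℝ := fun j ω => H (S1 j ω - S0 j ω) with hFdef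
  have hFmeas : ∀ j, Measurable (F j) := fun j => hHmeas.comp ((hS1meas j).sub (hS0meas j))
  have hFb : ∀ j ω, |F j ω - H 0| ≤ C_h := by
    intro j ω
    calc |F j ω - H 0| ≤ C_h * |S1 j ω - S0 j ω - 0| := hHS _ 0
      _ ≤ C_h * 1 := by
          apply mul_le_mul_of_nonneg_left _ hC
          rw [sub_zero, abs_le]
          exact ⟨by linarith [(hS1mem j ω).1, (hS0mem j ω).2],
            by linarith [(hS1mem j ω).2, (hS0mem j ω).1]⟩
      _ = C_h := mul_one _
  -- rewrite the goal using H
  have hgoal1 : ∫ ω, ((1 / (T : ℝ)) * ∑ j : Fin T,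
            h ((1 / (m1 : ℝ)) * ∑ i : Fin m1, r (Z1 i ω - ts j ω)
              - (1 / (m0 : ℝ)) * ∑ i : Fin m0, r (Z0 i ω - ts j ω))
          - ∫ t, h (relaxedCDF r ν0 t - relaxedCDF r ν1 t) ∂μ) ^ 2 ∂P
      = ∫ ω, ((1 / (T : ℝ)) * ∑ j : Fin T, F j ω - I) ^ 2 ∂P := by
    have hBs : ∀ t, relaxedCDF r ν0 t - relaxedCDF r ν1 t = B t := by
      intro t
      simp only [relaxedCDF, hBdef, hq0def, hq1def]
      ring
    have hc : ∫ t, h (relaxedCDF r ν0 t - relaxedCDF r ν1 t) ∂μ = I := by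
      have hpt : ∀ t, h (relaxedCDF r ν0 t - relaxedCDF r ν1 t) = g t := by
        intro t
        rw [hBs t]
        exact hHeq ⟨(hBmem t).1, (hBmem t).2⟩
      rw [hIdef]
      exact integral_congr_ae (ae_of_all _ hpt)
    refine integral_congr_ae (ae_of_all _ (fun ω => ?_))
    rw [hc]
    have hsum : (∑ j : Fin T,
          h ((1 / (m1 : ℝ)) * ∑ i : Fin m1, r (Z1 i ω - ts j ω)
            - (1 / (m0 : ℝ)) * ∑ i : Fin m0, r (Z0 i ω - ts j ω)))
        = ∑ j : Fin T, F j ω := by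
      refine Finset.sum_congr rfl (fun j _ => ?_)
      have hmem : S1 j ω - S0 j ω ∈ Icc (-1:ℝ) 1 :=
        ⟨by linarith [(hS1mem j ω).1, (hS0mem j ω).2],
          by linarith [(hS1mem j ω).2, (hS0mem j ω).1]⟩
      exact hHeq hmem
    dsimp only
    rw [hsum]
  rw [hgoal1]
  -- decomposition
  set D : Fin T → Ω → ℝ := fun j ω => F j ω - g (ts j ω) with hDdef
  set V : Fin T → Ω → ℝ := fun j ω => g (ts j ω) - I with hVdef
  have hDmeas : ∀ j, Measurable (D j) := fun j => (hFmeas j).sub (hgmeas.comp (htsm j))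
  have hVmeas : ∀ j, Measurable (V j) := fun j => (hgmeas.comp (htsm j)).sub measurable_const
  have hIb : |I - H 0| ≤ C_h := by
    have h1 : I ≤ H 0 + C_h := by
      rw [hIdef]
      calc ∫ t, g t ∂μ ≤ ∫ _t, (H 0 + C_h) ∂μ := by
            refine integral_mono (mc_integrable_of_bdd' (C := C_h + |H 0|)
              hgmeas.aestronglyMeasurable (fun t => ?_)) (integrable_const _) (fun t => ?_)
            · have := hgb t
              have := abs_sub_abs_le_abs_sub (g t) (H 0)
              nlinarith [abs_nonneg (g t), abs_nonneg (H 0)]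
            · have := abs_le.mp (hgb t); linarith [this.2]
        _ = H 0 + C_h := by simp
    have h2 : H 0 - C_h ≤ I := by
      rw [hIdef]
      calc H 0 - C_h = ∫ _t, (H 0 - C_h) ∂μ := by simp
        _ ≤ ∫ t, g t ∂μ := by
            refine integral_mono (integrable_const _) (mc_integrable_of_bdd' (C := C_h + |H 0|)
              hgmeas.aestronglyMeasurable (fun t => ?_)) (fun t => ?_)
            · have := hgb t
              have := abs_sub_abs_le_abs_sub (g t) (H 0)
              nlinarith [abs_nonneg (g t), abs_nonneg (H 0)]
            · have := abs_le.mp (hgb t); linarith [this.1]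
    rw [abs_le]; constructor <;> linarith
  have hDb : ∀ j ω, |D j ω| ≤ 2 * C_h := by
    intro j ω
    have h1 := hFb j ω
    have h2 := hgb (ts j ω)
    calc |D j ω| = |(F j ω - H 0) - (g (ts j ω) - H 0)| := by simp only [hDdef]; ring_nf
      _ ≤ |F j ω - H 0| + |g (ts j ω) - H 0| := abs_sub _ _
      _ ≤ 2 * C_h := by linarith
  have hVb : ∀ j ω, |V j ω| ≤ 2 * C_h := by
    intro j ω
    have h2 := hgb (ts j ω)
    calc |V j ω| = |(g (ts j ω) - H 0) - (I - H 0)| := by simp only [hVdef]; ring_nf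
      _ ≤ |g (ts j ω) - H 0| + |I - H 0| := abs_sub _ _
      _ ≤ 2 * C_h := by linarith
  -- joint laws
  have hfm : ∀ k, Measurable (Sum.elim Z0 (Sum.elim Z1 ts) k) := by
    rintro (i | i | j)
    exacts [hZ0m i, hZ1m i, htsm j]
  have hmap1 : ∀ (j : Fin T) (i i' : Fin m1), i ≠ i' →
      P.map (fun ω => ((Z1 i ω, Z1 i' ω), ts j ω)) = (ν1.prod ν1).prod μ := by
    intro j i i' hii
    have hpairind : IndepFun (fun ω => (Z1 i ω, Z1 i' ω)) (ts j) P :=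
      hindep.indepFun_prodMk hfm (Sum.inr (Sum.inl i)) (Sum.inr (Sum.inl i'))
        (Sum.inr (Sum.inr j)) (by simp) (by simp)
    have hind : IndepFun (Z1 i) (Z1 i') P :=
      hindep.indepFun (show (Sum.inr (Sum.inl i) : Fin m0 ⊕ (Fin m1 ⊕ Fin T))
        ≠ Sum.inr (Sum.inl i') by simp [hii])
    have hp2 : P.map (fun ω => (Z1 i ω, Z1 i' ω)) = ν1.prod ν1 := by
      rw [(indepFun_iff_map_prod_eq_prod_map_map (hZ1m i).aemeasurable
        (hZ1m i').aemeasurable).mp hind, hlaw1 i, hlaw1 i']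
    rw [(indepFun_iff_map_prod_eq_prod_map_map ((hZ1m i).prodMk (hZ1m i')).aemeasurable
      (htsm j).aemeasurable).mp hpairind, hp2, hlawt j]
  have hmap0 : ∀ (j : Fin T) (i i' : Fin m0), i ≠ i' →
      P.map (fun ω => ((Z0 i ω, Z0 i' ω), ts j ω)) = (ν0.prod ν0).prod μ := by
    intro j i i' hii
    have hpairind : IndepFun (fun ω => (Z0 i ω, Z0 i' ω)) (ts j) P :=
      hindep.indepFun_prodMk hfm (Sum.inl i) (Sum.inl i')
        (Sum.inr (Sum.inr j)) (by simp) (by simp)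
    have hind : IndepFun (Z0 i) (Z0 i') P :=
      hindep.indepFun (show (Sum.inl i : Fin m0 ⊕ (Fin m1 ⊕ Fin T))
        ≠ Sum.inl i' by simp [hii])
    have hp2 : P.map (fun ω => (Z0 i ω, Z0 i' ω)) = ν0.prod ν0 := by
      rw [(indepFun_iff_map_prod_eq_prod_map_map (hZ0m i).aemeasurable
        (hZ0m i').aemeasurable).mp hind, hlaw0 i, hlaw0 i']
    rw [(indepFun_iff_map_prod_eq_prod_map_map ((hZ0m i).prodMk (hZ0m i')).aemeasurable
      (htsm j).aemeasurable).mp hpairind, hp2, hlawt j]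
  -- Monte Carlo fluctuation bounds
  have hU1 : ∀ j : Fin T, ∫ ω, (S1 j ω - q1 (ts j ω)) ^ 2 ∂P ≤ 1 / (m1:ℝ) := fun j =>
    mc_U P ν1 μ r hrm hrmono hr01 m1 hm1 Z1 (ts j) hZ1m (htsm j) (hmap1 j)
  have hU0 : ∀ j : Fin T, ∫ ω, (S0 j ω - q0 (ts j ω)) ^ 2 ∂P ≤ 1 / (m0:ℝ) := fun j =>
    mc_U P ν0 μ r hrm hrmono hr01 m0 hm0 Z0 (ts j) hZ0m (htsm j) (hmap0 j)
  -- integrability facts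
  have hU1b : ∀ j ω, |S1 j ω - q1 (ts j ω)| ≤ 1 := by
    intro j ω
    have h1 := hS1mem j ω; have h2 := hq1mem (ts j ω)
    rw [abs_le]
    exact ⟨by linarith [h1.1, h2.2], by linarith [h1.2, h2.1]⟩
  have hU0b : ∀ j ω, |S0 j ω - q0 (ts j ω)| ≤ 1 := by
    intro j ω
    have h1 := hS0mem j ω; have h2 := hq0mem (ts j ω)
    rw [abs_le]
    exact ⟨by linarith [h1.1, h2.2], by linarith [h1.2, h2.1]⟩
  have hU1int : ∀ j, Integrable (fun ω => (S1 j ω - q1 (ts j ω)) ^ 2) P := fun j =>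
    mc_integrable_of_bdd' (C := 1)
      (((hS1meas j).sub (hq1meas.comp (htsm j))).pow_const 2).aestronglyMeasurable
      (fun ω => by rw [abs_pow]; simpa using pow_le_pow_left₀ (abs_nonneg _) (hU1b j ω) 2)
  have hU0int : ∀ j, Integrable (fun ω => (S0 j ω - q0 (ts j ω)) ^ 2) P := fun j =>
    mc_integrable_of_bdd' (C := 1)
      (((hS0meas j).sub (hq0meas.comp (htsm j))).pow_const 2).aestronglyMeasurable
      (fun ω => by rw [abs_pow]; simpa using pow_le_pow_left₀ (abs_nonneg _) (hU0b j ω) 2)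
  have hDint : ∀ j, Integrable (fun ω => (D j ω) ^ 2) P := fun j =>
    mc_integrable_of_bdd' (C := (2 * C_h) ^ 2)
      ((hDmeas j).pow_const 2).aestronglyMeasurable
      (fun ω => by rw [abs_pow]; exact pow_le_pow_left₀ (abs_nonneg _) (hDb j ω) 2)
  have hVint1 : ∀ j, Integrable (V j) P := fun j =>
    mc_integrable_of_bdd' (C := 2 * C_h) (hVmeas j).aestronglyMeasurable (hVb j)
  have hVint2 : ∀ j j', Integrable (fun ω => V j ω * V j' ω) P := fun j j' =>
    mc_integrable_of_bdd' (C := (2 * C_h) * (2 * C_h))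
      ((hVmeas j).mul (hVmeas j')).aestronglyMeasurable
      (fun ω => by
        rw [abs_mul]
        exact mul_le_mul (hVb j ω) (hVb j' ω) (abs_nonneg _) (by linarith))
  have hgint : Integrable g μ :=
    mc_integrable_of_bdd' (C := C_h + |H 0|) hgmeas.aestronglyMeasurable
      (fun t => by
        have h1 := hgb t
        have h2 := abs_sub_abs_le_abs_sub (g t) (H 0)
        nlinarith [abs_nonneg (g t), abs_nonneg (H 0)])
  -- per-threshold squared error
  have hDj2 : ∀ j, ∫ ω, (D j ω) ^ 2 ∂P ≤ 4 * C_h ^ 2 / min (m0:ℝ) (m1:ℝ) := by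
    intro j
    have hptD : ∀ ω, (D j ω) ^ 2
        ≤ C_h ^ 2 * (2 * (S1 j ω - q1 (ts j ω)) ^ 2 + 2 * (S0 j ω - q0 (ts j ω)) ^ 2) := by
      intro ω
      have e2 : (S1 j ω - S0 j ω) - B (ts j ω)
          = (S1 j ω - q1 (ts j ω)) - (S0 j ω - q0 (ts j ω)) := by
        simp only [hBdef]; ring
      have h1 : |D j ω| ≤ C_h * |(S1 j ω - q1 (ts j ω)) - (S0 j ω - q0 (ts j ω))| := by
        calc |D j ω| = |H (S1 j ω - S0 j ω) - H (B (ts j ω))| := rfl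
          _ ≤ C_h * |(S1 j ω - S0 j ω) - B (ts j ω)| := hHS _ _
          _ = C_h * |(S1 j ω - q1 (ts j ω)) - (S0 j ω - q0 (ts j ω))| := by rw [e2]
      have h2 := mc_lip_sq C_h (D j ω)
        ((S1 j ω - q1 (ts j ω)) - (S0 j ω - q0 (ts j ω))) hC h1
      exact h2.trans (mul_le_mul_of_nonneg_left
        (mc_sq_sub (S1 j ω - q1 (ts j ω)) (S0 j ω - q0 (ts j ω))) (sq_nonneg C_h))
    have hrhsint : Integrable (fun ω => C_h ^ 2 *
        (2 * (S1 j ω - q1 (ts j ω)) ^ 2 + 2 * (S0 j ω - q0 (ts j ω)) ^ 2)) P :=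
      (((hU1int j).const_mul 2).add ((hU0int j).const_mul 2)).const_mul _
    have l1 : 1 / (m1:ℝ) ≤ 1 / min (m0:ℝ) (m1:ℝ) :=
      one_div_le_one_div_of_le hmin (min_le_right _ _)
    have l0 : 1 / (m0:ℝ) ≤ 1 / min (m0:ℝ) (m1:ℝ) :=
      one_div_le_one_div_of_le hmin (min_le_left _ _)
    calc ∫ ω, (D j ω) ^ 2 ∂P
        ≤ ∫ ω, C_h ^ 2 * (2 * (S1 j ω - q1 (ts j ω)) ^ 2
            + 2 * (S0 j ω - q0 (ts j ω)) ^ 2) ∂P :=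
          integral_mono (hDint j) hrhsint hptD
      _ = C_h ^ 2 * (2 * (∫ ω, (S1 j ω - q1 (ts j ω)) ^ 2 ∂P)
            + 2 * (∫ ω, (S0 j ω - q0 (ts j ω)) ^ 2 ∂P)) := by
          rw [integral_const_mul, integral_add ((hU1int j).const_mul 2) ((hU0int j).const_mul 2),
            integral_const_mul, integral_const_mul]
      _ ≤ C_h ^ 2 * (2 * (1 / (m1:ℝ)) + 2 * (1 / (m0:ℝ))) := by
          apply mul_le_mul_of_nonneg_left _ (by positivity)
          have := hU1 j; have := hU0 j
          linarith
      _ ≤ C_h ^ 2 * (2 * (1 / min (m0:ℝ) (m1:ℝ)) + 2 * (1 / min (m0:ℝ) (m1:ℝ))) := by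
          apply mul_le_mul_of_nonneg_left _ (by positivity)
          linarith
      _ = 4 * C_h ^ 2 / min (m0:ℝ) (m1:ℝ) := by field_simp; ring
  -- measurable sums
  have hsumDmeas : Measurable (fun ω => ∑ j : Fin T, D j ω) :=
    Finset.measurable_sum _ (fun j _ => hDmeas j)
  have hsumVmeas : Measurable (fun ω => ∑ j : Fin T, V j ω) :=
    Finset.measurable_sum _ (fun j _ => hVmeas j)
  have intXsq : Integrable (fun ω => ((1/(T:ℝ)) * ∑ j : Fin T, D j ω) ^ 2) P :=
    mc_integrable_of_bdd' (C := (2 * C_h) ^ 2)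
      ((measurable_const.mul hsumDmeas).pow_const 2).aestronglyMeasurable
      (fun ω => by
        rw [abs_pow]
        exact pow_le_pow_left₀ (abs_nonneg _) (mc_avg_abs T hT _ _ (fun j => hDb j ω)) 2)
  have intYsq : Integrable (fun ω => ((1/(T:ℝ)) * ∑ j : Fin T, V j ω) ^ 2) P :=
    mc_integrable_of_bdd' (C := (2 * C_h) ^ 2)
      ((measurable_const.mul hsumVmeas).pow_const 2).aestronglyMeasurable
      (fun ω => by
        rw [abs_pow]
        exact pow_le_pow_left₀ (abs_nonneg _) (mc_avg_abs T hT _ _ (fun j => hVb j ω)) 2)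
  -- bound on the discretization term
  have hX2 : ∫ ω, ((1/(T:ℝ)) * ∑ j : Fin T, D j ω) ^ 2 ∂P
      ≤ 4 * C_h ^ 2 / min (m0:ℝ) (m1:ℝ) := by
    have hpt : ∀ ω, ((1/(T:ℝ)) * ∑ j : Fin T, D j ω) ^ 2
        ≤ (1/(T:ℝ)) * ∑ j : Fin T, (D j ω) ^ 2 := by
      intro ω
      have hcs : (∑ j : Fin T, D j ω) ^ 2 ≤ (T:ℝ) * ∑ j : Fin T, (D j ω) ^ 2 := by
        have := sq_sum_le_card_mul_sum_sq (s := (Finset.univ : Finset (Fin T)))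
          (f := fun j => D j ω)
        simpa using this
      calc ((1/(T:ℝ)) * ∑ j : Fin T, D j ω) ^ 2
          = (1/(T:ℝ)) ^ 2 * (∑ j : Fin T, D j ω) ^ 2 := by ring
        _ ≤ (1/(T:ℝ)) ^ 2 * ((T:ℝ) * ∑ j : Fin T, (D j ω) ^ 2) :=
            mul_le_mul_of_nonneg_left hcs (by positivity)
        _ = (1/(T:ℝ)) * ∑ j : Fin T, (D j ω) ^ 2 := by
            field_simp
    calc ∫ ω, ((1/(T:ℝ)) * ∑ j : Fin T, D j ω) ^ 2 ∂P
        ≤ ∫ ω, (1/(T:ℝ)) * ∑ j : Fin T, (D j ω) ^ 2 ∂P := by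
          refine integral_mono intXsq ?_ hpt
          exact (integrable_finset_sum _ (fun j _ => hDint j)).const_mul _
      _ = (1/(T:ℝ)) * ∑ j : Fin T, ∫ ω, (D j ω) ^ 2 ∂P := by
          rw [integral_const_mul, integral_finset_sum _ (fun j _ => hDint j)]
      _ ≤ (1/(T:ℝ)) * ∑ _j : Fin T, (4 * C_h ^ 2 / min (m0:ℝ) (m1:ℝ)) := by
          apply mul_le_mul_of_nonneg_left _ (by positivity)
          exact Finset.sum_le_sum (fun j _ => hDj2 j)
      _ = 4 * C_h ^ 2 / min (m0:ℝ) (m1:ℝ) := by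
          rw [Finset.sum_const, Finset.card_univ, Fintype.card_fin, nsmul_eq_mul]
          field_simp
  -- bound on the sampling term
  have hVdiag : ∀ j, ∫ ω, V j ω * V j ω ∂P ≤ C_h ^ 2 := by
    intro j
    have hφm : Measurable (fun t => (g t - I) ^ 2) :=
      (hgmeas.sub measurable_const).pow_const 2
    have hmapeq : ∫ ω, V j ω * V j ω ∂P = ∫ t, (g t - I) ^ 2 ∂μ := by
      have e : ∀ ω, V j ω * V j ω = (fun t => (g t - I) ^ 2) (ts j ω) := by
        intro ω; simp only [hVdef]; ring
      calc ∫ ω, V j ω * V j ω ∂P = ∫ ω, (fun t => (g t - I) ^ 2) (ts j ω) ∂P :=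
            integral_congr_ae (ae_of_all _ e)
        _ = ∫ t, (g t - I) ^ 2 ∂μ := by
            rw [← hlawt j, integral_map (htsm j).aemeasurable hφm.aestronglyMeasurable]
    rw [hmapeq]
    exact mc_meanSq μ g hgmeas (H 0) C_h hC hgb
  have hVzero : ∀ j, ∫ ω, V j ω ∂P = 0 := by
    intro j
    have e : ∀ ω, V j ω = (fun t => g t - I) (ts j ω) := fun ω => by simp only [hVdef]
    have : ∫ ω, V j ω ∂P = ∫ t, (g t - I) ∂μ := by
      calc ∫ ω, V j ω ∂P = ∫ ω, (fun t => g t - I) (ts j ω) ∂P :=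
            integral_congr_ae (ae_of_all _ e)
        _ = ∫ t, (g t - I) ∂μ := by
            rw [← hlawt j]
            exact (integral_map (htsm j).aemeasurable
              (hgmeas.sub measurable_const).aestronglyMeasurable).symm
    rw [this, integral_sub hgint (integrable_const _), integral_const]
    simp [hIdef]
  have hVoff : ∀ j j', j ≠ j' → ∫ ω, V j ω * V j' ω ∂P = 0 := by
    intro j j' hjj
    have hind : IndepFun (ts j) (ts j') P :=
      hindep.indepFun (show (Sum.inr (Sum.inr j) : Fin m0 ⊕ (Fin m1 ⊕ Fin T))
        ≠ Sum.inr (Sum.inr j') by simp [hjj])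
    have hVind : IndepFun (V j) (V j') P :=
      hind.comp (hgmeas.sub measurable_const) (hgmeas.sub measurable_const)
    calc ∫ ω, V j ω * V j' ω ∂P
        = (∫ ω, V j ω ∂P) * ∫ ω, V j' ω ∂P :=
          hVind.integral_fun_mul_eq_mul_integral (hVint1 j).aestronglyMeasurable (hVint1 j').aestronglyMeasurable
      _ = 0 := by rw [hVzero j, hVzero j']; ring
  have hY2 : ∫ ω, ((1/(T:ℝ)) * ∑ j : Fin T, V j ω) ^ 2 ∂P ≤ C_h ^ 2 / (T:ℝ) := by
    calc ∫ ω, ((1/(T:ℝ)) * ∑ j : Fin T, V j ω) ^ 2 ∂P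
        = ∫ ω, (1/(T:ℝ)) ^ 2 * (∑ j : Fin T, V j ω) ^ 2 ∂P := by
          refine integral_congr_ae (ae_of_all _ (fun ω => ?_)); ring
      _ = (1/(T:ℝ)) ^ 2 * ∫ ω, (∑ j : Fin T, V j ω) ^ 2 ∂P := integral_const_mul _ _
      _ = (1/(T:ℝ)) ^ 2 * ∑ j : Fin T, ∑ j' : Fin T, ∫ ω, V j ω * V j' ω ∂P := by
          congr 1
          have hptv : ∀ ω, (∑ j : Fin T, V j ω) ^ 2
              = ∑ j : Fin T, ∑ j' : Fin T, V j ω * V j' ω := by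
            intro ω; rw [sq, Finset.sum_mul_sum]
          simp_rw [hptv]
          rw [integral_finset_sum _ (fun j _ =>
            integrable_finset_sum _ (fun j' _ => hVint2 j j'))]
          exact Finset.sum_congr rfl (fun j _ =>
            integral_finset_sum _ (fun j' _ => hVint2 j j'))
      _ ≤ (1/(T:ℝ)) ^ 2 * ((T:ℝ) * C_h ^ 2) := by
          apply mul_le_mul_of_nonneg_left _ (by positivity)
          calc ∑ j : Fin T, ∑ j' : Fin T, ∫ ω, V j ω * V j' ω ∂P
              ≤ ∑ _j : Fin T, C_h ^ 2 := by
                refine Finset.sum_le_sum (fun j _ => ?_)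
                have heq : ∑ j' : Fin T, ∫ ω, V j ω * V j' ω ∂P
                    = ∫ ω, V j ω * V j ω ∂P :=
                  Finset.sum_eq_single j (fun j' _ hjj => hVoff j j' (Ne.symm hjj))
                    (fun habs => absurd (Finset.mem_univ j) habs)
                rw [heq]
                exact hVdiag j
            _ = (T:ℝ) * C_h ^ 2 := by
                rw [Finset.sum_const, Finset.card_univ, Fintype.card_fin, nsmul_eq_mul]
      _ = C_h ^ 2 / (T:ℝ) := by field_simp
  -- error decomposition
  have herr : ∀ ω, (1/(T:ℝ)) * ∑ j : Fin T, F j ω - I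
      = (1/(T:ℝ)) * ∑ j : Fin T, D j ω + (1/(T:ℝ)) * ∑ j : Fin T, V j ω := by
    intro ω
    have hs : ∀ j : Fin T, D j ω + V j ω = F j ω - I := by
      intro j; simp only [hDdef, hVdef]; ring
    have h1 : ∑ j : Fin T, (D j ω + V j ω) = ∑ j : Fin T, F j ω - (T:ℝ) * I := by
      simp_rw [hs]
      rw [Finset.sum_sub_distrib, Finset.sum_const, Finset.card_univ, Fintype.card_fin,
        nsmul_eq_mul]
    have h2 : ∑ j : Fin T, (D j ω + V j ω)
        = ∑ j : Fin T, D j ω + ∑ j : Fin T, V j ω := Finset.sum_add_distrib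
    have h3 : (1/(T:ℝ)) * (∑ j : Fin T, D j ω + ∑ j : Fin T, V j ω)
        = (1/(T:ℝ)) * ∑ j : Fin T, F j ω - I := by
      rw [← h2, h1]
      field_simp
    rw [← h3, mul_add]
  -- final assembly
  have intE2 : Integrable (fun ω => ((1/(T:ℝ)) * ∑ j : Fin T, F j ω - I) ^ 2) P := by
    refine mc_integrable_of_bdd' (C := (4 * C_h) ^ 2)
      (((measurable_const.mul (Finset.measurable_sum _ (fun j _ => hFmeas j))).sub
        measurable_const).pow_const 2).aestronglyMeasurable (fun ω => ?_)
    rw [abs_pow]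
    refine pow_le_pow_left₀ (abs_nonneg _) ?_ 2
    rw [herr ω]
    calc |(1/(T:ℝ)) * ∑ j : Fin T, D j ω + (1/(T:ℝ)) * ∑ j : Fin T, V j ω|
        ≤ |(1/(T:ℝ)) * ∑ j : Fin T, D j ω| + |(1/(T:ℝ)) * ∑ j : Fin T, V j ω| := abs_add_le _ _
      _ ≤ 2 * C_h + 2 * C_h := add_le_add
          (mc_avg_abs T hT _ _ (fun j => hDb j ω)) (mc_avg_abs T hT _ _ (fun j => hVb j ω))
      _ = 4 * C_h := by ring
  calc ∫ ω, ((1/(T:ℝ)) * ∑ j : Fin T, F j ω - I) ^ 2 ∂P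
      ≤ ∫ ω, (2 * ((1/(T:ℝ)) * ∑ j : Fin T, D j ω) ^ 2
          + 2 * ((1/(T:ℝ)) * ∑ j : Fin T, V j ω) ^ 2) ∂P := by
        refine integral_mono intE2 ((intXsq.const_mul 2).add (intYsq.const_mul 2))
          (fun ω => ?_)
        rw [herr ω]
        exact mc_sq2 _ _
    _ = 2 * ∫ ω, ((1/(T:ℝ)) * ∑ j : Fin T, D j ω) ^ 2 ∂P
        + 2 * ∫ ω, ((1/(T:ℝ)) * ∑ j : Fin T, V j ω) ^ 2 ∂P := by
        rw [integral_add (intXsq.const_mul 2) (intYsq.const_mul 2),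
          integral_const_mul, integral_const_mul]
    _ ≤ 2 * (4 * C_h ^ 2 / min (m0:ℝ) (m1:ℝ)) + 2 * (C_h ^ 2 / (T:ℝ)) :=
        add_le_add (mul_le_mul_of_nonneg_left hX2 (by norm_num))
          (mul_le_mul_of_nonneg_left hY2 (by norm_num))
    _ = 8 * C_h ^ 2 / min (m0:ℝ) (m1:ℝ) + 2 * C_h ^ 2 / (T:ℝ) := by ring
end

section
/- (Threshold-discrete estimator bound.) Let h : [−1,1] → [0,∞) be Lipschitz with constant C_h and maximum M_h := max_{a∈[−1,1]} h(a). Let ρ : [0,1] → [0,∞) be a Lipschitz probability density with Lipschitz constant C_ρ (so ∫_0^1 ρ = 1, hence ρ ≤ C_ρ + 1 on [0,1]). Let ν0, ν1 be Borel probability measures on ℝ, let r_s : ℝ → [0,1] be nondecreasing and Lipschitz on ℝ with Lip(r_s) ≤ s·C_r for some constant C_r > 0, and define F_k^{(s)}(t) := 1 − ∫ r_s(z−t) dν_k(z) and B_s(t) := F_0^{(s)}(t) − F_1^{(s)}(t). Let Z_0^{(1)},…,Z_0^{(m0)} be i.i.d. ∼ ν0 and Z_1^{(1)},…,Z_1^{(m1)}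 i.i.d. ∼ ν1, independent families, and define B̂(t) := (1/m1)Σ_i r_s(Z_1^{(i)} − t) − (1/m0)Σ_i r_s(Z_0^{(i)} − t). Let t_j = j/T, j = 0,…,T, be the uniform partition of [0,1]. Then, with C := (C_ρ+1)(2 s C_r C_h + M_h), E[( (1/T)Σ_{j=1}^T h(B̂(t_j)) ρ(t_j) − ∫_0^1 h(B_s(t)) ρ(t) dt )²] ≤ 8C_h²/min(m0,m1) + C²/(2T²). In particular, the estimation error tends to 0 in L²(P) as m0, m1, T → ∞ at rate O((1+s)/T) when T/(1+s) = c·√(min(m0,m1)) for a fixed constant c. -/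
open MeasureTheory Set ProbabilityTheory

section helpers

variable {Ω : Type*} [MeasurableSpace Ω] (P : MeasureTheory.Measure Ω)
  [MeasureTheory.IsProbabilityMeasure P]

lemma my_integrable_of_bound (f : Ω → ℝ) (hf : Measurable f) (Cf : ℝ)
    (hb : ∀ ω, |f ω| ≤ Cf) : Integrable f P :=
  (integrable_const Cf).mono' hf.aestronglyMeasurable (Filter.Eventually.of_forall hb)

lemma my_l2pair (f g : Ω → ℝ) (hf : Measurable f) (hg : Measurable g)
    (Cf Cg : ℝ) (hbf : ∀ ω, |f ω| ≤ Cf) (hbg : ∀ ω, |g ω| ≤ Cg)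
    (a b : ℝ) (ha : 0 ≤ a) (hb : 0 ≤ b)
    (hfa : ∫ ω, (f ω)^2 ∂P ≤ a^2) (hgb : ∫ ω, (g ω)^2 ∂P ≤ b^2) :
    ∫ ω, (f ω + g ω)^2 ∂P ≤ (a + b)^2 := by
  have hif : Integrable (fun ω => (f ω)^2) P := by
    refine my_integrable_of_bound P _ (hf.pow_const 2) (Cf^2) (fun ω => ?_)
    rw [abs_of_nonneg (sq_nonneg _)]
    exact sq_le_sq' (neg_le_of_neg_le (by nlinarith [abs_le.1 (hbf ω)])) (by nlinarith [abs_le.1 (hbf ω)])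
  have hig : Integrable (fun ω => (g ω)^2) P := by
    refine my_integrable_of_bound P _ (hg.pow_const 2) (Cg^2) (fun ω => ?_)
    rw [abs_of_nonneg (sq_nonneg _)]
    exact sq_le_sq' (neg_le_of_neg_le (by nlinarith [abs_le.1 (hbg ω)])) (by nlinarith [abs_le.1 (hbg ω)])
  have hifg : Integrable (fun ω => (f ω + g ω)^2) P := by
    refine my_integrable_of_bound P _ ((hf.add hg).pow_const 2) ((Cf+Cg)^2) (fun ω => ?_)
    rw [abs_of_nonneg (sq_nonneg _)]
    have h1 := abs_le.1 (hbf ω); have h2 := abs_le.1 (hbg ω)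
    exact sq_le_sq' (by nlinarith) (by nlinarith)
  have key : ∀ δ : ℝ, 0 < δ → ∫ ω, (f ω + g ω)^2 ∂P ≤ (a+b)^2 + δ*(a+b) := by
    intro δ hδ
    set u := a + δ with hu
    set v := b + δ with hv
    have hu0 : 0 < u := by positivity
    have hv0 : 0 < v := by positivity
    have hpt : ∀ ω, (f ω + g ω)^2 ≤ (1 + v/u) * (f ω)^2 + (1 + u/v) * (g ω)^2 := by
      intro ω
      have h2 : 2*(f ω * g ω) ≤ (v/u)*(f ω)^2 + (u/v)*(g ω)^2 := by
        rw [div_mul_eq_mul_div, div_mul_eq_mul_div, div_add_div _ _ (ne_of_gt hu0) (ne_of_gt hv0),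
          le_div_iff₀ (mul_pos hu0 hv0)]
        nlinarith [sq_nonneg (v * f ω - u * g ω)]
      nlinarith
    have hint : ∫ ω, (f ω + g ω)^2 ∂P ≤ ∫ ω, ((1 + v/u) * (f ω)^2 + (1 + u/v) * (g ω)^2) ∂P := by
      refine integral_mono hifg ?_ hpt
      exact ((hif.const_mul _).add (hig.const_mul _))
    rw [integral_add (hif.const_mul _) (hig.const_mul _), integral_const_mul, integral_const_mul]
      at hint
    have h3 : (1 + v/u) * ∫ ω, (f ω)^2 ∂P ≤ (1 + v/u) * a^2 := by
      apply mul_le_mul_of_nonneg_left hfa; positivity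
    have h4 : (1 + u/v) * ∫ ω, (g ω)^2 ∂P ≤ (1 + u/v) * b^2 := by
      apply mul_le_mul_of_nonneg_left hgb; positivity
    have h5 : (1 + v/u) * a^2 ≤ a^2 + a*v := by
      have : (v/u)*a^2 ≤ v*a := by
        rw [div_mul_eq_mul_div, div_le_iff₀ hu0]
        nlinarith [mul_nonneg (mul_nonneg hv0.le ha) hδ.le, hu]
      nlinarith
    have h6 : (1 + u/v) * b^2 ≤ b^2 + b*u := by
      have : (u/v)*b^2 ≤ u*b := by
        rw [div_mul_eq_mul_div, div_le_iff₀ hv0]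
        nlinarith [mul_nonneg (mul_nonneg hu0.le hb) hδ.le, hv]
      nlinarith
    have : a^2 + a*v + (b^2 + b*u) = (a+b)^2 + δ*(a+b) - 2*a*b + a*δ + b*δ + 2*a*b - δ*(a+b) := by
      rw [hu, hv]; ring
    nlinarith
  by_contra hcon
  push_neg at hcon
  rcases le_or_gt (a+b) 0 with hab | hab
  · have hab' : a + b = 0 := le_antisymm hab (by positivity)
    have := key 1 one_pos
    rw [hab'] at this hcon
    simp at this
    linarith
  · set d := ∫ ω, (f ω + g ω)^2 ∂P - (a+b)^2 with hd
    have hd0 : 0 < d := by simp only [hd]; linarith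
    have := key (d/(2*(a+b))) (by positivity)
    have heq : (d/(2*(a+b)))*(a+b) = d/2 := by field_simp
    rw [heq] at this
    simp only [hd] at this
    linarith

lemma my_l2sum {ι : Type*} [DecidableEq ι] (S : Finset ι) (f : ι → Ω → ℝ)
    (hmeas : ∀ i ∈ S, Measurable (f i)) (Cb : ι → ℝ) (a : ι → ℝ)
    (hCb : ∀ i ∈ S, 0 ≤ Cb i) (hb : ∀ i ∈ S, ∀ ω, |f i ω| ≤ Cb i)
    (ha : ∀ i ∈ S, 0 ≤ a i) (hia : ∀ i ∈ S, ∫ ω, (f i ω)^2 ∂P ≤ (a i)^2) :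
    ∫ ω, (∑ i ∈ S, f i ω)^2 ∂P ≤ (∑ i ∈ S, a i)^2 := by
  induction S using Finset.induction_on with
  | empty => simp
  | @insert j S hjS ih =>
    have hmS : ∀ i ∈ S, Measurable (f i) := fun i hi => hmeas i (Finset.mem_insert_of_mem hi)
    have hCbS : ∀ i ∈ S, 0 ≤ Cb i := fun i hi => hCb i (Finset.mem_insert_of_mem hi)
    have hbS : ∀ i ∈ S, ∀ ω, |f i ω| ≤ Cb i := fun i hi => hb i (Finset.mem_insert_of_mem hi)
    have haS : ∀ i ∈ S, 0 ≤ a i := fun i hi => ha i (Finset.mem_insert_of_mem hi)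
    have hiaS : ∀ i ∈ S, ∫ ω, (f i ω)^2 ∂P ≤ (a i)^2 :=
      fun i hi => hia i (Finset.mem_insert_of_mem hi)
    have hj := Finset.mem_insert_self j S
    simp only [Finset.sum_insert hjS]
    refine my_l2pair P (f j) (fun ω => ∑ i ∈ S, f i ω) (hmeas j hj)
      (Finset.measurable_sum S hmS) (Cb j) (∑ i ∈ S, Cb i) (hb j hj) (fun ω => ?_)
      (a j) (∑ i ∈ S, a i) (ha j hj) (Finset.sum_nonneg haS) (hia j hj) (ih hmS hCbS hbS haS hiaS)
    exact (Finset.abs_sum_le_sum_abs _ _).trans (Finset.sum_le_sum (fun i hi => hbS i hi ω))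

lemma my_meanvar (m : ℕ) (hm : 0 < m) (X : Fin m → Ω → ℝ)
    (hX : ∀ i, Measurable (X i)) (hb : ∀ i ω, X i ω ∈ Set.Icc (0:ℝ) 1)
    (κ : ℝ) (hκ01 : κ ∈ Set.Icc (0:ℝ) 1) (hκ : ∀ i, ∫ ω, X i ω ∂P = κ)
    (hind : ∀ i j, i ≠ j → IndepFun (X i) (X j) P) :
    ∫ ω, ((1/(m:ℝ)) * ∑ i, X i ω - κ)^2 ∂P ≤ 1/(4*(m:ℝ)) := by
  have hm' : (0:ℝ) < m := by exact_mod_cast hm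
  set W : Fin m → Ω → ℝ := fun i ω => X i ω - κ with hW
  have hWmeas : ∀ i, Measurable (W i) := fun i => (hX i).sub_const κ
  have hWb : ∀ i ω, |W i ω| ≤ 1 := by
    intro i ω
    have h1 := (hb i ω).1; have h2 := (hb i ω).2
    rw [abs_le]; constructor <;> simp only [hW] <;> nlinarith [hκ01.1, hκ01.2]
  have hWint : ∀ i, Integrable (W i) P := fun i => my_integrable_of_bound P _ (hWmeas i) 1 (hWb i)
  have hWmean : ∀ i, ∫ ω, W i ω ∂P = 0 := by
    intro i
    simp only [hW]
    rw [integral_sub (my_integrable_of_bound P _ (hX i) 1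
      (fun ω => abs_le.2 ⟨by nlinarith [(hb i ω).1], (hb i ω).2⟩)) (integrable_const κ)]
    simp [hκ i]
  have key : ∀ ω, ((1/(m:ℝ)) * ∑ i, X i ω - κ)^2 = (1/(m:ℝ))^2 * (∑ i, W i ω)^2 := by
    intro ω
    have : ∑ i, W i ω = (∑ i, X i ω) - m * κ := by
      simp only [hW, Finset.sum_sub_distrib, Finset.sum_const, Finset.card_univ, Fintype.card_fin,
        nsmul_eq_mul]
    rw [this]
    field_simp
    try ring
  simp_rw [key]
  rw [integral_const_mul]
  have hprod_int : ∀ (i j : Fin m), Integrable (fun ω => W i ω * W j ω) P := by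
    intro i j
    refine my_integrable_of_bound P _ ((hWmeas i).mul (hWmeas j)) 1 (fun ω => ?_)
    rw [abs_mul]
    calc |W i ω| * |W j ω| ≤ 1 * 1 := by
          exact mul_le_mul (hWb i ω) (hWb j ω) (abs_nonneg _) zero_le_one
      _ = 1 := by ring
  have hexp : ∫ ω, (∑ i, W i ω)^2 ∂P = ∑ i : Fin m, ∑ j : Fin m, ∫ ω, W i ω * W j ω ∂P := by
    have : ∀ ω, (∑ i, W i ω)^2 = ∑ i : Fin m, ∑ j : Fin m, W i ω * W j ω := by
      intro ω; rw [sq, Finset.sum_mul_sum]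
    simp_rw [this]
    rw [integral_finset_sum _ (fun i _ => integrable_finset_sum _ (fun j _ => hprod_int i j))]
    congr 1; funext i
    exact integral_finset_sum _ (fun j _ => hprod_int i j)
  have hoff : ∀ i j : Fin m, i ≠ j → ∫ ω, W i ω * W j ω ∂P = 0 := by
    intro i j hij
    have hWind : IndepFun (W i) (W j) P := by
      have := (hind i j hij).comp (φ := fun x : ℝ => x - κ) (ψ := fun x : ℝ => x - κ)
        (measurable_id.sub_const κ) (measurable_id.sub_const κ)
      exact this
    have := IndepFun.integral_mul_eq_mul_integral hWind (hWint i).aestronglyMeasurable (hWint j).aestronglyMeasurable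
    have heq : integral P (W i * W j) = ∫ ω, W i ω * W j ω ∂P := rfl
    rw [heq] at this
    rw [this, hWmean i, hWmean j, mul_zero]
  have hdiag : ∀ i : Fin m, ∫ ω, W i ω * W i ω ∂P ≤ 1/4 := by
    intro i
    have hXint : Integrable (X i) P := my_integrable_of_bound P _ (hX i) 1
      (fun ω => abs_le.2 ⟨by nlinarith [(hb i ω).1], (hb i ω).2⟩)
    have hXsqint : Integrable (fun ω => X i ω * X i ω) P := by
      refine my_integrable_of_bound P _ ((hX i).mul (hX i)) 1 (fun ω => ?_)
      rw [abs_mul]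
      nlinarith [abs_nonneg (X i ω), abs_le.2 ⟨by nlinarith [(hb i ω).1], (hb i ω).2⟩]
    have hXsq_le : ∫ ω, X i ω * X i ω ∂P ≤ κ := by
      rw [← hκ i]
      refine integral_mono hXsqint hXint (fun ω => ?_)
      nlinarith [(hb i ω).1, (hb i ω).2]
    have hexpand : ∀ ω, W i ω * W i ω = X i ω * X i ω - 2*κ*(X i ω) + κ^2 := by
      intro ω; simp only [hW]; ring
    simp_rw [hexpand]
    have h1 : Integrable (fun ω => X i ω * X i ω - 2*κ*X i ω) P :=
      hXsqint.sub (hXint.const_mul (2*κ))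
    have h2 : Integrable (fun ω => 2*κ*X i ω) P := hXint.const_mul (2*κ)
    rw [integral_add h1 (integrable_const _), integral_sub hXsqint h2, integral_const_mul,
      hκ i, integral_const]
    simp only [probReal_univ, smul_eq_mul, one_mul]
    nlinarith [hXsq_le, sq_nonneg (2*κ - 1)]
  have hsum : ∫ ω, (∑ i, W i ω)^2 ∂P ≤ m * (1/4) := by
    rw [hexp]
    have : ∀ i : Fin m, ∑ j : Fin m, ∫ ω, W i ω * W j ω ∂P ≤ 1/4 := by
      intro i
      rw [Finset.sum_eq_single i (fun j _ hji => hoff i j (Ne.symm hji)) (by simp)]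
      exact hdiag i
    calc ∑ i : Fin m, ∑ j : Fin m, ∫ ω, W i ω * W j ω ∂P ≤ ∑ _i : Fin m, (1/4 : ℝ) :=
          Finset.sum_le_sum (fun i _ => this i)
      _ = m * (1/4) := by simp [Finset.sum_const, Finset.card_univ]; try ring
  calc (1/(m:ℝ))^2 * ∫ ω, (∑ i, W i ω)^2 ∂P ≤ (1/(m:ℝ))^2 * (m * (1/4)) := by
        apply mul_le_mul_of_nonneg_left hsum; positivity
    _ = 1/(4*(m:ℝ)) := by field_simp

lemma my_sq_add_le (x y : ℝ) : (x+y)^2 ≤ 2*x^2 + 2*y^2 := by nlinarith [sq_nonneg (x-y)]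

lemma my_final (C_h sbar β mn T' Knum : ℝ) (hC : 0 ≤ C_h) (hsbar0 : 0 ≤ sbar)
    (hmn0 : 0 < mn) (hT' : 0 < T') (hβ0 : 0 ≤ β) (hK0 : 0 ≤ Knum)
    (hsbar_le : sbar ≤ 1/Real.sqrt mn) (hβK : β ≤ Knum/(2*T')) :
    (C_h*sbar + β)^2 ≤ 8*C_h^2/mn + Knum^2/(2*T'^2) := by
  have hsmn : 0 < Real.sqrt mn := Real.sqrt_pos.2 hmn0
  have h1 : (C_h*sbar)^2 ≤ C_h^2/mn := by
    have h2 : C_h*sbar ≤ C_h*(1/Real.sqrt mn) := mul_le_mul_of_nonneg_left hsbar_le hC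
    have h3 : 0 ≤ C_h*sbar := mul_nonneg hC hsbar0
    have h4 : (C_h*sbar)^2 ≤ (C_h*(1/Real.sqrt mn))^2 := by nlinarith
    refine h4.trans_eq ?_
    rw [mul_pow, div_pow, one_pow, Real.sq_sqrt hmn0.le]
    ring
  have h5 : β^2 ≤ (Knum/(2*T'))^2 := by
    have : 0 ≤ Knum/(2*T') := by positivity
    nlinarith
  have h6 : 2*(Knum/(2*T'))^2 = Knum^2/(2*T'^2) := by
    rw [div_pow]
    field_simp
  have h7 := my_sq_add_le (C_h*sbar) β
  have h9 : 0 ≤ C_h^2/mn := by positivity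
  have h10 : 8*C_h^2/mn = 8*(C_h^2/mn) := by ring
  linarith

end helpers

set_option maxHeartbeats 2000000

/-- **Threshold-discrete estimator bound.** For the uniform partition
`t_j = j/T` of `[0,1]`, the mean squared error of the threshold-discretized estimator
of `∫_0^1 h(B_s(t)) ρ(t) dt` is at most `8 C_h²/min(m0,m1) + C²/(2T²)` with
`C = (C_ρ+1)(2 s C_r C_h + M_h)`. -/
theorem stmt_6 {Ω : Type*} [MeasurableSpace Ω] (P : MeasureTheory.Measure Ω)
    [MeasureTheory.IsProbabilityMeasure P]
    (h : ℝ → ℝ) (C_h : ℝ) (hC : 0 ≤ C_h)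
    (hLip : LipschitzOnWith (Real.toNNReal C_h) h (Set.Icc (-1 : ℝ) 1))
    (hpos : ∀ x ∈ Set.Icc (-1 : ℝ) 1, 0 ≤ h x)
    (M_h : ℝ) (hMh : IsGreatest (h '' Set.Icc (-1 : ℝ) 1) M_h)
    (ρ : ℝ → ℝ) (C_ρ : ℝ) (hCρ : 0 ≤ C_ρ)
    (hρLip : LipschitzOnWith (Real.toNNReal C_ρ) ρ (Set.Icc (0 : ℝ) 1))
    (hρpos : ∀ t ∈ Set.Icc (0 : ℝ) 1, 0 ≤ ρ t)
    (hρdens : ∫ t in (0 : ℝ)..1, ρ t = 1)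
    (ν0 ν1 : MeasureTheory.Measure ℝ)
    [MeasureTheory.IsProbabilityMeasure ν0] [MeasureTheory.IsProbabilityMeasure ν1]
    (s C_r : ℝ) (hs : 0 < s) (hCr : 0 < C_r)
    (r : ℝ → ℝ) (hrmono : Monotone r)
    (hrLip : LipschitzWith (Real.toNNReal (s * C_r)) r)
    (hr01 : ∀ z, r z ∈ Set.Icc (0 : ℝ) 1)
    (m0 m1 T : ℕ) (hm0 : 0 < m0) (hm1 : 0 < m1) (hT : 0 < T)
    (Z0 : Fin m0 → Ω → ℝ) (Z1 : Fin m1 → Ω → ℝ)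
    (hZ0m : ∀ i, Measurable (Z0 i)) (hZ1m : ∀ i, Measurable (Z1 i))
    (hlaw0 : ∀ i, P.map (Z0 i) = ν0) (hlaw1 : ∀ i, P.map (Z1 i) = ν1)
    (hindep : ProbabilityTheory.iIndepFun
      (Sum.elim Z0 Z1) P) :
    ∫ ω, ((1 / (T : ℝ)) * ∑ j ∈ Finset.range T,
            h ((1 / (m1 : ℝ)) * ∑ i : Fin m1, r (Z1 i ω - ((j : ℝ) + 1) / (T : ℝ))
              - (1 / (m0 : ℝ)) * ∑ i : Fin m0, r (Z0 i ω - ((j : ℝ) + 1) / (T : ℝ)))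
            * ρ (((j : ℝ) + 1) / (T : ℝ))
          - ∫ t in (0 : ℝ)..1, h (relaxedCDF r ν0 t - relaxedCDF r ν1 t) * ρ t) ^ 2 ∂P
      ≤ 8 * C_h ^ 2 / min (m0 : ℝ) (m1 : ℝ)
        + ((C_ρ + 1) * (2 * s * C_r * C_h + M_h)) ^ 2 / (2 * (T : ℝ) ^ 2) := by
  classical
  have hT' : (0:ℝ) < (T:ℝ) := by exact_mod_cast hT
  have hm0' : (0:ℝ) < (m0:ℝ) := by exact_mod_cast hm0
  have hm1' : (0:ℝ) < (m1:ℝ) := by exact_mod_cast hm1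
  -- truncation maps
  set proj : ℝ → ℝ := fun x => max (-1) (min x 1) with hprojdef
  set proj01 : ℝ → ℝ := fun x => max 0 (min x 1) with hproj01def
  have hproj_mem : ∀ x, proj x ∈ Set.Icc (-1:ℝ) 1 := fun x =>
    ⟨le_max_left _ _, max_le (by norm_num) (min_le_right _ _)⟩
  have hproj_eq : ∀ x ∈ Set.Icc (-1:ℝ) 1, proj x = x := by
    intro x hx
    simp only [hprojdef]
    rw [min_eq_left hx.2, max_eq_right hx.1]
  have hproj_lip : ∀ x y : ℝ, |proj x - proj y| ≤ |x - y| := by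
    intro x y
    simp only [hprojdef]
    rw [max_comm (-1) (min x 1), max_comm (-1) (min y 1)]
    refine (abs_max_sub_max_le_abs _ _ _).trans ?_
    refine le_trans (abs_min_sub_min_le_max x 1 y 1) ?_
    simp
  have hproj01_mem : ∀ x, proj01 x ∈ Set.Icc (0:ℝ) 1 := fun x =>
    ⟨le_max_left _ _, max_le (by norm_num) (min_le_right _ _)⟩
  have hproj01_eq : ∀ x ∈ Set.Icc (0:ℝ) 1, proj01 x = x := by
    intro x hx
    simp only [hproj01def]
    rw [min_eq_left hx.2, max_eq_right hx.1]
  have hproj01_lip : ∀ x y : ℝ, |proj01 x - proj01 y| ≤ |x - y| := by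
    intro x y
    simp only [hproj01def]
    rw [max_comm 0 (min x 1), max_comm 0 (min y 1)]
    refine (abs_max_sub_max_le_abs _ _ _).trans ?_
    refine le_trans (abs_min_sub_min_le_max x 1 y 1) ?_
    simp
  set h' : ℝ → ℝ := fun x => h (proj x) with hh'def
  set ρ' : ℝ → ℝ := fun x => ρ (proj01 x) with hρ'def
  have hC_h_coe : ((Real.toNNReal C_h : NNReal) : ℝ) = C_h := Real.coe_toNNReal _ hC
  have hC_ρ_coe : ((Real.toNNReal C_ρ : NNReal) : ℝ) = C_ρ := Real.coe_toNNReal _ hCρ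
  have hh'lip : ∀ x y, |h' x - h' y| ≤ C_h * |x - y| := by
    intro x y
    have h1 := hLip.dist_le_mul _ (hproj_mem x) _ (hproj_mem y)
    rw [Real.dist_eq, Real.dist_eq, hC_h_coe] at h1
    refine h1.trans ?_
    exact mul_le_mul_of_nonneg_left (hproj_lip x y) hC
  have hρ'lip : ∀ x y, |ρ' x - ρ' y| ≤ C_ρ * |x - y| := by
    intro x y
    have h1 := hρLip.dist_le_mul _ (hproj01_mem x) _ (hproj01_mem y)
    rw [Real.dist_eq, Real.dist_eq, hC_ρ_coe] at h1
    refine h1.trans ?_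
    exact mul_le_mul_of_nonneg_left (hproj01_lip x y) hCρ
  have hh'cont : Continuous h' := by
    refine LipschitzWith.continuous (K := Real.toNNReal C_h) ?_
    refine LipschitzWith.of_dist_le_mul (fun x y => ?_)
    rw [Real.dist_eq, Real.dist_eq, hC_h_coe]
    exact hh'lip x y
  have hρ'cont : Continuous ρ' := by
    refine LipschitzWith.continuous (K := Real.toNNReal C_ρ) ?_
    refine LipschitzWith.of_dist_le_mul (fun x y => ?_)
    rw [Real.dist_eq, Real.dist_eq, hC_ρ_coe]
    exact hρ'lip x y
  have hρ'pos : ∀ x, 0 ≤ ρ' x := fun x => hρpos _ (hproj01_mem x)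
  have hh'mem : ∀ x, h' x ∈ Set.Icc 0 M_h := fun x =>
    ⟨hpos _ (hproj_mem x), hMh.2 ⟨proj x, hproj_mem x, rfl⟩⟩
  have hMh0 : 0 ≤ M_h := by
    obtain ⟨x, hx, hxe⟩ := hMh.1
    exact hxe ▸ hpos x hx
  -- r facts
  have hrmeas : Measurable r := hrmono.measurable
  have hsCr : (0:ℝ) < s * C_r := mul_pos hs hCr
  have hrlip : ∀ x y, |r x - r y| ≤ s * C_r * |x - y| := by
    intro x y
    have h1 := hrLip.dist_le_mul x y
    rw [Real.dist_eq, Real.dist_eq, Real.coe_toNNReal _ hsCr.le] at h1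
    exact h1
  have hrint0 : ∀ t : ℝ, Integrable (fun z => r (z - t)) ν0 := by
    intro t
    refine my_integrable_of_bound ν0 _ (hrmeas.comp (measurable_id.sub_const t)) 1 (fun z => ?_)
    exact abs_le.2 ⟨by nlinarith [(hr01 (z - t)).1], (hr01 (z - t)).2⟩
  have hrint1 : ∀ t : ℝ, Integrable (fun z => r (z - t)) ν1 := by
    intro t
    refine my_integrable_of_bound ν1 _ (hrmeas.comp (measurable_id.sub_const t)) 1 (fun z => ?_)
    exact abs_le.2 ⟨by nlinarith [(hr01 (z - t)).1], (hr01 (z - t)).2⟩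
  set κ0 : ℝ → ℝ := fun t => ∫ z, r (z - t) ∂ν0 with hκ0def
  set κ1 : ℝ → ℝ := fun t => ∫ z, r (z - t) ∂ν1 with hκ1def
  have hκ0mem : ∀ t, κ0 t ∈ Set.Icc (0:ℝ) 1 := by
    intro t
    constructor
    · exact integral_nonneg (fun z => (hr01 (z - t)).1)
    · calc κ0 t ≤ ∫ _z, (1:ℝ) ∂ν0 :=
            integral_mono (hrint0 t) (integrable_const 1) (fun z => (hr01 (z - t)).2)
        _ = 1 := by simp
  have hκ1mem : ∀ t, κ1 t ∈ Set.Icc (0:ℝ) 1 := by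
    intro t
    constructor
    · exact integral_nonneg (fun z => (hr01 (z - t)).1)
    · calc κ1 t ≤ ∫ _z, (1:ℝ) ∂ν1 :=
            integral_mono (hrint1 t) (integrable_const 1) (fun z => (hr01 (z - t)).2)
        _ = 1 := by simp
  set B : ℝ → ℝ := fun t => κ1 t - κ0 t with hBdef
  have hBmem : ∀ t, B t ∈ Set.Icc (-1:ℝ) 1 := by
    intro t
    have h1 := hκ0mem t; have h2 := hκ1mem t
    constructor
    · simp only [hBdef]; nlinarith [h1.1, h1.2, h2.1, h2.2]
    · simp only [hBdef]; nlinarith [h1.1, h1.2, h2.1, h2.2]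
  have hBeq : ∀ t, relaxedCDF r ν0 t - relaxedCDF r ν1 t = B t := by
    intro t
    simp only [relaxedCDF, hBdef, hκ0def, hκ1def]
    ring
  -- Lipschitz bound for B
  have hκshift : ∀ (ν : MeasureTheory.Measure ℝ), IsProbabilityMeasure ν →
      (∀ t : ℝ, Integrable (fun z => r (z - t)) ν) →
      ∀ t u : ℝ, t ≤ u →
      (∫ z, r (z - u) ∂ν) ≤ (∫ z, r (z - t) ∂ν) ∧
      (∫ z, r (z - t) ∂ν) - s * C_r * (u - t) ≤ ∫ z, r (z - u) ∂ν := by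
    intro ν hν hint t u htu
    constructor
    · exact integral_mono (hint u) (hint t) (fun z => hrmono (by linarith))
    · have hpt : ∀ z, r (z - t) - s * C_r * (u - t) ≤ r (z - u) := by
        intro z
        have h1 := hrlip (z - t) (z - u)
        have habs : |(z - t) - (z - u)| = u - t := by
          rw [show (z - t) - (z - u) = u - t by ring]
          exact abs_of_nonneg (by linarith)
        rw [habs] at h1
        have := (abs_le.1 h1).2
        linarith
      calc (∫ z, r (z - t) ∂ν) - s * C_r * (u - t)
          = ∫ z, (r (z - t) - s * C_r * (u - t)) ∂ν := by
            rw [integral_sub (hint t) (integrable_const _), integral_const]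
            simp
        _ ≤ ∫ z, r (z - u) ∂ν := integral_mono ((hint t).sub (integrable_const _)) (hint u) hpt
  have hBlipkey : ∀ t u : ℝ, t ≤ u → |B u - B t| ≤ s * C_r * (u - t) := by
    intro t u htu
    have h0 := hκshift ν0 inferInstance hrint0 t u htu
    have h1 := hκshift ν1 inferInstance hrint1 t u htu
    simp only [hBdef, hκ0def, hκ1def]
    rw [abs_le]
    constructor
    · nlinarith [h0.1, h0.2, h1.1, h1.2]
    · nlinarith [h0.1, h0.2, h1.1, h1.2]
  have hBlip : ∀ t u : ℝ, |B t - B u| ≤ s * C_r * |t - u| := by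
    intro t u
    rcases le_total t u with htu | htu
    · rw [abs_sub_comm, abs_sub_comm t u, abs_of_nonneg (sub_nonneg.2 htu)]
      exact hBlipkey t u htu
    · rw [abs_of_nonneg (sub_nonneg.2 htu)]
      exact hBlipkey u t htu
  have hBcont : Continuous B := by
    refine LipschitzWith.continuous (K := Real.toNNReal (s * C_r)) ?_
    refine LipschitzWith.of_dist_le_mul (fun x y => ?_)
    rw [Real.dist_eq, Real.dist_eq, Real.coe_toNNReal _ hsCr.le]
    exact hBlip x y
  -- grid
  set gp : ℕ → ℝ := fun j => (j:ℝ)/(T:ℝ) with hgpdef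
  set tj : ℕ → ℝ := fun j => ((j:ℝ) + 1)/(T:ℝ) with htjdef
  have hgp_succ : ∀ j : ℕ, gp (j+1) = tj j := by
    intro j
    simp only [hgpdef, htjdef]
    push_cast
    ring
  have hgp_mono : ∀ j : ℕ, gp j ≤ gp (j+1) := by
    intro j
    simp only [hgpdef]
    gcongr
    push_cast
    linarith
  have hlen : ∀ j : ℕ, gp (j+1) - gp j = 1/(T:ℝ) := by
    intro j
    simp only [hgpdef]
    rw [div_sub_div_same]
    push_cast
    ring_nf
  have htj_mem : ∀ j : ℕ, j < T → tj j ∈ Set.Icc (0:ℝ) 1 := by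
    intro j hj
    simp only [htjdef]
    constructor
    · positivity
    · rw [div_le_one hT']
      have : (j:ℝ) + 1 ≤ (T:ℝ) := by exact_mod_cast Nat.succ_le_of_lt hj
      linarith
  set gfun : ℝ → ℝ := fun t => h' (B t) * ρ' t with hgfundef
  have hgcont : Continuous gfun := (hh'cont.comp hBcont).mul hρ'cont
  have hI_eq : ∫ t in (0:ℝ)..1, h (relaxedCDF r ν0 t - relaxedCDF r ν1 t) * ρ t
      = ∫ t in (0:ℝ)..1, gfun t := by
    refine intervalIntegral.integral_congr (fun t ht => ?_)
    rw [Set.uIcc_of_le (by norm_num : (0:ℝ) ≤ 1)] at ht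
    simp only [hgfundef, hh'def, hρ'def]
    rw [hBeq t, hproj_eq _ (hBmem t), hproj01_eq _ ht]
  have hgp0 : gp 0 = 0 := by simp [hgpdef]
  have hgpT : gp T = 1 := by
    simp only [hgpdef]
    exact div_self hT'.ne'
  have hIsplit : ∫ t in (0:ℝ)..1, gfun t
      = ∑ j ∈ Finset.range T, ∫ t in gp j..gp (j+1), gfun t := by
    rw [intervalIntegral.sum_integral_adjacent_intervals
      (fun k _ => hgcont.intervalIntegrable _ _), hgp0, hgpT]
  set w : ℕ → ℝ := fun j => ∫ t in gp j..gp (j+1), ρ' t with hwdef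
  have hw0 : ∀ j, 0 ≤ w j := fun j =>
    intervalIntegral.integral_nonneg (hgp_mono j) (fun u _ => hρ'pos u)
  have hwsum : ∑ j ∈ Finset.range T, w j = 1 := by
    simp only [hwdef]
    rw [intervalIntegral.sum_integral_adjacent_intervals
      (fun k _ => hρ'cont.intervalIntegrable _ _), hgp0, hgpT]
    rw [show ∫ t in (0:ℝ)..1, ρ' t = ∫ t in (0:ℝ)..1, ρ t from
      intervalIntegral.integral_congr (fun t ht => by
        rw [Set.uIcc_of_le (by norm_num : (0:ℝ) ≤ 1)] at ht
        simp only [hρ'def]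
        rw [hproj01_eq _ ht])]
    exact hρdens
  -- stochastic part
  set Ihat : ℕ → Ω → ℝ := fun j ω =>
    (1/(m1:ℝ)) * ∑ i : Fin m1, r (Z1 i ω - tj j)
      - (1/(m0:ℝ)) * ∑ i : Fin m0, r (Z0 i ω - tj j) with hIhatdef
  have hmean1 : ∀ (t : ℝ) (ω : Ω), (1/(m1:ℝ)) * ∑ i : Fin m1, r (Z1 i ω - t) ∈ Set.Icc (0:ℝ) 1 := by
    intro t ω
    constructor
    · have hnn : (0:ℝ) ≤ ∑ i : Fin m1, r (Z1 i ω - t) :=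
        Finset.sum_nonneg (fun i _ => (hr01 _).1)
      exact mul_nonneg (one_div_nonneg.2 hm1'.le) hnn
    · have hsum : ∑ i : Fin m1, r (Z1 i ω - t) ≤ (m1:ℝ) := by
        calc ∑ i : Fin m1, r (Z1 i ω - t) ≤ ∑ _i : Fin m1, (1:ℝ) :=
              Finset.sum_le_sum (fun i _ => (hr01 _).2)
          _ = (m1:ℝ) := by simp
      calc (1/(m1:ℝ)) * ∑ i : Fin m1, r (Z1 i ω - t) ≤ (1/(m1:ℝ)) * (m1:ℝ) :=
            mul_le_mul_of_nonneg_left hsum (one_div_nonneg.2 hm1'.le)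
        _ = 1 := by field_simp
  have hmean0 : ∀ (t : ℝ) (ω : Ω), (1/(m0:ℝ)) * ∑ i : Fin m0, r (Z0 i ω - t) ∈ Set.Icc (0:ℝ) 1 := by
    intro t ω
    constructor
    · have hnn : (0:ℝ) ≤ ∑ i : Fin m0, r (Z0 i ω - t) :=
        Finset.sum_nonneg (fun i _ => (hr01 _).1)
      exact mul_nonneg (one_div_nonneg.2 hm0'.le) hnn
    · have hsum : ∑ i : Fin m0, r (Z0 i ω - t) ≤ (m0:ℝ) := by
        calc ∑ i : Fin m0, r (Z0 i ω - t) ≤ ∑ _i : Fin m0, (1:ℝ) :=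
              Finset.sum_le_sum (fun i _ => (hr01 _).2)
          _ = (m0:ℝ) := by simp
      calc (1/(m0:ℝ)) * ∑ i : Fin m0, r (Z0 i ω - t) ≤ (1/(m0:ℝ)) * (m0:ℝ) :=
            mul_le_mul_of_nonneg_left hsum (one_div_nonneg.2 hm0'.le)
        _ = 1 := by field_simp
  have hImem : ∀ j ω, Ihat j ω ∈ Set.Icc (-1:ℝ) 1 := by
    intro j ω
    have h1 := hmean1 (tj j) ω
    have h0 := hmean0 (tj j) ω
    simp only [hIhatdef]
    constructor
    · nlinarith [h1.1, h1.2, h0.1, h0.2]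
    · nlinarith [h1.1, h1.2, h0.1, h0.2]
  have hImeas : ∀ j, Measurable (Ihat j) := by
    intro j
    apply Measurable.sub
    · exact (Finset.measurable_sum _ (fun i _ =>
        hrmeas.comp ((hZ1m i).sub_const _))).const_mul _
    · exact (Finset.measurable_sum _ (fun i _ =>
        hrmeas.comp ((hZ0m i).sub_const _))).const_mul _
  -- variance bounds
  have hD1 : ∀ j : ℕ, ∫ ω, ((1/(m1:ℝ)) * ∑ i : Fin m1, r (Z1 i ω - tj j) - κ1 (tj j))^2 ∂P
      ≤ 1/(4*(m1:ℝ)) := by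
    intro j
    refine my_meanvar P m1 hm1 (fun i ω => r (Z1 i ω - tj j))
      (fun i => hrmeas.comp ((hZ1m i).sub_const _)) (fun i ω => hr01 _)
      (κ1 (tj j)) (hκ1mem _) (fun i => ?_) (fun i i' hii' => ?_)
    · rw [show κ1 (tj j) = ∫ x, r (x - tj j) ∂(P.map (Z1 i)) from by rw [hlaw1 i]]
      have hmeasf : AEStronglyMeasurable (fun x => r (x - tj j)) (P.map (Z1 i)) :=
        (hrmeas.comp (measurable_id.sub_const _)).aestronglyMeasurable
      exact (integral_map (hZ1m i).aemeasurable hmeasf).symm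
    · have hne : (Sum.inr i : Fin m0 ⊕ Fin m1) ≠ Sum.inr i' :=
        fun hc => hii' (Sum.inr_injective hc)
      have hbase := hindep.indepFun hne
      exact hbase.comp (hrmeas.comp (measurable_id.sub_const (tj j)))
        (hrmeas.comp (measurable_id.sub_const (tj j)))
  have hD0 : ∀ j : ℕ, ∫ ω, ((1/(m0:ℝ)) * ∑ i : Fin m0, r (Z0 i ω - tj j) - κ0 (tj j))^2 ∂P
      ≤ 1/(4*(m0:ℝ)) := by
    intro j
    refine my_meanvar P m0 hm0 (fun i ω => r (Z0 i ω - tj j))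
      (fun i => hrmeas.comp ((hZ0m i).sub_const _)) (fun i ω => hr01 _)
      (κ0 (tj j)) (hκ0mem _) (fun i => ?_) (fun i i' hii' => ?_)
    · rw [show κ0 (tj j) = ∫ x, r (x - tj j) ∂(P.map (Z0 i)) from by rw [hlaw0 i]]
      have hmeasf : AEStronglyMeasurable (fun x => r (x - tj j)) (P.map (Z0 i)) :=
        (hrmeas.comp (measurable_id.sub_const _)).aestronglyMeasurable
      exact (integral_map (hZ0m i).aemeasurable hmeasf).symm
    · have hne : (Sum.inl i : Fin m0 ⊕ Fin m1) ≠ Sum.inl i' :=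
        fun hc => hii' (Sum.inl_injective hc)
      have hbase := hindep.indepFun hne
      exact hbase.comp (hrmeas.comp (measurable_id.sub_const (tj j)))
        (hrmeas.comp (measurable_id.sub_const (tj j)))
  -- L2 bound on the deviation
  set sbar : ℝ := 1/(2*Real.sqrt (m1:ℝ)) + 1/(2*Real.sqrt (m0:ℝ)) with hsbardef
  have hsqrt1 : (0:ℝ) < Real.sqrt (m1:ℝ) := Real.sqrt_pos.2 hm1'
  have hsqrt0 : (0:ℝ) < Real.sqrt (m0:ℝ) := Real.sqrt_pos.2 hm0'
  have hsbar0 : 0 ≤ sbar := by positivity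
  have hDelta : ∀ j : ℕ, ∫ ω, (Ihat j ω - B (tj j))^2 ∂P ≤ sbar^2 := by
    intro j
    have hid : ∀ ω, Ihat j ω - B (tj j)
        = ((1/(m1:ℝ)) * ∑ i : Fin m1, r (Z1 i ω - tj j) - κ1 (tj j))
          + (-((1/(m0:ℝ)) * ∑ i : Fin m0, r (Z0 i ω - tj j) - κ0 (tj j))) := by
      intro ω
      simp only [hIhatdef, hBdef]
      ring
    simp_rw [hid]
    have hm1meas : Measurable (fun ω => (1/(m1:ℝ)) * ∑ i : Fin m1, r (Z1 i ω - tj j) - κ1 (tj j)) :=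
      ((Finset.measurable_sum _ (fun i _ =>
        hrmeas.comp ((hZ1m i).sub_const _))).const_mul _).sub_const _
    have hm0meas : Measurable (fun ω => -((1/(m0:ℝ)) * ∑ i : Fin m0, r (Z0 i ω - tj j) - κ0 (tj j))) :=
      (((Finset.measurable_sum _ (fun i _ =>
        hrmeas.comp ((hZ0m i).sub_const _))).const_mul _).sub_const _).neg
    refine my_l2pair P _ _ hm1meas hm0meas 1 1
      (fun ω => ?_) (fun ω => ?_) (1/(2*Real.sqrt (m1:ℝ))) (1/(2*Real.sqrt (m0:ℝ)))
      (by positivity) (by positivity) ?_ ?_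
    · have ha := hmean1 (tj j) ω
      have hb := hκ1mem (tj j)
      rw [abs_le]
      constructor
      · nlinarith [ha.1, ha.2, hb.1, hb.2]
      · nlinarith [ha.1, ha.2, hb.1, hb.2]
    · have ha := hmean0 (tj j) ω
      have hb := hκ0mem (tj j)
      rw [abs_le]
      constructor
      · nlinarith [ha.1, ha.2, hb.1, hb.2]
      · nlinarith [ha.1, ha.2, hb.1, hb.2]
    · rw [show (1/(2*Real.sqrt (m1:ℝ)))^2 = 1/(4*(m1:ℝ)) from by
        rw [div_pow, one_pow, mul_pow, Real.sq_sqrt hm1'.le]; norm_num]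
      exact hD1 j
    · rw [show (1/(2*Real.sqrt (m0:ℝ)))^2 = 1/(4*(m0:ℝ)) from by
        rw [div_pow, one_pow, mul_pow, Real.sq_sqrt hm0'.le]; norm_num]
      simp_rw [neg_sq]
      exact hD0 j
  -- per-j Y bounds
  set Y : ℕ → Ω → ℝ := fun j ω => h' (Ihat j ω) - h' (B (tj j)) with hYdef
  have hYmeas : ∀ j, Measurable (Y j) :=
    fun j => (hh'cont.measurable.comp (hImeas j)).sub_const _
  have hYb : ∀ j ω, |Y j ω| ≤ M_h := by
    intro j ω
    have h1 := hh'mem (Ihat j ω)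
    have h2 := hh'mem (B (tj j))
    rw [abs_le]
    exact ⟨by simp only [hYdef]; nlinarith [h1.1, h1.2, h2.1, h2.2],
      by simp only [hYdef]; nlinarith [h1.1, h1.2, h2.1, h2.2]⟩
  have hYsq : ∀ j : ℕ, ∫ ω, (Y j ω)^2 ∂P ≤ (C_h * sbar)^2 := by
    intro j
    have hpt : ∀ ω, (Y j ω)^2 ≤ C_h^2 * (Ihat j ω - B (tj j))^2 := by
      intro ω
      have h1 := hh'lip (Ihat j ω) (B (tj j))
      have h2 : |Y j ω|^2 ≤ (C_h * |Ihat j ω - B (tj j)|)^2 := by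
        apply sq_le_sq' _ h1
        nlinarith [abs_nonneg (Y j ω)]
      rw [sq_abs] at h2
      calc (Y j ω)^2 ≤ (C_h * |Ihat j ω - B (tj j)|)^2 := h2
        _ = C_h^2 * (Ihat j ω - B (tj j))^2 := by rw [mul_pow, sq_abs]
    have hint1 : Integrable (fun ω => (Y j ω)^2) P := by
      refine my_integrable_of_bound P _ ((hYmeas j).pow_const 2) (M_h^2) (fun ω => ?_)
      rw [abs_of_nonneg (sq_nonneg _)]
      exact sq_le_sq' (by nlinarith [abs_le.1 (hYb j ω)]) (by nlinarith [abs_le.1 (hYb j ω)])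
    have hint2 : Integrable (fun ω => C_h^2 * (Ihat j ω - B (tj j))^2) P := by
      refine (my_integrable_of_bound P _ (((hImeas j).sub_const _).pow_const 2) 4
        (fun ω => ?_)).const_mul _
      have hi := hImem j ω
      have hb := hBmem (tj j)
      rw [abs_of_nonneg (sq_nonneg _)]
      nlinarith [hi.1, hi.2, hb.1, hb.2]
    calc ∫ ω, (Y j ω)^2 ∂P ≤ ∫ ω, C_h^2 * (Ihat j ω - B (tj j))^2 ∂P :=
          integral_mono hint1 hint2 hpt
      _ = C_h^2 * ∫ ω, (Ihat j ω - B (tj j))^2 ∂P := integral_const_mul _ _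
      _ ≤ C_h^2 * sbar^2 := mul_le_mul_of_nonneg_left (hDelta j) (sq_nonneg _)
      _ = (C_h * sbar)^2 := by ring
  -- deterministic error terms
  have hintlem : ∀ x y : ℝ, (∫ t in x..y, (y - t)) = (y - x)^2/2 := by
    intro x y
    have h1 : (∫ t in x..y, (y - t)) = (∫ _t in x..y, y) - ∫ t in x..y, t :=
      intervalIntegral.integral_sub (intervalIntegrable_const) intervalIntegral.intervalIntegrable_id
    rw [h1, intervalIntegral.integral_const, integral_id, smul_eq_mul]
    ring
  set e : ℕ → ℝ := fun j => ρ' (tj j) / (T:ℝ) - w j with hedef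
  have he : ∀ j : ℕ, |e j| ≤ C_ρ/(2*(T:ℝ)^2) := by
    intro j
    have hconst : ρ' (tj j) / (T:ℝ) = ∫ _t in gp j..gp (j+1), ρ' (tj j) := by
      rw [intervalIntegral.integral_const, smul_eq_mul, hlen j]
      ring
    have heq : e j = ∫ t in gp j..gp (j+1), (ρ' (tj j) - ρ' t) := by
      rw [intervalIntegral.integral_sub intervalIntegrable_const
        (hρ'cont.intervalIntegrable _ _)]
      simp only [hedef, hwdef]
      rw [hconst]
    rw [heq]
    calc |∫ t in gp j..gp (j+1), (ρ' (tj j) - ρ' t)|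
        ≤ ∫ t in gp j..gp (j+1), |ρ' (tj j) - ρ' t| :=
          intervalIntegral.abs_integral_le_integral_abs (hgp_mono j)
      _ ≤ ∫ t in gp j..gp (j+1), C_ρ * (gp (j+1) - t) := by
          refine intervalIntegral.integral_mono_on (hgp_mono j)
            ((continuous_const.sub hρ'cont).abs.intervalIntegrable _ _)
            ((continuous_const.mul (continuous_const.sub continuous_id)).intervalIntegrable _ _)
            (fun t ht => ?_)
          have h1 := hρ'lip (tj j) t
          have h2 : |tj j - t| = gp (j+1) - t := by
            rw [← hgp_succ j, abs_of_nonneg (by linarith [ht.2] : (0:ℝ) ≤ gp (j+1) - t)]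
          rw [h2] at h1
          exact h1
      _ = C_ρ * ((gp (j+1) - gp j)^2/2) := by
          rw [intervalIntegral.integral_const_mul, hintlem]
      _ = C_ρ/(2*(T:ℝ)^2) := by
          rw [hlen j, div_pow, one_pow]
          ring
  set r0 : ℕ → ℝ := fun j => h' (B (tj j)) * w j - ∫ t in gp j..gp (j+1), gfun t with hr0def
  have hr0b : ∀ j : ℕ, |r0 j| ≤ (s*C_r*C_h/(T:ℝ)) * w j := by
    intro j
    have heq : r0 j = ∫ t in gp j..gp (j+1), (h' (B (tj j)) - h' (B t)) * ρ' t := by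
      have h1 : ∀ t, (h' (B (tj j)) - h' (B t)) * ρ' t
          = h' (B (tj j)) * ρ' t - gfun t := by
        intro t
        simp only [hgfundef]
        ring
      simp_rw [h1]
      rw [intervalIntegral.integral_sub (f := fun t => h' (B (tj j)) * ρ' t) (g := gfun) ((continuous_const.mul hρ'cont).intervalIntegrable _ _)
        (hgcont.intervalIntegrable _ _), intervalIntegral.integral_const_mul]
    rw [heq]
    calc |∫ t in gp j..gp (j+1), (h' (B (tj j)) - h' (B t)) * ρ' t|
        ≤ ∫ t in gp j..gp (j+1), |(h' (B (tj j)) - h' (B t)) * ρ' t| :=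
          intervalIntegral.abs_integral_le_integral_abs (hgp_mono j)
      _ ≤ ∫ t in gp j..gp (j+1), (s*C_r*C_h/(T:ℝ)) * ρ' t := by
          refine intervalIntegral.integral_mono_on (hgp_mono j)
            (((continuous_const.sub (hh'cont.comp hBcont)).mul hρ'cont).abs.intervalIntegrable _ _)
            ((continuous_const.mul hρ'cont).intervalIntegrable _ _)
            (fun t ht => ?_)
          rw [abs_mul, abs_of_nonneg (hρ'pos t)]
          refine mul_le_mul_of_nonneg_right ?_ (hρ'pos t)
          have h1 := hh'lip (B (tj j)) (B t)
          have h2 := hBlip (tj j) t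
          have h3 : |tj j - t| ≤ 1/(T:ℝ) := by
            rw [← hgp_succ j, abs_of_nonneg (by linarith [ht.2] : (0:ℝ) ≤ gp (j+1) - t)]
            have := ht.1
            have := hlen j
            linarith
          calc |h' (B (tj j)) - h' (B t)| ≤ C_h * |B (tj j) - B t| := h1
            _ ≤ C_h * (s * C_r * |tj j - t|) := mul_le_mul_of_nonneg_left h2 hC
            _ ≤ C_h * (s * C_r * (1/(T:ℝ))) := by
                refine mul_le_mul_of_nonneg_left ?_ hC
                exact mul_le_mul_of_nonneg_left h3 hsCr.le
            _ = s*C_r*C_h/(T:ℝ) := by ring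
      _ = (s*C_r*C_h/(T:ℝ)) * w j := by
          rw [intervalIntegral.integral_const_mul]
  -- assembly
  set Xf : Ω → ℝ := fun ω => ∑ j ∈ Finset.range T, w j * Y j ω with hXfdef
  set Vf : Ω → ℝ := fun ω =>
    (∑ j ∈ Finset.range T, e j * h' (Ihat j ω)) + ∑ j ∈ Finset.range T, r0 j with hVfdef
  have hXfmeas : Measurable Xf :=
    Finset.measurable_sum _ (fun j _ => (hYmeas j).const_mul _)
  have hVfmeas : Measurable Vf :=
    (Finset.measurable_sum _ (fun j _ =>
      ((hh'cont.measurable.comp (hImeas j)).const_mul _))).add_const _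
  have hXfb : ∀ ω, |Xf ω| ≤ ∑ j ∈ Finset.range T, w j * M_h := by
    intro ω
    refine (Finset.abs_sum_le_sum_abs _ _).trans (Finset.sum_le_sum (fun j _ => ?_))
    rw [abs_mul, abs_of_nonneg (hw0 j)]
    exact mul_le_mul_of_nonneg_left (hYb j ω) (hw0 j)
  have hXfsq : ∫ ω, (Xf ω)^2 ∂P ≤ (C_h * sbar)^2 := by
    have := my_l2sum P (Finset.range T) (fun j ω => w j * Y j ω)
      (fun j _ => (hYmeas j).const_mul _)
      (fun j => w j * M_h) (fun j => w j * (C_h * sbar))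
      (fun j _ => mul_nonneg (hw0 j) hMh0)
      (fun j _ ω => by
        rw [abs_mul, abs_of_nonneg (hw0 j)]
        exact mul_le_mul_of_nonneg_left (hYb j ω) (hw0 j))
      (fun j _ => mul_nonneg (hw0 j) (mul_nonneg hC hsbar0))
      (fun j _ => by
        have hpw : ∀ ω : Ω, (w j * Y j ω)^2 = w j^2 * (Y j ω)^2 := fun ω => by ring
        simp_rw [hpw]
        rw [integral_const_mul, show (w j * (C_h * sbar))^2 = w j^2 * (C_h*sbar)^2 from by ring]
        exact mul_le_mul_of_nonneg_left (hYsq j) (sq_nonneg _))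
    refine le_trans this ?_
    rw [← Finset.sum_mul, hwsum, one_mul]
  set β : ℝ := C_ρ*M_h/(2*(T:ℝ)) + s*C_r*C_h/(T:ℝ) with hβdef
  have hβ0 : 0 ≤ β := by positivity
  have hVfb : ∀ ω, |Vf ω| ≤ β := by
    intro ω
    have h1 : |∑ j ∈ Finset.range T, e j * h' (Ihat j ω)| ≤ C_ρ*M_h/(2*(T:ℝ)) := by
      refine (Finset.abs_sum_le_sum_abs _ _).trans ?_
      have hper : ∀ j ∈ Finset.range T, |e j * h' (Ihat j ω)| ≤ C_ρ/(2*(T:ℝ)^2) * M_h := by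
        intro j _
        rw [abs_mul]
        refine mul_le_mul (he j) ?_ (abs_nonneg _) (by positivity)
        rw [abs_of_nonneg (hh'mem _).1]
        exact (hh'mem _).2
      refine (Finset.sum_le_sum hper).trans ?_
      rw [Finset.sum_const, Finset.card_range, nsmul_eq_mul]
      rw [show (T:ℝ) * (C_ρ/(2*(T:ℝ)^2) * M_h) = C_ρ*M_h/(2*(T:ℝ)) * ((T:ℝ)*(T:ℝ)/(T:ℝ)^2) by
        field_simp]
      rw [show (T:ℝ)*(T:ℝ)/(T:ℝ)^2 = 1 by rw [← sq]; exact div_self (by positivity)]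
      rw [mul_one]
    have h2 : |∑ j ∈ Finset.range T, r0 j| ≤ s*C_r*C_h/(T:ℝ) := by
      refine (Finset.abs_sum_le_sum_abs _ _).trans ?_
      refine (Finset.sum_le_sum (fun j _ => hr0b j)).trans ?_
      rw [← Finset.mul_sum, hwsum, mul_one]
    calc |Vf ω| ≤ |∑ j ∈ Finset.range T, e j * h' (Ihat j ω)| + |∑ j ∈ Finset.range T, r0 j| := by
          simp only [hVfdef]
          exact abs_add_le _ _
      _ ≤ β := by rw [hβdef]; exact add_le_add h1 h2
  -- the key pointwise identity
  have hmain_id : ∀ ω, (1 / (T : ℝ)) * (∑ j ∈ Finset.range T,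
        h ((1 / (m1 : ℝ)) * ∑ i : Fin m1, r (Z1 i ω - ((j : ℝ) + 1) / (T : ℝ))
          - (1 / (m0 : ℝ)) * ∑ i : Fin m0, r (Z0 i ω - ((j : ℝ) + 1) / (T : ℝ)))
        * ρ (((j : ℝ) + 1) / (T : ℝ)))
      - (∫ t in (0 : ℝ)..1, h (relaxedCDF r ν0 t - relaxedCDF r ν1 t) * ρ t)
      = Xf ω + Vf ω := by
    intro ω
    have hterm : ∀ j ∈ Finset.range T,
        h ((1 / (m1 : ℝ)) * ∑ i : Fin m1, r (Z1 i ω - ((j : ℝ) + 1) / (T : ℝ))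
          - (1 / (m0 : ℝ)) * ∑ i : Fin m0, r (Z0 i ω - ((j : ℝ) + 1) / (T : ℝ)))
        * ρ (((j : ℝ) + 1) / (T : ℝ)) = h' (Ihat j ω) * ρ' (tj j) := by
      intro j hj
      have hj' : j < T := Finset.mem_range.1 hj
      have e1 : h ((1 / (m1 : ℝ)) * ∑ i : Fin m1, r (Z1 i ω - ((j : ℝ) + 1) / (T : ℝ))
          - (1 / (m0 : ℝ)) * ∑ i : Fin m0, r (Z0 i ω - ((j : ℝ) + 1) / (T : ℝ)))
          = h' (Ihat j ω) := by
        simp only [hh'def, hIhatdef, htjdef]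
        rw [hproj_eq _ (by simpa [hIhatdef, htjdef] using hImem j ω)]
      have e2 : ρ (((j : ℝ) + 1) / (T : ℝ)) = ρ' (tj j) := by
        simp only [hρ'def, htjdef]
        rw [hproj01_eq _ (by simpa [htjdef] using htj_mem j hj')]
      rw [e1, e2]
    rw [Finset.sum_congr rfl hterm, hI_eq, hIsplit]
    have hXV : Xf ω + Vf ω = ∑ j ∈ Finset.range T,
        (w j * Y j ω + e j * h' (Ihat j ω) + r0 j) := by
      simp only [hXfdef, hVfdef]
      rw [← Finset.sum_add_distrib, ← Finset.sum_add_distrib]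
      exact Finset.sum_congr rfl (fun j _ => by ring)
    rw [hXV]
    have hper : ∀ j ∈ Finset.range T,
        w j * Y j ω + e j * h' (Ihat j ω) + r0 j
        = h' (Ihat j ω) * ρ' (tj j) / (T:ℝ) - ∫ t in gp j..gp (j+1), gfun t := by
      intro j _
      simp only [hYdef, hedef, hr0def]
      ring
    rw [Finset.sum_congr rfl hper, Finset.sum_sub_distrib]
    rw [Finset.mul_sum]
    congr 1
    refine Finset.sum_congr rfl (fun j _ => ?_)
    ring
  -- conclusion
  have hgoal1 : ∫ ω, ((1 / (T : ℝ)) * (∑ j ∈ Finset.range T,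
        h ((1 / (m1 : ℝ)) * ∑ i : Fin m1, r (Z1 i ω - ((j : ℝ) + 1) / (T : ℝ))
          - (1 / (m0 : ℝ)) * ∑ i : Fin m0, r (Z0 i ω - ((j : ℝ) + 1) / (T : ℝ)))
        * ρ (((j : ℝ) + 1) / (T : ℝ)))
      - (∫ t in (0 : ℝ)..1, h (relaxedCDF r ν0 t - relaxedCDF r ν1 t) * ρ t)) ^ 2 ∂P
      = ∫ ω, (Xf ω + Vf ω)^2 ∂P := by
    refine integral_congr_ae (Filter.Eventually.of_forall (fun ω => ?_))
    dsimp only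
    rw [hmain_id ω]
  rw [hgoal1]
  have hfinal : ∫ ω, (Xf ω + Vf ω)^2 ∂P ≤ (C_h * sbar + β)^2 := by
    refine my_l2pair P Xf Vf hXfmeas hVfmeas (∑ j ∈ Finset.range T, w j * M_h) β
      hXfb hVfb (C_h * sbar) β (mul_nonneg hC hsbar0) hβ0 hXfsq ?_
    calc ∫ ω, (Vf ω)^2 ∂P ≤ ∫ _ω, β^2 ∂P := by
          refine integral_mono ?_ (integrable_const _) (fun ω => ?_)
          · refine my_integrable_of_bound P _ (hVfmeas.pow_const 2) (β^2) (fun ω => ?_)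
            rw [abs_of_nonneg (sq_nonneg _)]
            exact sq_le_sq' (by nlinarith [abs_le.1 (hVfb ω)]) (by nlinarith [abs_le.1 (hVfb ω)])
          · exact sq_le_sq' (by nlinarith [abs_le.1 (hVfb ω)]) (by nlinarith [abs_le.1 (hVfb ω)])
      _ = β^2 := by
          rw [integral_const]
          simp
  refine hfinal.trans ?_
  -- final elementary estimate
  set mn : ℝ := min (m0:ℝ) (m1:ℝ) with hmndef
  have hmn0 : 0 < mn := lt_min hm0' hm1'
  have hsbar_le : sbar ≤ 1/Real.sqrt mn := by
    have hs0 : Real.sqrt mn ≤ Real.sqrt (m0:ℝ) := Real.sqrt_le_sqrt (min_le_left _ _)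
    have hs1 : Real.sqrt mn ≤ Real.sqrt (m1:ℝ) := Real.sqrt_le_sqrt (min_le_right _ _)
    have hsmn : 0 < Real.sqrt mn := Real.sqrt_pos.2 hmn0
    have h1 : 1/(2*Real.sqrt (m1:ℝ)) ≤ 1/(2*Real.sqrt mn) := by
      apply one_div_le_one_div_of_le (by positivity)
      linarith
    have h0 : 1/(2*Real.sqrt (m0:ℝ)) ≤ 1/(2*Real.sqrt mn) := by
      apply one_div_le_one_div_of_le (by positivity)
      linarith
    calc sbar ≤ 1/(2*Real.sqrt mn) + 1/(2*Real.sqrt mn) := by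
          rw [hsbardef]; exact add_le_add h1 h0
      _ = 1/Real.sqrt mn := by
          rw [div_add_div _ _ (by positivity : (2*Real.sqrt mn) ≠ 0)
            (by positivity : (2*Real.sqrt mn) ≠ 0), div_eq_div_iff (by positivity) (by positivity)]
          ring
  have hKnum0 : 0 ≤ (C_ρ+1)*(2*s*C_r*C_h + M_h) :=
    mul_nonneg (by linarith) (add_nonneg (by positivity) hMh0)
  have hβK : β ≤ ((C_ρ+1)*(2*s*C_r*C_h + M_h))/(2*(T:ℝ)) := by
    have hnum : C_ρ*M_h + 2*(s*C_r*C_h) ≤ (C_ρ+1)*(2*s*C_r*C_h + M_h) := by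
      nlinarith [mul_nonneg (mul_nonneg (mul_nonneg hs.le hCr.le) hC) hCρ, hMh0]
    have hβeq : β = (C_ρ*M_h + 2*(s*C_r*C_h))/(2*(T:ℝ)) := by
      rw [hβdef]
      field_simp
    rw [hβeq, div_le_div_iff₀ (by positivity) (by positivity)]
    have := mul_le_mul_of_nonneg_right hnum (by positivity : (0:ℝ) ≤ 2*(T:ℝ))
    linarith
  exact my_final C_h sbar β mn (T:ℝ) ((C_ρ+1)*(2*s*C_r*C_h + M_h)) hC hsbar0 hmn0 hT' hβ0
    hKnum0 hsbar_le hβK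
end

section
/- Let Z be a real-valued random variable and let r_s : ℝ → ℝ be continuous, nondecreasing, globally Lipschitz with r_s(z) → 0 as z → −∞ and r_s(z) → 1 as z → ∞. Define F_Z^{(s)}(t) := 1 − E[r_s(Z − t)]. Then F_Z^{(s)} is a cumulative distribution function (nondecreasing with lim_{t→−∞} F_Z^{(s)}(t) = 0 and lim_{t→+∞} F_Z^{(s)}(t) = 1) and is Lipschitz continuous on ℝ with Lipschitz constant at most Lip(r_s). -/
open MeasureTheory Set Filter

/-- For a relaxation function `r` (continuous, nondecreasing, globally
Lipschitz with limits `0` at `−∞` and `1` at `+∞`), the relaxed CDF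
`F_Z^{(s)}(t) = 1 − E[r(Z − t)]` is a CDF (nondecreasing, with limits `0` at `−∞` and `1`
at `+∞`) which is Lipschitz with constant at most `Lip(r)`. -/
theorem stmt_8 {Ω : Type*} [MeasurableSpace Ω] (P : MeasureTheory.Measure Ω)
    [MeasureTheory.IsProbabilityMeasure P]
    (Z : Ω → ℝ) (hZ : Measurable Z)
    (r : ℝ → ℝ) (K : NNReal) (hrcont : Continuous r) (hrmono : Monotone r)
    (hrLip : LipschitzWith K r)
    (hbot : Filter.Tendsto r Filter.atBot (nhds 0))
    (htop : Filter.Tendsto r Filter.atTop (nhds 1)) :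
    Monotone (fun t : ℝ => 1 - ∫ ω, r (Z ω - t) ∂P)
    ∧ Filter.Tendsto (fun t : ℝ => 1 - ∫ ω, r (Z ω - t) ∂P) Filter.atBot (nhds 0)
    ∧ Filter.Tendsto (fun t : ℝ => 1 - ∫ ω, r (Z ω - t) ∂P) Filter.atTop (nhds 1)
    ∧ LipschitzWith K (fun t : ℝ => 1 - ∫ ω, r (Z ω - t) ∂P) := by
  -- bounds on r
  have h0 : ∀ x : ℝ, 0 ≤ r x := fun x =>
    le_of_tendsto hbot (eventually_atBot.2 ⟨x, fun y hy => hrmono hy⟩)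
  have h1 : ∀ x : ℝ, r x ≤ 1 := fun x =>
    ge_of_tendsto htop (eventually_atTop.2 ⟨x, fun y hy => hrmono hy⟩)
  have hmeas : ∀ t : ℝ, AEStronglyMeasurable (fun ω => r (Z ω - t)) P := fun t =>
    (hrcont.measurable.comp (hZ.sub measurable_const)).aestronglyMeasurable
  have hint : ∀ t : ℝ, Integrable (fun ω => r (Z ω - t)) P := fun t => by
    refine (integrable_const (1:ℝ)).mono' (hmeas t) ?_
    exact Filter.Eventually.of_forall fun ω => by
      rw [Real.norm_eq_abs, abs_of_nonneg (h0 _)]; exact h1 _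
  -- monotone
  have hmono : Monotone (fun t : ℝ => 1 - ∫ ω, r (Z ω - t) ∂P) := by
    intro s t hst
    simp only
    gcongr
    exacts [hint t, hint s, fun ω => hrmono (by linarith)]
  refine ⟨hmono, ?_, ?_, ?_⟩
  · -- atBot : integral → 1
    have : Tendsto (fun t : ℝ => ∫ ω, r (Z ω - t) ∂P) atBot (nhds (∫ _ω, (1:ℝ) ∂P)) := by
      refine tendsto_integral_filter_of_dominated_convergence (fun _ => (1:ℝ))
        (Filter.Eventually.of_forall hmeas) ?_ (integrable_const 1) ?_
      · exact Filter.Eventually.of_forall fun t => Filter.Eventually.of_forall fun ω => by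
          rw [Real.norm_eq_abs, abs_of_nonneg (h0 _)]; exact h1 _
      · refine Filter.Eventually.of_forall fun ω => htop.comp ?_
        exact tendsto_atTop_add_const_left _ _ tendsto_neg_atBot_atTop |>.congr
          (fun t => by ring_nf)
    simp only [integral_const, measure_univ, ENNReal.toReal_one, smul_eq_mul, one_mul] at this
    have := (tendsto_const_nhds (x := (1:ℝ)) (f := atBot)).sub this
    simpa using this
  · -- atTop : integral → 0
    have : Tendsto (fun t : ℝ => ∫ ω, r (Z ω - t) ∂P) atTop (nhds (∫ _ω, (0:ℝ) ∂P)) := by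
      refine tendsto_integral_filter_of_dominated_convergence (fun _ => (1:ℝ))
        (Filter.Eventually.of_forall hmeas) ?_ (integrable_const 1) ?_
      · exact Filter.Eventually.of_forall fun t => Filter.Eventually.of_forall fun ω => by
          rw [Real.norm_eq_abs, abs_of_nonneg (h0 _)]; exact h1 _
      · refine Filter.Eventually.of_forall fun ω => hbot.comp ?_
        exact tendsto_atBot_add_const_left _ _ tendsto_neg_atTop_atBot |>.congr
          (fun t => by ring_nf)
    simp only [integral_zero] at this
    have := (tendsto_const_nhds (x := (1:ℝ)) (f := atTop)).sub this
    simpa using this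
  · -- Lipschitz
    refine LipschitzWith.of_dist_le_mul fun s t => ?_
    simp only [Real.dist_eq, sub_sub_sub_cancel_left]
    rw [← integral_sub (hint t) (hint s)]
    calc |∫ ω, (r (Z ω - t) - r (Z ω - s)) ∂P|
        ≤ ∫ ω, |r (Z ω - t) - r (Z ω - s)| ∂P := by
          simpa [Real.norm_eq_abs] using norm_integral_le_integral_norm (fun ω => r (Z ω - t) - r (Z ω - s)) (μ := P)
      _ ≤ ∫ _ω, (K : ℝ) * |s - t| ∂P := by
          refine integral_mono ((hint t).sub (hint s)).abs (integrable_const _) fun ω => ?_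
          have := hrLip.dist_le_mul (Z ω - t) (Z ω - s)
          simp only [Real.dist_eq] at this
          calc |r (Z ω - t) - r (Z ω - s)| ≤ K * |Z ω - t - (Z ω - s)| := this
            _ = K * |s - t| := by ring_nf
      _ = K * |s - t| := by simp
end

section
/- Let Z be a real-valued random variable with CDF F_Z, and let {r_s}_{s>0} be a family of continuous, nondecreasing, globally Lipschitz functions ℝ → ℝ with r_s(z) → 0 as z → −∞ and r_s(z) → 1 as z → ∞ for each s. Suppose lim_{s→∞} r_s(z) = H(z) = 1_{z>0} for all z ∈ ℝ \ {0}, while lim_{s→∞} r_s(0) = r0 > 0. Then the relaxed CDFs F_Z^{(s)}(t) := 1 − E[r_s(Z − t)] satisfy lim_{s→∞} F_Z^{(s)}(t) = F_Z(t) − r0 · P(Z = t) for every t ∈ ℝ; consequently lim_{s→∞} F_Z^{(s)}(t) = F_Z(t) holds at a point t if and only if t is a point of continuity of F_Z. -/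
open MeasureTheory Set Filter

/-- If the relaxation family `r_s` converges pointwise (as `s → ∞`) to
`H(z) = 1_{z>0}` at every `z ≠ 0`, while `r_s(0) → r0 > 0`, then the relaxed CDFs
`F_Z^{(s)}(t) = 1 − E[r_s(Z − t)]` converge to `F_Z(t) − r0 · P(Z = t)` at every `t`;
consequently they converge to `F_Z(t)` at `t` iff `t` is a continuity point of `F_Z`. -/
theorem stmt_10 {Ω : Type*} [MeasurableSpace Ω] (P : MeasureTheory.Measure Ω)
    [MeasureTheory.IsProbabilityMeasure P]
    (Z : Ω → ℝ) (hZ : Measurable Z)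
    (r : ℝ → ℝ → ℝ)
    (hrcont : ∀ s > (0 : ℝ), Continuous (r s))
    (hrmono : ∀ s > (0 : ℝ), Monotone (r s))
    (hrLip : ∀ s > (0 : ℝ), ∃ K : NNReal, LipschitzWith K (r s))
    (hbot : ∀ s > (0 : ℝ), Filter.Tendsto (r s) Filter.atBot (nhds 0))
    (htop : ∀ s > (0 : ℝ), Filter.Tendsto (r s) Filter.atTop (nhds 1))
    (hH : ∀ z : ℝ, z ≠ 0 → Filter.Tendsto (fun s => r s z) Filter.atTop
      (nhds (if 0 < z then (1 : ℝ) else 0)))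
    (r0 : ℝ) (hr0pos : 0 < r0)
    (hH0 : Filter.Tendsto (fun s => r s 0) Filter.atTop (nhds r0)) :
    (∀ t : ℝ, Filter.Tendsto (fun s => 1 - ∫ ω, r s (Z ω - t) ∂P) Filter.atTop
      (nhds ((P {ω | Z ω ≤ t}).toReal - r0 * (P {ω | Z ω = t}).toReal)))
    ∧ (∀ t : ℝ, (Filter.Tendsto (fun s => 1 - ∫ ω, r s (Z ω - t) ∂P) Filter.atTop
        (nhds ((P {ω | Z ω ≤ t}).toReal))
      ↔ ContinuousAt (fun u : ℝ => (P {ω | Z ω ≤ u}).toReal) t)) := by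
  -- `r s` takes values in `[0,1]`
  have hbound : ∀ s > (0 : ℝ), ∀ z : ℝ, r s z ∈ Set.Icc (0 : ℝ) 1 := by
    intro s hs z
    constructor
    · refine le_of_tendsto (hbot s hs) ?_
      filter_upwards [eventually_le_atBot z] with y hy using hrmono s hs hy
    · refine ge_of_tendsto (htop s hs) ?_
      filter_upwards [eventually_ge_atTop z] with y hy using hrmono s hs hy
  -- main convergence statement
  have key : ∀ t : ℝ, Filter.Tendsto (fun s => 1 - ∫ ω, r s (Z ω - t) ∂P) Filter.atTop
      (nhds ((P {ω | Z ω ≤ t}).toReal - r0 * (P {ω | Z ω = t}).toReal)) := by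
    intro t
    have hA : MeasurableSet {ω | t < Z ω} := measurableSet_lt measurable_const hZ
    have hB : MeasurableSet {ω | Z ω = t} := by
      have : {ω | Z ω = t} = Z ⁻¹' {t} := rfl
      rw [this]; exact hZ (measurableSet_singleton t)
    set g : Ω → ℝ := fun ω =>
      Set.indicator {ω | t < Z ω} (fun _ => (1 : ℝ)) ω
        + Set.indicator {ω | Z ω = t} (fun _ => r0) ω with hg
    have hint : Filter.Tendsto (fun s => ∫ ω, r s (Z ω - t) ∂P) Filter.atTop
        (nhds (∫ ω, g ω ∂P)) := by
      refine tendsto_integral_filter_of_dominated_convergence (fun _ => (1 : ℝ)) ?_ ?_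
        (integrable_const 1) ?_
      · filter_upwards [eventually_gt_atTop (0 : ℝ)] with s hs
        exact ((hrcont s hs).measurable.comp (hZ.sub measurable_const)).aestronglyMeasurable
      · filter_upwards [eventually_gt_atTop (0 : ℝ)] with s hs
        refine ae_of_all _ fun ω => ?_
        have h := hbound s hs (Z ω - t)
        rw [Real.norm_eq_abs, abs_le]
        exact ⟨by linarith [h.1], h.2⟩
      · refine ae_of_all _ fun ω => ?_
        rcases eq_or_ne (Z ω) t with h | h
        · have hz : Z ω - t = 0 := by rw [h]; ring
          have hgω : g ω = r0 := by
            simp [hg, Set.indicator_apply, h]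
          rw [hgω, hz]
          exact hH0
        · have hz : Z ω - t ≠ 0 := sub_ne_zero.mpr h
          have hlim := hH (Z ω - t) hz
          rcases lt_or_gt_of_ne h with hlt | hgt
          · have hgω : g ω = 0 := by
              simp [hg, Set.indicator_apply, h, not_lt.mpr hlt.le]
            rw [if_neg (by push_neg; linarith : ¬ (0:ℝ) < Z ω - t)] at hlim
            rw [hgω]; exact hlim
          · have hgω : g ω = 1 := by
              simp [hg, Set.indicator_apply, h, hgt]
            rw [if_pos (by linarith : (0:ℝ) < Z ω - t)] at hlim
            rw [hgω]; exact hlim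
    have hgint : (∫ ω, g ω ∂P)
        = (P {ω | t < Z ω}).toReal + (P {ω | Z ω = t}).toReal * r0 := by
      rw [hg, integral_add ((integrable_const (1:ℝ)).indicator hA)
        ((integrable_const r0).indicator hB), integral_indicator_const _ hA,
        integral_indicator_const _ hB]
      simp [smul_eq_mul]
      rfl
    have hcompl : (P {ω | t < Z ω}).toReal = 1 - (P {ω | Z ω ≤ t}).toReal := by
      have hset : {ω | t < Z ω} = {ω | Z ω ≤ t}ᶜ := by
        ext ω; simp [not_le]
      rw [hset, measure_compl (measurableSet_le hZ measurable_const) (measure_ne_top P _),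
        measure_univ, ENNReal.toReal_sub_of_le prob_le_one ENNReal.one_ne_top,
        ENNReal.toReal_one]
    have : ((P {ω | Z ω ≤ t}).toReal - r0 * (P {ω | Z ω = t}).toReal)
        = 1 - (∫ ω, g ω ∂P) := by
      rw [hgint, hcompl]; ring
    rw [this]
    exact hint.const_sub 1
  refine ⟨key, fun t => ?_⟩
  -- Continuity of the CDF at `t` iff `P {Z = t} = 0`
  set μ : Measure ℝ := P.map Z with hμdef
  have hμ : IsProbabilityMeasure μ := Measure.isProbabilityMeasure_map hZ.aemeasurable
  have hIic : ∀ u : ℝ, P {ω | Z ω ≤ u} = μ (Set.Iic u) := by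
    intro u
    rw [hμdef, Measure.map_apply hZ measurableSet_Iic]
    rfl
  have hsing : P {ω | Z ω = t} = μ {t} := by
    rw [hμdef, Measure.map_apply hZ (measurableSet_singleton t)]
    rfl
  have hFeq : (fun u : ℝ => (P {ω | Z ω ≤ u}).toReal) = fun u => ProbabilityTheory.cdf μ u := by
    funext u
    rw [hIic u, ProbabilityTheory.cdf_eq_real]
    rfl
  have hcontIff : ContinuousAt (fun u : ℝ => (P {ω | Z ω ≤ u}).toReal) t ↔ μ {t} = 0 := by
    rw [hFeq]
    have hmono : Monotone (ProbabilityTheory.cdf μ) := ProbabilityTheory.monotone_cdf μ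
    have hsingμ : μ {t}
        = ENNReal.ofReal (ProbabilityTheory.cdf μ t
            - Function.leftLim (ProbabilityTheory.cdf μ) t) := by
      conv_lhs => rw [← ProbabilityTheory.measure_cdf (μ := μ)]
      exact (ProbabilityTheory.cdf μ).measure_singleton t
    have hle : Function.leftLim (ProbabilityTheory.cdf μ) t ≤ ProbabilityTheory.cdf μ t :=
      hmono.leftLim_le le_rfl
    rw [hsingμ, ENNReal.ofReal_eq_zero, sub_nonpos]
    constructor
    · intro hcont
      have := hmono.continuousAt_iff_leftLim_eq_rightLim.1 hcont
      rw [this, (ProbabilityTheory.cdf μ).rightLim_eq]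
    · intro hle'
      refine hmono.continuousAt_iff_leftLim_eq_rightLim.2 ?_
      rw [(ProbabilityTheory.cdf μ).rightLim_eq]
      exact le_antisymm hle hle'
  constructor
  · intro h
    have heq := tendsto_nhds_unique h (key t)
    have hz : r0 * (P {ω | Z ω = t}).toReal = 0 := by linarith
    have hz' : (P {ω | Z ω = t}).toReal = 0 := by
      rcases mul_eq_zero.1 hz with h' | h'
      · exact absurd h' (ne_of_gt hr0pos)
      · exact h'
    have : μ {t} = 0 := by
      rw [← hsing]
      exact (ENNReal.toReal_eq_zero_iff _).1 hz' |>.resolve_right (measure_ne_top P _)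
    exact hcontIff.2 this
  · intro hcont
    have hz : P {ω | Z ω = t} = 0 := by rw [hsing]; exact hcontIff.1 hcont
    have := key t
    rw [hz] at this
    simpa using this
end

section
/- Let Z0, Z1 be real-valued random variables with CDFs F_{Z0}, F_{Z1}, let μ be a Borel probability measure on ℝ, and let c : [0,1]² → ℝ be continuous. Let {r_s}_{s>0} be a family of continuous, nondecreasing, globally Lipschitz functions ℝ → ℝ with limits 0 at −∞ and 1 at +∞, such that lim_{s→∞} r_s(z) = H(z) = 1_{z>0} for all z ∈ ℝ. Then, with F_{Z_k}^{(s)}(t) := 1 − E[r_s(Z_k − t)], one has ∫ c(F_{Z0}(t), F_{Z1}(t)) μ(dt) = lim_{s→∞} ∫ c(F_{Z0}^{(s)}(t), F_{Z1}^{(s)}(t)) μ(dt). -/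
open MeasureTheory Set Filter

/-- For continuous cost `c` on `[0,1]²` and a relaxation family `r_s`
converging pointwise to `H(z) = 1_{z>0}` everywhere, the relaxed bias
`∫ c(F_{Z0}^{(s)}(t), F_{Z1}^{(s)}(t)) μ(dt)` converges, as `s → ∞`, to
`∫ c(F_{Z0}(t), F_{Z1}(t)) μ(dt)`. -/
theorem stmt_11 {Ω : Type*} [MeasurableSpace Ω] (P : MeasureTheory.Measure Ω)
    [MeasureTheory.IsProbabilityMeasure P]
    (Z0 Z1 : Ω → ℝ) (hZ0 : Measurable Z0) (hZ1 : Measurable Z1)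
    (μ : MeasureTheory.Measure ℝ) [MeasureTheory.IsProbabilityMeasure μ]
    (c : ℝ → ℝ → ℝ)
    (hc : ContinuousOn (fun p : ℝ × ℝ => c p.1 p.2) (Set.Icc (0 : ℝ) 1 ×ˢ Set.Icc (0 : ℝ) 1))
    (r : ℝ → ℝ → ℝ)
    (hrcont : ∀ s > (0 : ℝ), Continuous (r s))
    (hrmono : ∀ s > (0 : ℝ), Monotone (r s))
    (hrLip : ∀ s > (0 : ℝ), ∃ K : NNReal, LipschitzWith K (r s))
    (hbot : ∀ s > (0 : ℝ), Filter.Tendsto (r s) Filter.atBot (nhds 0))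
    (htop : ∀ s > (0 : ℝ), Filter.Tendsto (r s) Filter.atTop (nhds 1))
    (hH : ∀ z : ℝ, Filter.Tendsto (fun s => r s z) Filter.atTop
      (nhds (if 0 < z then (1 : ℝ) else 0))) :
    Filter.Tendsto
      (fun s => ∫ t, c (1 - ∫ ω, r s (Z0 ω - t) ∂P) (1 - ∫ ω, r s (Z1 ω - t) ∂P) ∂μ)
      Filter.atTop
      (nhds (∫ t, c ((P {ω | Z0 ω ≤ t}).toReal) ((P {ω | Z1 ω ≤ t}).toReal) ∂μ)) := by
  -- r s takes values in [0,1]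
  have hr01 : ∀ s > (0 : ℝ), ∀ x, r s x ∈ Set.Icc (0 : ℝ) 1 := by
    intro s hs x
    constructor
    · have hev : ∀ᶠ y in atBot, r s y ≤ r s x := by
        filter_upwards [eventually_le_atBot x] with y hy using hrmono s hs hy
      exact le_of_tendsto (hbot s hs) hev
    · have hev : ∀ᶠ y in atTop, r s x ≤ r s y := by
        filter_upwards [eventually_ge_atTop x] with y hy using hrmono s hs hy
      exact ge_of_tendsto (htop s hs) hev
  -- integrability in ω
  have hint : ∀ s > (0 : ℝ), ∀ (Z : Ω → ℝ), Measurable Z → ∀ t : ℝ,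
      Integrable (fun ω => r s (Z ω - t)) P := by
    intro s hs Z hZ t
    refine (integrable_const (1 : ℝ)).mono'
      (((hrcont s hs).measurable.comp (hZ.sub measurable_const)).aestronglyMeasurable) ?_
    refine Eventually.of_forall fun ω => ?_
    have h := hr01 s hs (Z ω - t)
    rw [Real.norm_eq_abs, abs_le]
    exact ⟨by linarith [h.1], h.2⟩
  -- inner convergence for each Z, t
  have hinner : ∀ (Z : Ω → ℝ), Measurable Z → ∀ t : ℝ,
      Tendsto (fun s => 1 - ∫ ω, r s (Z ω - t) ∂P) atTop
        (nhds ((P {ω | Z ω ≤ t}).toReal)) := by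
    intro Z hZ t
    have h1 : Tendsto (fun s => ∫ ω, r s (Z ω - t) ∂P) atTop
        (nhds (∫ ω, ({ω | t < Z ω} : Set Ω).indicator (1 : Ω → ℝ) ω ∂P)) := by
      apply tendsto_integral_filter_of_dominated_convergence (fun _ => (1 : ℝ))
      · filter_upwards [eventually_gt_atTop (0 : ℝ)] with s hs
        exact ((hrcont s hs).measurable.comp (hZ.sub measurable_const)).aestronglyMeasurable
      · filter_upwards [eventually_gt_atTop (0 : ℝ)] with s hs
        refine Eventually.of_forall fun ω => ?_
        have h := hr01 s hs (Z ω - t)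
        rw [Real.norm_eq_abs, abs_le]
        exact ⟨by linarith [h.1], h.2⟩
      · exact integrable_const 1
      · refine Eventually.of_forall fun ω => ?_
        simpa [Set.indicator_apply, Pi.one_apply, sub_pos] using hH (Z ω - t)
    have hmeas : MeasurableSet {ω | t < Z ω} := measurableSet_lt measurable_const hZ
    rw [integral_indicator_one hmeas] at h1
    have hle : MeasurableSet {ω | Z ω ≤ t} := measurableSet_le hZ measurable_const
    have hcompl : {ω | t < Z ω} = {ω | Z ω ≤ t}ᶜ := by ext ω; simp [not_le]
    have h2 := measure_add_measure_compl (μ := P) hle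
    rw [measure_univ] at h2
    have h3 : (P {ω | Z ω ≤ t}).toReal + (P {ω | Z ω ≤ t}ᶜ).toReal = 1 := by
      rw [← ENNReal.toReal_add (measure_ne_top _ _) (measure_ne_top _ _), h2]
      simp
    have h4 : (P {ω | Z ω ≤ t}).toReal = 1 - (P {ω | t < Z ω}).toReal := by
      rw [hcompl]; linarith
    rw [h4]
    exact tendsto_const_nhds.sub h1
  -- continuity in t of the relaxed CDF, for each s > 0
  have hFl : ∀ s > (0 : ℝ), ∀ (Z : Ω → ℝ), Measurable Z →
      Continuous (fun t => ∫ ω, r s (Z ω - t) ∂P) := by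
    intro s hs Z hZ
    obtain ⟨K, hK⟩ := hrLip s hs
    have hlip : LipschitzWith K (fun t => ∫ ω, r s (Z ω - t) ∂P) := by
      apply LipschitzWith.of_dist_le_mul
      intro t t'
      rw [Real.dist_eq]
      have heq : (∫ ω, r s (Z ω - t) ∂P) - ∫ ω, r s (Z ω - t') ∂P
          = ∫ ω, (r s (Z ω - t) - r s (Z ω - t')) ∂P :=
        (integral_sub (hint s hs Z hZ t) (hint s hs Z hZ t')).symm
      rw [heq]
      calc |∫ ω, (r s (Z ω - t) - r s (Z ω - t')) ∂P|
          ≤ ((K : ℝ) * dist t t') * (P Set.univ).toReal := by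
            rw [← Real.norm_eq_abs]
            apply norm_integral_le_of_norm_le_const
            refine Eventually.of_forall fun ω => ?_
            rw [Real.norm_eq_abs, ← Real.dist_eq]
            calc dist (r s (Z ω - t)) (r s (Z ω - t'))
                ≤ (K : ℝ) * dist (Z ω - t) (Z ω - t') := hK.dist_le_mul _ _
              _ = (K : ℝ) * dist t t' := by
                  congr 1
                  rw [Real.dist_eq, Real.dist_eq]
                  have h5 : Z ω - t - (Z ω - t') = t' - t := by ring
                  rw [h5, abs_sub_comm]
        _ = (K : ℝ) * dist t t' := by simp
    exact hlip.continuous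
  -- the relaxed CDF values lie in [0,1]
  have hFmem : ∀ s > (0 : ℝ), ∀ (Z : Ω → ℝ), Measurable Z → ∀ t : ℝ,
      (1 - ∫ ω, r s (Z ω - t) ∂P) ∈ Set.Icc (0 : ℝ) 1 := by
    intro s hs Z hZ t
    have h0 : 0 ≤ ∫ ω, r s (Z ω - t) ∂P :=
      integral_nonneg fun ω => (hr01 s hs _).1
    have h1 : (∫ ω, r s (Z ω - t) ∂P) ≤ 1 := by
      calc ∫ ω, r s (Z ω - t) ∂P ≤ ∫ _ω, (1 : ℝ) ∂P :=
            integral_mono (hint s hs Z hZ t) (integrable_const 1) fun ω => (hr01 s hs _).2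
        _ = 1 := by simp
    exact ⟨by linarith, by linarith⟩
  have hPmem : ∀ (Z : Ω → ℝ), ∀ t : ℝ, (P {ω | Z ω ≤ t}).toReal ∈ Set.Icc (0 : ℝ) 1 :=
    fun Z t => ⟨ENNReal.toReal_nonneg, by
      simpa using ENNReal.toReal_mono (by simp) (prob_le_one (μ := P) (s := {ω | Z ω ≤ t}))⟩
  -- bound for c on the compact square
  obtain ⟨M, hM⟩ := (isCompact_Icc.prod isCompact_Icc).exists_bound_of_continuousOn hc
  -- outer dominated convergence
  apply tendsto_integral_filter_of_dominated_convergence (fun _ => M)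
  · filter_upwards [eventually_gt_atTop (0 : ℝ)] with s hs
    have hcont : Continuous (fun t =>
        ((1 - ∫ ω, r s (Z0 ω - t) ∂P, 1 - ∫ ω, r s (Z1 ω - t) ∂P) : ℝ × ℝ)) :=
      (continuous_const.sub (hFl s hs Z0 hZ0)).prodMk (continuous_const.sub (hFl s hs Z1 hZ1))
    exact (hc.comp_continuous hcont fun t =>
      Set.mk_mem_prod (hFmem s hs Z0 hZ0 t) (hFmem s hs Z1 hZ1 t)).aestronglyMeasurable
  · filter_upwards [eventually_gt_atTop (0 : ℝ)] with s hs
    exact Eventually.of_forall fun t =>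
      hM _ (Set.mk_mem_prod (hFmem s hs Z0 hZ0 t) (hFmem s hs Z1 hZ1 t))
  · exact integrable_const M
  · refine Eventually.of_forall fun t => ?_
    have hp : Tendsto (fun s =>
        ((1 - ∫ ω, r s (Z0 ω - t) ∂P, 1 - ∫ ω, r s (Z1 ω - t) ∂P) : ℝ × ℝ)) atTop
        (nhds ((P {ω | Z0 ω ≤ t}).toReal, (P {ω | Z1 ω ≤ t}).toReal)) :=
      (hinner Z0 hZ0 t).prodMk_nhds (hinner Z1 hZ1 t)
    have hmem : (((P {ω | Z0 ω ≤ t}).toReal, (P {ω | Z1 ω ≤ t}).toReal) : ℝ × ℝ)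
        ∈ Set.Icc (0 : ℝ) 1 ×ˢ Set.Icc (0 : ℝ) 1 :=
      Set.mk_mem_prod (hPmem Z0 t) (hPmem Z1 t)
    have hw : Tendsto (fun s =>
        ((1 - ∫ ω, r s (Z0 ω - t) ∂P, 1 - ∫ ω, r s (Z1 ω - t) ∂P) : ℝ × ℝ)) atTop
        (nhdsWithin (((P {ω | Z0 ω ≤ t}).toReal, (P {ω | Z1 ω ≤ t}).toReal) : ℝ × ℝ)
          (Set.Icc (0 : ℝ) 1 ×ˢ Set.Icc (0 : ℝ) 1)) := by
      apply tendsto_nhdsWithin_of_tendsto_nhds_of_eventually_within _ hp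
      filter_upwards [eventually_gt_atTop (0 : ℝ)] with s hs
      exact Set.mk_mem_prod (hFmem s hs Z0 hZ0 t) (hFmem s hs Z1 hZ1 t)
    exact ((hc _ hmem).tendsto.comp hw)
end
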